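/- arXiv:1506.07949 — 6 statements merged into one kernel-verified Lean document; each statement's English description precedes it below -/
import Mathlib

section
/- Let D be a strong balanced bipartite digraph on 2a vertices, where a ≥ 2. Suppose that for every dominating pair of vertices {x, y} of D, either d(x) ≥ 2a−1 and d(y) ≥ a+1, or d(y) ≥ 2a−1 and d(x) ≥ a+1. Then D contains a hamiltonian cycle. -/
/-- The degree of a vertex `x` in the digraph with arc relation `A`:
number of out-neighbours plus number of in-neighbours. -/
noncomputable def deg {V : Type*} (A : V → V → Prop) (x : V) : ℕ :=
  Nat.card {y : V // A x y} + Nat.card {y : V // A y x}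

/-- A digraph is strong if for every ordered pair of vertices there is a directed path. -/
def IsStrong {V : Type*} (A : V → V → Prop) : Prop :=
  ∀ x y : V, Relation.ReflTransGen A x y

/-- `{x, y}` is a dominating pair: `x ≠ y` and some vertex `z` is dominated by both. -/
def DominatingPair {V : Type*} (A : V → V → Prop) (x y : V) : Prop :=
  x ≠ y ∧ ∃ z, A x z ∧ A y z

/-- `{x, y}` is a dominated pair: `x ≠ y` and some vertex `z` dominates both. -/
def DominatedPair {V : Type*} (A : V → V → Prop) (x y : V) : Prop :=
  x ≠ y ∧ ∃ z, A z x ∧ A z y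

/-- `V1`, `V2` form a bipartition of the digraph `A`: every vertex lies in exactly
one of them and both are independent sets. -/
def IsBipartition {V : Type*} (A : V → V → Prop) (V1 V2 : Finset V) : Prop :=
  (∀ v : V, v ∈ V1 ∨ v ∈ V2) ∧ Disjoint V1 V2 ∧
  (∀ x ∈ V1, ∀ y ∈ V1, ¬ A x y) ∧ (∀ x ∈ V2, ∀ y ∈ V2, ¬ A x y)

/-- A digraph is hamiltonian iff there is a permutation `σ` of the vertices with an arc
from each vertex to its successor, and all vertices lie on one cycle of `σ`. -/
def IsHamiltonian {V : Type*} (A : V → V → Prop) : Prop :=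
  ∃ σ : Equiv.Perm V, (∀ v, A v (σ v)) ∧ ∀ v w : V, σ.SameCycle v w

/-- A digraph has a cycle factor iff there is a permutation `σ` of the vertices with an arc
from each vertex to its successor (the cycles of `σ` are then vertex-disjoint directed
cycles covering all vertices; there are no loops in a bipartite digraph, so no fixed points). -/
def HasCycleFactor {V : Type*} (A : V → V → Prop) : Prop :=
  ∃ σ : Equiv.Perm V, ∀ v, A v (σ v)

/-- A perfect matching from `S` to `T`: a choice, for each vertex of `S`, of an arc
to a vertex of `T`, no two arcs sharing a head. -/
def IsPerfectMatchingFromTo {V : Type*} (A : V → V → Prop) (S T : Finset V) : Prop :=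
  ∃ f : V → V, Set.InjOn f ↑S ∧ ∀ x ∈ S, f x ∈ T ∧ A x (f x)

/-- Isomorphism of digraphs. -/
def DigraphIso {V W : Type*} (A : V → V → Prop) (B : W → W → Prop) : Prop :=
  ∃ e : V ≃ W, ∀ x y : V, A x y ↔ B (e x) (e y)

/-- The digraph `H1`, with `x1 = 0`, `x2 = 1`, `y1 = 2`, `y2 = 3`.
Arcs: `x1 ↔ y1`, `x2 ↔ y1`, `x2 ↔ y2`. -/
def H1Adj : Fin 4 → Fin 4 → Prop := fun i j =>
  (i, j) ∈ ([(0, 2), (2, 0), (1, 2), (2, 1), (1, 3), (3, 1)] : List (Fin 4 × Fin 4))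

/-- The digraph `H2` (two variants, indexed by `b : Bool`), with `x1 = 0`, `x2 = 1`,
`x3 = 2`, `y1 = 3`, `y2 = 4`, `y3 = 5`. Arcs: the 2-cycles `x1 ↔ y1`, `x2 ↔ y1`,
`x3 ↔ y2`, `x3 ↔ y3`, the arcs `y2 → x1`, `y2 → x2`, `y3 → x1`, `y3 → x2`, `y1 → x3`,
and (iff `b = true`) the arc `x3 → y1`. -/
def H2Adj (b : Bool) : Fin 6 → Fin 6 → Prop := fun i j =>
  (i, j) ∈ ([(0, 3), (3, 0), (1, 3), (3, 1), (2, 4), (4, 2), (2, 5), (5, 2),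
             (4, 0), (4, 1), (5, 0), (5, 1), (3, 2)] : List (Fin 6 × Fin 6)) ∨
  (b = true ∧ (i, j) = (2, 3))

/-- The digraph `H3`, with `x1 = 0`, `x2 = 1`, `x3 = 2`, `y1 = 3`, `y2 = 4`, `y3 = 5`.
Arcs: the directed 4-cycle `x1 → y1 → x2 → y2 → x1`, and the 2-cycles
`x3 ↔ y1`, `x3 ↔ y2`, `y3 ↔ x1`, `y3 ↔ x2`. -/
def H3Adj : Fin 6 → Fin 6 → Prop := fun i j =>
  (i, j) ∈ ([(0, 3), (3, 1), (1, 4), (4, 0),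
             (2, 3), (3, 2), (2, 4), (4, 2),
             (5, 0), (0, 5), (5, 1), (1, 5)] : List (Fin 6 × Fin 6))

/- ===================== Auxiliary development ===================== -/

open Finset Equiv Relation

open scoped Classical

theorem Equiv.Perm.apply_inv_self {α : Type*} (f : Equiv.Perm α) (x : α) : f (f⁻¹ x) = x :=
  f.apply_symm_apply x

set_option linter.unusedSectionVars false

section Aux

variable {V : Type*} [Fintype V]

/-- Out-degree as a finset card. -/
noncomputable def dOut (A : V → V → Prop) (v : V) : ℕ := (univ.filter (fun w => A v w)).card

/-- In-degree as a finset card. -/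
noncomputable def dIn (A : V → V → Prop) (v : V) : ℕ := (univ.filter (fun w => A w v)).card

/-- Total degree as a finset card. -/
noncomputable def dT (A : V → V → Prop) (v : V) : ℕ := dOut A v + dIn A v

theorem deg_eq_dT (A : V → V → Prop) (v : V) : deg A v = dT A v := by
  have h1 : Nat.card {y : V // A v y} = dOut A v := by
    rw [Nat.card_eq_fintype_card, Fintype.card_subtype]
    rfl
  have h2 : Nat.card {y : V // A y v} = dIn A v := by
    rw [Nat.card_eq_fintype_card, Fintype.card_subtype]
    rfl
  rw [deg, h1, h2, dT]

/-- A vertex is big if its degree is at least `2a-1`. -/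
def BigV (A : V → V → Prop) (a : ℕ) (v : V) : Prop := 2 * a - 1 ≤ dT A v

/-- The bipartite part of the setup, without a cycle factor. -/
structure BSetup (A : V → V → Prop) (X Y : Finset V) (a : ℕ) : Prop where
  ha : 2 ≤ a
  cover : ∀ v, v ∈ X ∨ v ∈ Y
  disj : ∀ v, v ∈ X → v ∈ Y → False
  indX : ∀ {x y}, x ∈ X → y ∈ X → ¬ A x y
  indY : ∀ {x y}, x ∈ Y → y ∈ Y → ¬ A x y
  cardX : X.card = a
  cardY : Y.card = a
  strong : ∀ x y, Relation.ReflTransGen A x y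
  dom : ∀ x y z, x ≠ y → A x z → A y z →
    (2 * a - 1 ≤ dT A x ∧ a + 1 ≤ dT A y) ∨ (2 * a - 1 ≤ dT A y ∧ a + 1 ≤ dT A x)

/-- Setup including a cycle factor with no "bridge" between different cycles. -/
structure Setup (A : V → V → Prop) (X Y : Finset V) (a : ℕ) (σ : Equiv.Perm V)
    extends BSetup A X Y a : Prop where
  arc : ∀ v, A v (σ v)
  nb : ∀ u v, ¬ σ.SameCycle u v → A u (σ v) → A v (σ u) → False

variable {A : V → V → Prop} {X Y : Finset V} {a : ℕ} {σ : Equiv.Perm V}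

namespace BSetup

theorem swap (h : BSetup A X Y a) : BSetup A Y X a :=
  ⟨h.ha, fun v => (h.cover v).symm, fun v hy hx => h.disj v hx hy, h.indY, h.indX,
    h.cardY, h.cardX, h.strong, h.dom⟩

theorem memY_of_arc (h : BSetup A X Y a) {x w : V} (hx : x ∈ X) (hw : A x w) : w ∈ Y := by
  rcases h.cover w with hw' | hw'
  · exact absurd hw (h.indX hx hw')
  · exact hw'

theorem memX_of_arc (h : BSetup A X Y a) {y w : V} (hy : y ∈ Y) (hw : A y w) : w ∈ X := by
  rcases h.cover w with hw' | hw'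
  · exact hw'
  · exact absurd hw (h.indY hy hw')

theorem memY_of_arc' (h : BSetup A X Y a) {x w : V} (hx : x ∈ X) (hw : A w x) : w ∈ Y := by
  rcases h.cover w with hw' | hw'
  · exact absurd hw (h.indX hw' hx)
  · exact hw'

theorem memX_of_arc' (h : BSetup A X Y a) {y w : V} (hy : y ∈ Y) (hw : A w y) : w ∈ X := by
  rcases h.cover w with hw' | hw'
  · exact hw'
  · exact absurd hw (h.indY hw' hy)

theorem not_mem_Y (h : BSetup A X Y a) {x : V} (hx : x ∈ X) : x ∉ Y :=
  fun hy => h.disj x hx hy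

/-- Out-neighbour filter of a vertex of `X` lies in `Y`. -/
theorem dOut_eq (h : BSetup A X Y a) {x : V} (hx : x ∈ X) :
    dOut A x = (Y.filter (fun w => A x w)).card := by
  unfold dOut
  congr 1
  apply Finset.ext
  intro w
  simp only [mem_filter, mem_univ, true_and]
  exact ⟨fun hw => ⟨h.memY_of_arc hx hw, hw⟩, fun hw => hw.2⟩

theorem dIn_eq (h : BSetup A X Y a) {x : V} (hx : x ∈ X) :
    dIn A x = (Y.filter (fun w => A w x)).card := by
  unfold dIn
  congr 1
  apply Finset.ext
  intro w
  simp only [mem_filter, mem_univ, true_and]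
  exact ⟨fun hw => ⟨h.memY_of_arc' hx hw, hw⟩, fun hw => hw.2⟩

theorem dOut_le (h : BSetup A X Y a) {x : V} (hx : x ∈ X) : dOut A x ≤ a := by
  rw [h.dOut_eq hx, ← h.cardY]
  exact card_le_card (filter_subset _ _)

theorem dIn_le (h : BSetup A X Y a) {x : V} (hx : x ∈ X) : dIn A x ≤ a := by
  rw [h.dIn_eq hx, ← h.cardY]
  exact card_le_card (filter_subset _ _)

theorem dT_le (h : BSetup A X Y a) {x : V} (hx : x ∈ X) : dT A x ≤ 2 * a := by
  have := h.dOut_le hx; have := h.dIn_le hx; unfold dT; omega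

/-- dominating pairs: at least one is big. -/
theorem pair_big (h : BSetup A X Y a) {x y z : V} (hxy : x ≠ y) (hx : A x z) (hy : A y z) :
    BigV A a x ∨ BigV A a y := by
  rcases h.dom x y z hxy hx hy with ⟨h1, _⟩ | ⟨h1, _⟩
  · exact Or.inl h1
  · exact Or.inr h1

/-- dominating pairs: both have degree at least `a+1`. -/
theorem pair_min (h : BSetup A X Y a) {x y z : V} (hxy : x ≠ y) (hx : A x z) (hy : A y z) :
    a + 1 ≤ dT A x := by
  rcases h.dom x y z hxy hx hy with ⟨h1, _⟩ | ⟨_, h2⟩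
  · have := h.ha; omega
  · exact h2

/-- There exists another vertex in X. -/
theorem exists_ne (h : BSetup A X Y a) (v : V) : ∃ u, u ≠ v := by
  have h2 : 1 < X.card := by rw [h.cardX]; exact h.ha
  obtain ⟨u, _, hu⟩ := Finset.exists_mem_ne h2 v
  exact ⟨u, hu⟩

theorem exists_out (h : BSetup A X Y a) (v : V) : ∃ w, A v w := by
  obtain ⟨u, hu⟩ := h.exists_ne v
  have := h.strong v u
  rcases this.cases_head with heq | ⟨c, hc, _⟩
  · exact absurd heq.symm hu
  · exact ⟨c, hc⟩

theorem exists_in (h : BSetup A X Y a) (v : V) : ∃ w, A w v := by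
  obtain ⟨u, hu⟩ := h.exists_ne v
  have := h.strong u v
  rcases this.cases_tail with heq | ⟨c, _, hc⟩
  · exact absurd heq hu.symm
  · exact ⟨c, hc⟩

theorem dOut_pos (h : BSetup A X Y a) (v : V) : 1 ≤ dOut A v := by
  obtain ⟨w, hw⟩ := h.exists_out v
  exact Finset.card_pos.mpr ⟨w, by simp [hw]⟩

theorem dIn_pos (h : BSetup A X Y a) (v : V) : 1 ≤ dIn A v := by
  obtain ⟨w, hw⟩ := h.exists_in v
  exact Finset.card_pos.mpr ⟨w, by simp [dIn, hw]⟩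

/-- Big vertices have large out-degree. -/
theorem big_dOut (h : BSetup A X Y a) {x : V} (hx : x ∈ X) (hb : BigV A a x) :
    a - 1 ≤ dOut A x := by
  have := h.dIn_le hx; unfold BigV dT at hb; omega

theorem big_dIn (h : BSetup A X Y a) {x : V} (hx : x ∈ X) (hb : BigV A a x) :
    a - 1 ≤ dIn A x := by
  have := h.dOut_le hx; unfold BigV dT at hb; omega

/-- Number of missing out-arcs plus missing in-arcs of a big vertex is at most 1. -/
theorem big_miss (h : BSetup A X Y a) {x : V} (hx : x ∈ X) (hb : BigV A a x) :
    (Y.filter (fun y => ¬ A x y)).card + (Y.filter (fun y => ¬ A y x)).card ≤ 1 := by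
  have h1 : (Y.filter (fun y => A x y)).card + (Y.filter (fun y => ¬ A x y)).card = a := by
    rw [Finset.card_filter_add_card_filter_not, h.cardY]
  have h2 : (Y.filter (fun y => A y x)).card + (Y.filter (fun y => ¬ A y x)).card = a := by
    rw [Finset.card_filter_add_card_filter_not, h.cardY]
  have h3 := h.dOut_eq hx
  have h4 := h.dIn_eq hx
  unfold BigV dT at hb
  have := h.ha
  omega

/-- A big vertex with a missing out-arc has all other out-arcs. -/
theorem big_all_out (h : BSetup A X Y a) {x y0 : V} (hx : x ∈ X) (hb : BigV A a x)
    (hy0 : y0 ∈ Y) (hmiss : ¬ A x y0) : ∀ y ∈ Y, y ≠ y0 → A x y := by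
  intro y hy hne
  by_contra hny
  have : ({y0, y} : Finset V) ⊆ Y.filter (fun y' => ¬ A x y') := by
    intro t ht
    simp only [Finset.mem_insert, Finset.mem_singleton] at ht
    rcases ht with rfl | rfl <;> simp [hy0, hmiss, hy, hny]
  have hc : 2 ≤ (Y.filter (fun y' => ¬ A x y')).card := by
    have := Finset.card_le_card this
    rwa [Finset.card_insert_of_notMem (by simp [Ne.symm hne]), Finset.card_singleton] at this
  have := h.big_miss hx hb
  omega

/-- A big vertex with a missing out-arc has all in-arcs. -/
theorem big_all_in (h : BSetup A X Y a) {x y0 : V} (hx : x ∈ X) (hb : BigV A a x)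
    (hy0 : y0 ∈ Y) (hmiss : ¬ A x y0) : ∀ y ∈ Y, A y x := by
  intro y hy
  by_contra hny
  have h1 : 1 ≤ (Y.filter (fun y' => ¬ A x y')).card :=
    Finset.card_pos.mpr ⟨y0, by simp [hy0, hmiss]⟩
  have h2 : 1 ≤ (Y.filter (fun y' => ¬ A y' x)).card :=
    Finset.card_pos.mpr ⟨y, by simp [hy, hny]⟩
  have := h.big_miss hx hb
  omega

/-- A big vertex with a missing in-arc has all out-arcs. -/
theorem big_all_out' (h : BSetup A X Y a) {x y0 : V} (hx : x ∈ X) (hb : BigV A a x)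
    (hy0 : y0 ∈ Y) (hmiss : ¬ A y0 x) : ∀ y ∈ Y, A x y := by
  intro y hy
  by_contra hny
  have h1 : 1 ≤ (Y.filter (fun y' => ¬ A x y')).card :=
    Finset.card_pos.mpr ⟨y, by simp [hy, hny]⟩
  have h2 : 1 ≤ (Y.filter (fun y' => ¬ A y' x)).card :=
    Finset.card_pos.mpr ⟨y0, by simp [hy0, hmiss]⟩
  have := h.big_miss hx hb
  omega

/-- At most one non-big in-neighbour. -/
theorem nonbig_in (h : BSetup A X Y a) (v : V) :
    (univ.filter (fun u => A u v ∧ ¬ BigV A a u)).card ≤ 1 := by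
  by_contra hc
  push_neg at hc
  obtain ⟨u1, hu1, u2, hu2, hne⟩ := Finset.one_lt_card.mp hc
  simp only [mem_filter, mem_univ, true_and] at hu1 hu2
  rcases h.pair_big hne hu1.1 hu2.1 with hb | hb
  · exact hu1.2 hb
  · exact hu2.2 hb

theorem dIn_le_one_add_big (h : BSetup A X Y a) (v : V) :
    dIn A v ≤ 1 + (univ.filter (fun u => A u v ∧ BigV A a u)).card := by
  have hsplit : (univ.filter (fun u => A u v)).card ≤
      (univ.filter (fun u => A u v ∧ BigV A a u)).card +
      (univ.filter (fun u => A u v ∧ ¬ BigV A a u)).card := by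
    rw [← Finset.card_union_of_disjoint]
    · apply Finset.card_le_card
      intro u hu
      simp only [mem_filter, mem_union, mem_univ, true_and] at *
      by_cases hbu : BigV A a u
      · exact Or.inl ⟨hu, hbu⟩
      · exact Or.inr ⟨hu, hbu⟩
    · rw [Finset.disjoint_filter]
      intro u _ h1 h2
      exact h2.2 h1.2
  have := h.nonbig_in v
  unfold dIn
  omega

end BSetup

theorem dIn_split (A : V → V → Prop) (a : ℕ) (v : V) :
    dIn A v = (univ.filter (fun u => A u v ∧ BigV A a u)).card
      + (univ.filter (fun u => A u v ∧ ¬ BigV A a u)).card := by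
  unfold dIn
  rw [← Finset.card_union_of_disjoint]
  · congr 1
    apply Finset.ext
    intro u
    simp only [mem_union, mem_filter, mem_univ, true_and]
    constructor
    · intro hu
      by_cases hbu : BigV A a u
      · exact Or.inl ⟨hu, hbu⟩
      · exact Or.inr ⟨hu, hbu⟩
    · rintro (⟨hu, _⟩ | ⟨hu, _⟩) <;> exact hu
  · rw [Finset.disjoint_filter]
    intro u _ h1' h2'
    exact h2'.2 h1'.2

/-- Crossing lemma: a path from inside `S` to outside `S` uses an arc leaving `S`. -/
theorem crossing {A : V → V → Prop} (S : Finset V) {p q : V}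
    (hpq : Relation.ReflTransGen A p q) (hp : p ∈ S) (hq : q ∉ S) :
    ∃ p' q', p' ∈ S ∧ q' ∉ S ∧ A p' q' := by
  induction hpq with
  | refl => exact absurd hp hq
  | tail hab hbc ih =>
    rename_i b c
    by_cases hb : b ∈ S
    · exact ⟨b, c, hb, hq, hbc⟩
    · exact ih hb

theorem sc_nat {σ : Equiv.Perm V} {x y : V} (h : σ.SameCycle x y) : ∃ i : ℕ, (σ ^ i) x = y := by
  obtain ⟨i, _, hi⟩ := h.exists_pow_eq'
  exact ⟨i, hi⟩

theorem sc_of_pow {σ : Equiv.Perm V} {x : V} (i : ℕ) : σ.SameCycle x ((σ ^ i) x) :=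
  ⟨(i : ℤ), by rw [zpow_natCast]⟩

namespace Setup

variable {A : V → V → Prop} {X Y : Finset V} {a : ℕ} {σ : Equiv.Perm V}

theorem swap (h : Setup A X Y a σ) : Setup A Y X a σ :=
  ⟨h.toBSetup.swap, h.arc, h.nb⟩

theorem sigma_mem (h : Setup A X Y a σ) {x : V} (hx : x ∈ X) : σ x ∈ Y :=
  h.memY_of_arc hx (h.arc x)

theorem sigma_mem' (h : Setup A X Y a σ) {y : V} (hy : y ∈ Y) : σ y ∈ X :=
  h.toBSetup.swap.memY_of_arc hy (h.arc y)

theorem sigma_inv_mem (h : Setup A X Y a σ) {x : V} (hx : x ∈ X) : σ⁻¹ x ∈ Y := by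
  rcases h.cover (σ⁻¹ x) with hw | hw
  · have := h.sigma_mem hw
    rw [Equiv.Perm.apply_inv_self] at this
    exact absurd hx (fun hx' => h.disj x hx' this)
  · exact hw

theorem sigma_inv_mem' (h : Setup A X Y a σ) {y : V} (hy : y ∈ Y) : σ⁻¹ y ∈ X :=
  h.swap.sigma_inv_mem hy

theorem arc_inv (h : Setup A X Y a σ) (v : V) : A (σ⁻¹ v) v := by
  have := h.arc (σ⁻¹ v)
  rwa [Equiv.Perm.apply_inv_self] at this

/-- Balance: outside any cycle, there are as many X vertices as Y vertices. -/
theorem balance (h : Setup A X Y a σ) (z : V) :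
    (X.filter (fun x => ¬ σ.SameCycle z x)).card = (Y.filter (fun y => ¬ σ.SameCycle z y)).card := by
  apply Finset.card_bij (fun x _ => σ x)
  · intro x hx
    simp only [mem_filter] at hx ⊢
    exact ⟨h.sigma_mem hx.1, fun hc => hx.2 ((Equiv.Perm.sameCycle_apply_right).mp hc)⟩
  · intro x1 hx1 x2 hx2 heq
    exact σ.injective heq
  · intro y hy
    simp only [mem_filter] at hy
    refine ⟨σ⁻¹ y, ?_, by simp⟩
    simp only [mem_filter]
    refine ⟨h.sigma_inv_mem' hy.1, fun hc => hy.2 ?_⟩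
    have := (Equiv.Perm.sameCycle_apply_right (f := σ) (x := z) (y := σ⁻¹ y)).mpr hc
    rwa [Equiv.Perm.apply_inv_self] at this

theorem balance' (h : Setup A X Y a σ) (z : V) :
    (X.filter (fun x => σ.SameCycle z x)).card = (Y.filter (fun y => σ.SameCycle z y)).card := by
  have h1 : (X.filter (fun x => σ.SameCycle z x)).card
      + (X.filter (fun x => ¬ σ.SameCycle z x)).card = a := by
    rw [Finset.card_filter_add_card_filter_not, h.cardX]
  have h2 : (Y.filter (fun y => σ.SameCycle z y)).card
      + (Y.filter (fun y => ¬ σ.SameCycle z y)).card = a := by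
    rw [Finset.card_filter_add_card_filter_not, h.cardY]
  have := h.balance z
  omega

/-- The key consequence of no-bridge for a big vertex `z ∈ X`:
in-arcs to `σ z` from X outside the cycle of `z`, plus out-arcs of `σ⁻¹ z`
to X outside the cycle of `z`, total at most 1. -/
theorem G1 (h : Setup A X Y a σ) {z : V} (hz : z ∈ X) (hb : BigV A a z) :
    (X.filter (fun w => ¬ σ.SameCycle z w ∧ A w (σ z))).card
    + (X.filter (fun w => ¬ σ.SameCycle z w ∧ A (σ⁻¹ z) w)).card ≤ 1 := by
  set W := X.filter (fun w => ¬ σ.SameCycle z w) with hW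
  set U := Y.filter (fun y => ¬ σ.SameCycle z y) with hU
  have hr : W.card = U.card := h.balance z
  -- c1 : arcs z → σw and w → σz, for w ∈ W, can't coexist
  have c1 : (W.filter (fun w => A z (σ w))).card + (W.filter (fun w => A w (σ z))).card
      ≤ W.card := by
    rw [← Finset.card_union_of_disjoint]
    · apply Finset.card_le_card
      intro w hw
      simp only [mem_union, mem_filter] at hw ⊢
      rcases hw with ⟨h1, _⟩ | ⟨h1, _⟩ <;> exact h1
    · rw [Finset.disjoint_filter]
      intro w hw h1 h2
      simp only [hW, mem_filter] at hw
      exact h.nb z w hw.2 h1 h2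
  -- c2
  have c2 : (U.filter (fun u => A u z)).card + (U.filter (fun u => A (σ⁻¹ z) (σ u))).card
      ≤ U.card := by
    rw [← Finset.card_union_of_disjoint]
    · apply Finset.card_le_card
      intro u hu
      simp only [mem_union, mem_filter] at hu ⊢
      rcases hu with ⟨h1, _⟩ | ⟨h1, _⟩ <;> exact h1
    · rw [Finset.disjoint_filter]
      intro u hu h1 h2
      simp only [hU, mem_filter] at hu
      have hnc : ¬ σ.SameCycle u (σ⁻¹ z) := by
        intro hc
        apply hu.2
        have := (Equiv.Perm.sameCycle_apply_right (f := σ)).mpr hc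
        rw [Equiv.Perm.apply_inv_self] at this
        exact this.symm
      have h1' : A u (σ (σ⁻¹ z)) := by rwa [Equiv.Perm.apply_inv_self]
      exact h.nb u (σ⁻¹ z) hnc h1' h2
  -- c3 : bijection between {w ∈ W | A z (σ w)} and {u ∈ U | A z u}
  have c3 : (W.filter (fun w => A z (σ w))).card = (U.filter (fun u => A z u)).card := by
    apply Finset.card_bij (fun w _ => σ w)
    · intro w hw
      simp only [hW, hU, mem_filter] at hw ⊢
      obtain ⟨⟨hw1, hw2⟩, hw3⟩ := hw
      exact ⟨⟨h.sigma_mem hw1, fun hc => hw2 ((Equiv.Perm.sameCycle_apply_right).mp hc)⟩, hw3⟩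
    · intro x1 _ x2 _ heq
      exact σ.injective heq
    · intro u hu
      simp only [hW, hU, mem_filter] at hu ⊢
      obtain ⟨⟨hu1, hu2⟩, hu3⟩ := hu
      refine ⟨σ⁻¹ u, ⟨⟨h.sigma_inv_mem' hu1, fun hc => hu2 ?_⟩, ?_⟩, by simp⟩
      · have := (Equiv.Perm.sameCycle_apply_right (f := σ)).mpr hc
        rwa [Equiv.Perm.apply_inv_self] at this
      · rw [Equiv.Perm.apply_inv_self]; exact hu3
  -- c5 : bijection for out-arcs of σ⁻¹ z
  have c5 : (W.filter (fun w => A (σ⁻¹ z) w)).card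
      = (U.filter (fun u => A (σ⁻¹ z) (σ u))).card := by
    apply Finset.card_bij (fun u _ => σ⁻¹ u)
    · intro w hw
      simp only [hW, hU, mem_filter] at hw ⊢
      obtain ⟨⟨hw1, hw2⟩, hw3⟩ := hw
      refine ⟨⟨h.sigma_inv_mem hw1, fun hc => hw2 ?_⟩, by rwa [Equiv.Perm.apply_inv_self]⟩
      have := (Equiv.Perm.sameCycle_apply_right (f := σ)).mpr hc
      rwa [Equiv.Perm.apply_inv_self] at this
    · intro x1 _ x2 _ heq
      exact σ.symm.injective heq
    · intro u hu
      simp only [hW, hU, mem_filter] at hu ⊢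
      obtain ⟨⟨hu1, hu2⟩, hu3⟩ := hu
      exact ⟨σ u, ⟨⟨h.sigma_mem' hu1,
        fun hc => hu2 ((Equiv.Perm.sameCycle_apply_right).mp hc)⟩, hu3⟩, by simp⟩
  -- c4 : z has at least 2r-1 arcs with U
  have c4 : 2 * U.card ≤ (U.filter (fun u => A z u)).card + (U.filter (fun u => A u z)).card
      + 1 := by
    have h1 : (U.filter (fun u => A z u)).card + (U.filter (fun u => ¬ A z u)).card = U.card := by
      rw [Finset.card_filter_add_card_filter_not]
    have h2 : (U.filter (fun u => A u z)).card + (U.filter (fun u => ¬ A u z)).card = U.card := by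
      rw [Finset.card_filter_add_card_filter_not]
    have h3 : (U.filter (fun u => ¬ A z u)).card ≤ (Y.filter (fun y => ¬ A z y)).card := by
      apply Finset.card_le_card
      intro u hu
      simp only [hU, mem_filter] at hu ⊢
      exact ⟨hu.1.1, hu.2⟩
    have h4 : (U.filter (fun u => ¬ A u z)).card ≤ (Y.filter (fun y => ¬ A y z)).card := by
      apply Finset.card_le_card
      intro u hu
      simp only [hU, mem_filter] at hu ⊢
      exact ⟨hu.1.1, hu.2⟩
    have h5 := h.big_miss hz hb
    omega
  have goal1 : (X.filter (fun w => ¬ σ.SameCycle z w ∧ A w (σ z))).card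
      = (W.filter (fun w => A w (σ z))).card := by
    rw [hW, filter_filter]
  have goal2 : (X.filter (fun w => ¬ σ.SameCycle z w ∧ A (σ⁻¹ z) w)).card
      = (W.filter (fun w => A (σ⁻¹ z) w)).card := by
    rw [hW, filter_filter]
  omega

theorem sc_next (h : Setup A X Y a σ) (z : V) : σ.SameCycle z (σ z) :=
  ⟨1, by simp⟩

theorem sc_prev (h : Setup A X Y a σ) (z : V) : σ.SameCycle z (σ⁻¹ z) :=
  ⟨-1, by simp⟩

theorem orbit_two (h : Setup A X Y a σ) {z : V} (h2 : σ (σ z) = z) :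
    ∀ i : ℕ, (σ ^ i) z = z ∨ (σ ^ i) z = σ z := by
  intro i
  induction i with
  | zero => simp
  | succ n ih =>
    rw [pow_succ', Equiv.Perm.mul_apply]
    rcases ih with he | he
    · rw [he]; exact Or.inr rfl
    · rw [he, h2]; exact Or.inl rfl

/-- If `z` lies on a 2-cycle of `σ`, the only X-vertex of its cycle is `z`. -/
theorem two_cycle_CX (h : Setup A X Y a σ) {z : V} (hz : z ∈ X) (h2 : σ (σ z) = z) :
    X.filter (fun x => σ.SameCycle z x) = {z} := by
  apply Finset.eq_singleton_iff_unique_mem.mpr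
  constructor
  · simp only [mem_filter]
    exact ⟨hz, Equiv.Perm.SameCycle.refl σ z⟩
  · intro x hx
    simp only [mem_filter] at hx
    obtain ⟨i, hi⟩ := sc_nat hx.2
    rcases h.orbit_two h2 i with he | he
    · rw [hi] at he; exact he
    · rw [hi] at he
      exfalso
      exact h.disj x (hx.1) (he ▸ h.sigma_mem hz)

/-- `S1`: a big vertex on a 2-cycle, with `a ≥ 3`, is impossible. -/
theorem s1 (h : Setup A X Y a σ) (ha3 : 3 ≤ a) {z : V} (hz : z ∈ X) (hb : BigV A a z)
    (h2 : σ (σ z) = z) : False := by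
  have hinv : σ⁻¹ z = σ z := by
    apply σ.injective
    rw [Equiv.Perm.apply_inv_self, h2]
  have hG1 := h.G1 hz hb
  rw [hinv] at hG1
  have hszY : σ z ∈ Y := h.sigma_mem hz
  -- in-degree of σ z
  have hdIn : dIn A (σ z) ≤ 1 + (X.filter (fun w => ¬ σ.SameCycle z w ∧ A w (σ z))).card := by
    rw [h.toBSetup.swap.dIn_eq hszY]
    have hsub : X.filter (fun w => A w (σ z)) ⊆
        insert z (X.filter (fun w => ¬ σ.SameCycle z w ∧ A w (σ z))) := by
      intro x hx
      simp only [mem_filter] at hx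
      by_cases hsc : σ.SameCycle z x
      · have : x ∈ X.filter (fun x => σ.SameCycle z x) := by
          simp only [mem_filter]; exact ⟨hx.1, hsc⟩
        rw [h.two_cycle_CX hz h2] at this
        simp only [Finset.mem_singleton] at this
        simp [this]
      · simp only [Finset.mem_insert, mem_filter]
        exact Or.inr ⟨hx.1, hsc, hx.2⟩
    calc (X.filter (fun w => A w (σ z))).card ≤ _ := Finset.card_le_card hsub
    _ ≤ 1 + _ := by rw [Nat.add_comm]; exact Finset.card_insert_le _ _
  have hdOut : dOut A (σ z) ≤ 1 + (X.filter (fun w => ¬ σ.SameCycle z w ∧ A (σ z) w)).card := by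
    rw [h.toBSetup.swap.dOut_eq hszY]
    have hsub : X.filter (fun w => A (σ z) w) ⊆
        insert z (X.filter (fun w => ¬ σ.SameCycle z w ∧ A (σ z) w)) := by
      intro x hx
      simp only [mem_filter] at hx
      by_cases hsc : σ.SameCycle z x
      · have : x ∈ X.filter (fun x => σ.SameCycle z x) := by
          simp only [mem_filter]; exact ⟨hx.1, hsc⟩
        rw [h.two_cycle_CX hz h2] at this
        simp only [Finset.mem_singleton] at this
        simp [this]
      · simp only [Finset.mem_insert, mem_filter]
        exact Or.inr ⟨hx.1, hsc, hx.2⟩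
    calc (X.filter (fun w => A (σ z) w)).card ≤ _ := Finset.card_le_card hsub
    _ ≤ 1 + _ := by rw [Nat.add_comm]; exact Finset.card_insert_le _ _
  -- z has an in-neighbour other than σ z
  have hbin : a - 1 ≤ dIn A z := h.big_dIn hz hb
  have h1lt : 1 < (univ.filter (fun w => A w z)).card := by
    unfold dIn at hbin; omega
  obtain ⟨y', hy', hy'ne⟩ := Finset.exists_mem_ne h1lt (σ z)
  simp only [mem_filter, mem_univ, true_and] at hy'
  have hAz : A (σ z) z := by
    have := h.arc (σ z); rwa [h2] at this
  have hmin := h.pair_min (Ne.symm hy'ne) hAz hy'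
  unfold dT at hmin
  omega

/-- Existence of a big vertex when there are at least two cycles. -/
theorem exists_big (h : Setup A X Y a σ) {v w : V} (hvw : ¬ σ.SameCycle v w) :
    ∃ z, BigV A a z := by
  obtain ⟨p, q, hp, hq, hpq⟩ := crossing (univ.filter (fun u => σ.SameCycle v u))
    (h.strong v w) (by simp [Equiv.Perm.SameCycle.refl]) (by simp [hvw])
  simp only [mem_filter, mem_univ, true_and] at hp hq
  have hnc : ¬ σ.SameCycle p q := fun hc => hq (hp.trans hc)
  have hne : p ≠ σ⁻¹ q := by
    intro he
    apply hnc
    rw [he]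
    exact (h.sc_prev q).symm
  rcases h.pair_big hne hpq (h.arc_inv q) with hbig | hbig
  · exact ⟨p, hbig⟩
  · exact ⟨σ⁻¹ q, hbig⟩

/-- Two big X-vertices in different cycles, asymmetric version. -/
theorem two_bigX' (h : Setup A X Y a σ) (ha3 : 3 ≤ a) {z w : V} (hz : z ∈ X) (hw : w ∈ X)
    (hbz : BigV A a z) (hbw : BigV A a w) (hzw : ¬ σ.SameCycle z w) (hmiss : ¬ A w (σ z)) :
    False := by
  have hzwne : z ≠ w := fun he => hzw (he ▸ Equiv.Perm.SameCycle.refl σ z)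
  have hs2 : σ (σ z) ≠ z := fun he => h.s1 ha3 hz hbz he
  have ht2 : σ (σ w) ≠ w := fun he => h.s1 ha3 hw hbw he
  have hszY : σ z ∈ Y := h.sigma_mem hz
  have hswY : σ w ∈ Y := h.sigma_mem hw
  -- w has all in-arcs, and all out-arcs except σ z
  have hallin : ∀ y ∈ Y, A y w := h.big_all_in hw hbw hszY hmiss
  have hallout : ∀ y ∈ Y, y ≠ σ z → A w y := h.big_all_out hw hbw hszY hmiss
  -- cycle X-sets
  set CzX := X.filter (fun x => σ.SameCycle z x) with hCzX
  set CwX := X.filter (fun x => σ.SameCycle w x) with hCwX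
  have hscz2 : σ.SameCycle z (σ (σ z)) := (h.sc_next z).trans (h.sc_next (σ z))
  have hscw2 : σ.SameCycle w (σ (σ w)) := (h.sc_next w).trans (h.sc_next (σ w))
  have hz2X : σ (σ z) ∈ X := h.sigma_mem' hszY
  have hw2X : σ (σ w) ∈ X := h.sigma_mem' hswY
  have hs : 2 ≤ CzX.card := by
    have hsub : ({z, σ (σ z)} : Finset V) ⊆ CzX := by
      intro x hx
      simp only [Finset.mem_insert, Finset.mem_singleton] at hx
      rcases hx with rfl | rfl
      · simp only [hCzX, mem_filter]; exact ⟨hz, Equiv.Perm.SameCycle.refl σ x⟩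
      · simp only [hCzX, mem_filter]; exact ⟨hz2X, hscz2⟩
    have := Finset.card_le_card hsub
    rwa [Finset.card_insert_of_notMem (by simp [Ne.symm hs2]), Finset.card_singleton] at this
  have ht : 2 ≤ CwX.card := by
    have hsub : ({w, σ (σ w)} : Finset V) ⊆ CwX := by
      intro x hx
      simp only [Finset.mem_insert, Finset.mem_singleton] at hx
      rcases hx with rfl | rfl
      · simp only [hCwX, mem_filter]; exact ⟨hw, Equiv.Perm.SameCycle.refl σ x⟩
      · simp only [hCwX, mem_filter]; exact ⟨hw2X, hscw2⟩
    have := Finset.card_le_card hsub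
    rwa [Finset.card_insert_of_notMem (by simp [Ne.symm ht2]), Finset.card_singleton] at this
  have hdisjC : Disjoint CzX CwX := by
    rw [Finset.disjoint_left]
    intro x hx hx'
    simp only [hCzX, hCwX, mem_filter] at hx hx'
    exact hzw (hx.2.trans hx'.2.symm)
  have hst : CzX.card + CwX.card ≤ a := by
    rw [← Finset.card_union_of_disjoint hdisjC, ← h.cardX]
    exact Finset.card_le_card (Finset.union_subset (filter_subset _ _) (filter_subset _ _))
  -- σ⁻¹ w is not big
  have hwmY : σ⁻¹ w ∈ Y := h.sigma_inv_mem hw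
  have hwmnb : ¬ BigV A a (σ⁻¹ w) := by
    intro hbwm
    have hsub : X.filter (fun x => A (σ⁻¹ w) x) ⊆ CwX := by
      intro x hx
      simp only [mem_filter] at hx
      simp only [hCwX, mem_filter]
      refine ⟨hx.1, ?_⟩
      by_contra hnot
      have huY : σ⁻¹ x ∈ Y := h.sigma_inv_mem hx.1
      have hnc : ¬ σ.SameCycle (σ⁻¹ x) (σ⁻¹ w) := by
        intro hc
        exact hnot (((h.sc_prev w).trans (hc.symm.trans (h.sc_prev x).symm)).symm).symm
      have h1 : A (σ⁻¹ x) (σ (σ⁻¹ w)) := by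
        rw [Equiv.Perm.apply_inv_self]
        exact hallin _ huY
      have h2 : A (σ⁻¹ w) (σ (σ⁻¹ x)) := by
        rw [Equiv.Perm.apply_inv_self]
        exact hx.2
      exact h.nb (σ⁻¹ x) (σ⁻¹ w) hnc h1 h2
    have hd : dOut A (σ⁻¹ w) ≤ CwX.card := by
      rw [h.toBSetup.swap.dOut_eq hwmY]
      exact Finset.card_le_card hsub
    have := h.toBSetup.swap.big_dOut hwmY hbwm
    omega
  -- every Y-vertex except σ⁻¹ w is big
  have hallbig : ∀ y ∈ Y, y ≠ σ⁻¹ w → BigV A a y := by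
    intro y hy hne
    rcases h.pair_big hne (hallin y hy) (h.arc_inv w) with hb | hb
    · exact hb
    · exact absurd hb hwmnb
  -- σ z is big
  have hzsne : σ z ≠ σ⁻¹ w := by
    intro he
    exact hzw ((h.sc_next z).trans (he ▸ (h.sc_prev w).symm))
  have hbsz : BigV A a (σ z) := hallbig _ hszY hzsne
  -- in-degree of σ z is at most s + 1
  have hG1 := h.G1 hz hbz
  have hdInsz : dIn A (σ z) ≤ CzX.card + 1 := by
    rw [h.toBSetup.swap.dIn_eq hszY]
    have hsub : X.filter (fun x => A x (σ z)) ⊆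
        CzX ∪ X.filter (fun x => ¬ σ.SameCycle z x ∧ A x (σ z)) := by
      intro x hx
      simp only [mem_filter] at hx
      simp only [Finset.mem_union, hCzX, mem_filter]
      by_cases hsc : σ.SameCycle z x
      · exact Or.inl ⟨hx.1, hsc⟩
      · exact Or.inr ⟨hx.1, hsc, hx.2⟩
    calc (X.filter (fun x => A x (σ z))).card
        ≤ _ := Finset.card_le_card hsub
      _ ≤ CzX.card + (X.filter (fun x => ¬ σ.SameCycle z x ∧ A x (σ z))).card :=
          Finset.card_union_le _ _
      _ ≤ CzX.card + 1 := by omega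
  -- σ z sends arcs to all of X
  have hs_le : CzX.card ≤ a - 2 := by omega
  have hdOutsz : a ≤ dOut A (σ z) := by
    have h1 : 2 * a - 1 ≤ dT A (σ z) := hbsz
    have h2 : dT A (σ z) = dOut A (σ z) + dIn A (σ z) := rfl
    omega
  have hszall : ∀ x ∈ X, A (σ z) x := by
    have hle : dOut A (σ z) ≤ a := h.toBSetup.swap.dOut_le hszY
    have : (X.filter (fun x => A (σ z) x)).card = X.card := by
      rw [h.cardX]
      have := h.toBSetup.swap.dOut_eq hszY
      omega
    have heq := Finset.eq_of_subset_of_card_le (filter_subset _ X) (le_of_eq this.symm)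
    intro x hx
    rw [← heq] at hx
    exact (mem_filter.mp hx).2
  -- σ w is big
  have hswne : σ w ≠ σ⁻¹ w := by
    intro he
    apply ht2
    rw [he, Equiv.Perm.apply_inv_self]
  have hbsw : BigV A a (σ w) := hallbig _ hswY hswne
  -- in-degree of σ w at most t + 1
  have hdInsw : dIn A (σ w) ≤ CwX.card + 1 := by
    rw [h.toBSetup.swap.dIn_eq hswY]
    have hsub : X.filter (fun x => A x (σ w)) ⊆ insert z CwX := by
      intro x hx
      simp only [mem_filter] at hx
      simp only [Finset.mem_insert, hCwX, mem_filter]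
      by_cases hxz : x = z
      · exact Or.inl hxz
      · refine Or.inr ⟨hx.1, ?_⟩
        by_contra hnot
        have hnc : ¬ σ.SameCycle x w := fun hc => hnot hc.symm
        have h2 : A w (σ x) := by
          apply hallout _ (h.sigma_mem hx.1)
          intro he
          exact hxz (σ.injective he)
        exact h.nb x w hnc hx.2 h2
    calc (X.filter (fun x => A x (σ w))).card
        ≤ _ := Finset.card_le_card hsub
      _ ≤ CwX.card + 1 := Finset.card_insert_le z CwX
  -- hence a = 4 and σ w sends arcs to all of X
  have ha4 : a = 4 := by
    have h1 : 2 * a - 1 ≤ dT A (σ w) := hbsw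
    have h2 : dT A (σ w) = dOut A (σ w) + dIn A (σ w) := rfl
    have h3 : dOut A (σ w) ≤ a := h.toBSetup.swap.dOut_le hswY
    have h5 : 2 * a - 1 ≤ dT A (σ z) := hbsz
    have h6 : dT A (σ z) = dOut A (σ z) + dIn A (σ z) := rfl
    have h7 : dOut A (σ z) ≤ a := h.toBSetup.swap.dOut_le hszY
    omega
  have hswall : ∀ x ∈ X, A (σ w) x := by
    have h1 : 2 * a - 1 ≤ dT A (σ w) := hbsw
    have h2 : dT A (σ w) = dOut A (σ w) + dIn A (σ w) := rfl
    have hle : dOut A (σ w) ≤ a := h.toBSetup.swap.dOut_le hswY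
    have h4 : CwX.card ≤ a - CzX.card := by omega
    have : (X.filter (fun x => A (σ w) x)).card = X.card := by
      rw [h.cardX]
      have := h.toBSetup.swap.dOut_eq hswY
      omega
    have heq := Finset.eq_of_subset_of_card_le (filter_subset _ X) (le_of_eq this.symm)
    intro x hx
    rw [← heq] at hx
    exact (mem_filter.mp hx).2
  -- final bridge between σ w and σ z
  have hnc : ¬ σ.SameCycle (σ w) (σ z) := by
    intro hc
    exact hzw ((h.sc_next z).trans (hc.symm.trans (h.sc_next w).symm))
  exact h.nb (σ w) (σ z) hnc (hswall _ hz2X) (hszall _ hw2X)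

/-- Two big X-vertices are always on the same cycle. -/
theorem two_bigX (h : Setup A X Y a σ) (ha3 : 3 ≤ a) {z w : V} (hz : z ∈ X) (hw : w ∈ X)
    (hbz : BigV A a z) (hbw : BigV A a w) (hzw : ¬ σ.SameCycle z w) : False := by
  by_cases hmiss : A w (σ z)
  · have hmiss' : ¬ A z (σ w) := fun hc => h.nb z w hzw hc hmiss
    exact h.two_bigX' ha3 hw hz hbw hbz (fun hc => hzw hc.symm) hmiss'
  · exact h.two_bigX' ha3 hz hw hbz hbw hzw hmiss

/-- A big X-vertex and a big Y-vertex are always on the same cycle. -/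
theorem two_bigXY (h : Setup A X Y a σ) (ha3 : 3 ≤ a) {z y : V} (hz : z ∈ X) (hy : y ∈ Y)
    (hbz : BigV A a z) (hby : BigV A a y) (hzy : ¬ σ.SameCycle z y) : False := by
  have bigsX_in : ∀ x ∈ X, BigV A a x → σ.SameCycle z x := by
    intro x hx hbx
    by_contra hnot
    exact h.two_bigX ha3 hz hx hbz hbx hnot
  have bigsY_in : ∀ u ∈ Y, BigV A a u → σ.SameCycle y u := by
    intro u hu hbu
    by_contra hnot
    exact h.swap.two_bigX ha3 hy hu hby hbu hnot
  set CzX := X.filter (fun x => σ.SameCycle z x) with hCzX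
  set CyY := Y.filter (fun u => σ.SameCycle y u) with hCyY
  set CyX := X.filter (fun x => σ.SameCycle y x) with hCyX
  have hbalY : CyX.card = CyY.card := h.balance' y
  -- s ≥ 2
  have hs2 : σ (σ z) ≠ z := fun he => h.s1 ha3 hz hbz he
  have ht2 : σ (σ y) ≠ y := fun he => h.swap.s1 ha3 hy hby he
  have hz2X : σ (σ z) ∈ X := h.sigma_mem' (h.sigma_mem hz)
  have hy2Y : σ (σ y) ∈ Y := h.sigma_mem (h.sigma_mem' hy)
  have hscz2 : σ.SameCycle z (σ (σ z)) := (h.sc_next z).trans (h.sc_next (σ z))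
  have hscy2 : σ.SameCycle y (σ (σ y)) := (h.sc_next y).trans (h.sc_next (σ y))
  have hs : 2 ≤ CzX.card := by
    have hsub : ({z, σ (σ z)} : Finset V) ⊆ CzX := by
      intro x hx
      simp only [Finset.mem_insert, Finset.mem_singleton] at hx
      rcases hx with rfl | rfl
      · simp only [hCzX, mem_filter]; exact ⟨hz, Equiv.Perm.SameCycle.refl σ x⟩
      · simp only [hCzX, mem_filter]; exact ⟨hz2X, hscz2⟩
    have := Finset.card_le_card hsub
    rwa [Finset.card_insert_of_notMem (by simp [Ne.symm hs2]), Finset.card_singleton] at this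
  have ht : 2 ≤ CyY.card := by
    have hsub : ({y, σ (σ y)} : Finset V) ⊆ CyY := by
      intro x hx
      simp only [Finset.mem_insert, Finset.mem_singleton] at hx
      rcases hx with rfl | rfl
      · simp only [hCyY, mem_filter]; exact ⟨hy, Equiv.Perm.SameCycle.refl σ x⟩
      · simp only [hCyY, mem_filter]; exact ⟨hy2Y, hscy2⟩
    have := Finset.card_le_card hsub
    rwa [Finset.card_insert_of_notMem (by simp [Ne.symm ht2]), Finset.card_singleton] at this
  have hdisjC : Disjoint CzX CyX := by
    rw [Finset.disjoint_left]
    intro x hx hx'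
    simp only [hCzX, hCyX, mem_filter] at hx hx'
    exact hzy (hx.2.trans hx'.2.symm)
  have hst : CzX.card + CyX.card ≤ a := by
    rw [← Finset.card_union_of_disjoint hdisjC, ← h.cardX]
    exact Finset.card_le_card (Finset.union_subset (filter_subset _ _) (filter_subset _ _))
  -- in-degree bound for any vertex of X via big Y-vertices
  have hdInX : ∀ x ∈ X, dIn A x ≤ 1 + CyY.card := by
    intro x hxX0
    have h1 := h.dIn_le_one_add_big x
    have h2 : (univ.filter (fun u => A u x ∧ BigV A a u)).card ≤ CyY.card := by
      apply Finset.card_le_card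
      intro u hu
      simp only [mem_filter, mem_univ, true_and] at hu
      rcases h.cover u with huX | huY
      · exact absurd hu.1 (h.indX huX hxX0)
      · simp only [hCyY, mem_filter]
        exact ⟨huY, bigsY_in u huY hu.2⟩
    omega
  have hdInY : ∀ u ∈ Y, dIn A u ≤ 1 + CzX.card := by
    intro u huY0
    have h1 := h.dIn_le_one_add_big u
    have h2 : (univ.filter (fun x => A x u ∧ BigV A a x)).card ≤ CzX.card := by
      apply Finset.card_le_card
      intro x hx
      simp only [mem_filter, mem_univ, true_and] at hx
      rcases h.cover x with hxX | hxY
      · simp only [hCzX, mem_filter]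
        exact ⟨hxX, bigsX_in x hxX hx.2⟩
      · exact absurd hx.1 (h.indY hxY huY0)
    omega
  -- numeric consequences
  have hdz : a - 1 ≤ dIn A z := h.big_dIn hz hbz
  have hdy : a - 1 ≤ dIn A y := h.swap.big_dIn hy hby
  have ha4 : a = 4 ∧ CzX.card = 2 ∧ CyY.card = 2 := by
    have h1 := hdInX z hz
    have h2 := hdInY y hy
    omega
  obtain ⟨ha4, hsCard, htCard⟩ := ha4
  -- every big X-vertex has all out-arcs
  have bigXall : ∀ x ∈ X, BigV A a x → ∀ y' ∈ Y, A x y' := by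
    intro x hx hbx
    have h1 := hdInX x hx
    have h2 : 2 * a - 1 ≤ dOut A x + dIn A x := hbx
    have h3 : dOut A x ≤ a := h.dOut_le hx
    have : (Y.filter (fun y' => A x y')).card = Y.card := by
      rw [h.cardY]
      have := h.dOut_eq hx
      omega
    have heq := Finset.eq_of_subset_of_card_le (filter_subset _ Y) (le_of_eq this.symm)
    intro y' hy'
    rw [← heq] at hy'
    exact (mem_filter.mp hy').2
  have bigYall : ∀ u ∈ Y, BigV A a u → ∀ x ∈ X, A u x := by
    intro u hu hbu
    have h1 := hdInY u hu
    have h2 : 2 * a - 1 ≤ dOut A u + dIn A u := hbu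
    have h3 : dOut A u ≤ a := h.swap.dOut_le hu
    have : (X.filter (fun x => A u x)).card = X.card := by
      rw [h.cardX]
      have := h.swap.dOut_eq hu
      omega
    have heq := Finset.eq_of_subset_of_card_le (filter_subset _ X) (le_of_eq this.symm)
    intro x hx
    rw [← heq] at hx
    exact (mem_filter.mp hx).2
  -- every vertex of CyY is big
  have hCyYbig : ∀ u ∈ CyY, BigV A a u := by
    have hsub : univ.filter (fun u => A u z ∧ BigV A a u) ⊆ CyY := by
      intro u hu
      simp only [mem_filter, mem_univ, true_and] at hu
      rcases h.cover u with huX | huY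
      · exact absurd hu.1 (h.indX huX hz)
      · simp only [hCyY, mem_filter]
        exact ⟨huY, bigsY_in u huY hu.2⟩
    have hcard : CyY.card ≤ (univ.filter (fun u => A u z ∧ BigV A a u)).card := by
      have h1 := h.dIn_le_one_add_big z
      have h2 := h.nonbig_in z
      have h3 : dIn A z = (univ.filter (fun u => A u z ∧ BigV A a u)).card
          + (univ.filter (fun u => A u z ∧ ¬ BigV A a u)).card := by
        unfold dIn
        rw [← Finset.card_union_of_disjoint]
        · congr 1
          apply Finset.ext
          intro u
          simp only [mem_union, mem_filter, mem_univ, true_and]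
          constructor
          · intro hu
            by_cases hbu : BigV A a u
            · exact Or.inl ⟨hu, hbu⟩
            · exact Or.inr ⟨hu, hbu⟩
          · rintro (⟨hu, _⟩ | ⟨hu, _⟩) <;> exact hu
        · rw [Finset.disjoint_filter]
          intro u _ h1' h2'
          exact h2'.2 h1'.2
      omega
    have heq := Finset.eq_of_subset_of_card_le hsub hcard
    intro u hu
    rw [← heq] at hu
    exact (mem_filter.mp hu).2.2
  -- X is covered by the two cycles
  have hXcover : ∀ x ∈ X, σ.SameCycle z x ∨ σ.SameCycle y x := by
    intro x hx
    by_contra hnot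
    push_neg at hnot
    have hsub : insert x (CzX ∪ CyX) ⊆ X := by
      intro x' hx'
      rcases Finset.mem_insert.mp hx' with rfl | hx''
      · exact hx
      · rcases Finset.mem_union.mp hx'' with h1 | h1
        · exact (mem_filter.mp h1).1
        · exact (mem_filter.mp h1).1
    have hnotmem : x ∉ CzX ∪ CyX := by
      simp only [Finset.mem_union, hCzX, hCyX, mem_filter]
      push_neg
      exact ⟨fun _ => hnot.1, fun _ => hnot.2⟩
    have hcard := Finset.card_le_card hsub
    rw [Finset.card_insert_of_notMem hnotmem, Finset.card_union_of_disjoint hdisjC, h.cardX]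
      at hcard
    omega
  -- σ z is in a dominating pair, so has degree ≥ a+1
  have hszY : σ z ∈ Y := h.sigma_mem hz
  have hszy : σ z ≠ y := by
    intro he
    exact hzy (he ▸ h.sc_next z)
  have hdTsz : a + 1 ≤ dT A (σ z) := by
    apply h.swap.pair_min hszy (h.arc (σ z)) (bigYall y hy hby _ hz2X)
  -- out-degree of σ z at most 2
  have hdOutsz : dOut A (σ z) ≤ CzX.card := by
    rw [h.swap.dOut_eq hszY]
    apply Finset.card_le_card
    intro x hx
    simp only [mem_filter] at hx
    simp only [hCzX, mem_filter]
    refine ⟨hx.1, ?_⟩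
    by_contra hnot
    have hyx : σ.SameCycle y x := by
      rcases hXcover x hx.1 with h1 | h1
      · exact absurd h1 hnot
      · exact h1
    have huY : σ⁻¹ x ∈ Y := h.sigma_inv_mem hx.1
    have hscyu : σ.SameCycle y (σ⁻¹ x) := by
      have := (Equiv.Perm.sameCycle_apply_right (f := σ) (x := y) (y := σ⁻¹ x))
      rw [Equiv.Perm.apply_inv_self] at this
      exact this.mp hyx
    have hbu : BigV A a (σ⁻¹ x) := hCyYbig _ (by simp only [hCyY, mem_filter]; exact ⟨huY, hscyu⟩)
    have hnc : ¬ σ.SameCycle (σ z) (σ⁻¹ x) := by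
      intro hc
      exact hzy ((h.sc_next z).trans (hc.trans hscyu.symm))
    have h1 : A (σ z) (σ (σ⁻¹ x)) := by rw [Equiv.Perm.apply_inv_self]; exact hx.2
    have h2 : A (σ⁻¹ x) (σ (σ z)) := bigYall _ huY hbu _ hz2X
    exact h.nb (σ z) (σ⁻¹ x) hnc h1 h2
  -- in-degree of σ z at most 2
  have hdInsz : dIn A (σ z) ≤ CzX.card := by
    rw [h.toBSetup.swap.dIn_eq hszY]
    apply Finset.card_le_card
    intro x hx
    simp only [mem_filter] at hx
    simp only [hCzX, mem_filter]
    refine ⟨hx.1, ?_⟩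
    by_contra hnot
    have h1 : A z (σ x) := bigXall z hz hbz _ (h.sigma_mem hx.1)
    exact h.nb z x hnot h1 hx.2
  have : dT A (σ z) = dOut A (σ z) + dIn A (σ z) := rfl
  omega

/-- The final `r = 1` configuration: single 2-cycle `{w, σ w}` outside the main cycle,
with an exit arc `w → v` into the main cycle. -/
theorem IVcore (h : Setup A X Y a σ) (ha3 : 3 ≤ a) {z w v : V} (hz : z ∈ X) 
    (allbigsX : ∀ x ∈ X, BigV A a x → σ.SameCycle z x)
    (allbigsY : ∀ u ∈ Y, BigV A a u → σ.SameCycle z u)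
    (hwX : w ∈ X) (hwnc : ¬ σ.SameCycle z w)
    (hWone : X.filter (fun x => ¬ σ.SameCycle z x) = {w})
    (hvY : v ∈ Y) (hvC : σ.SameCycle z v) (harc : A w v) : False := by
  set y := σ w with hy
  have hyY : y ∈ Y := h.sigma_mem hwX
  have hync : ¬ σ.SameCycle z y := fun hc => hwnc ((Equiv.Perm.sameCycle_apply_right).mp hc)
  have hUcard : (Y.filter (fun u => ¬ σ.SameCycle z u)).card = 1 := by
    rw [← h.balance z, hWone, Finset.card_singleton]
  have hUone : Y.filter (fun u => ¬ σ.SameCycle z u) = {y} := by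
    obtain ⟨u0, hu0⟩ := Finset.card_eq_one.mp hUcard
    have hmem : y ∈ Y.filter (fun u => ¬ σ.SameCycle z u) := by
      simp only [mem_filter]; exact ⟨hyY, hync⟩
    rw [hu0] at hmem
    rw [hu0, Finset.mem_singleton.mp hmem]
  have hUmem : ∀ u ∈ Y, u ≠ y → σ.SameCycle z u := by
    intro u hu hne
    by_contra hnot
    have : u ∈ Y.filter (fun u => ¬ σ.SameCycle z u) := by simp only [mem_filter]; exact ⟨hu, hnot⟩
    rw [hUone] at this
    exact hne (Finset.mem_singleton.mp this)
  have hWmem : ∀ x ∈ X, x ≠ w → σ.SameCycle z x := by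
    intro x hx hne
    by_contra hnot
    have : x ∈ X.filter (fun x => ¬ σ.SameCycle z x) := by simp only [mem_filter]; exact ⟨hx, hnot⟩
    rw [hWone] at this
    exact hne (Finset.mem_singleton.mp this)
  have hsyw : σ y = w := by
    have h1 : σ y ∈ X := h.sigma_mem' hyY
    have h2 : ¬ σ.SameCycle z (σ y) := fun hc => hync ((Equiv.Perm.sameCycle_apply_right).mp hc)
    have : σ y ∈ X.filter (fun x => ¬ σ.SameCycle z x) := by
      simp only [mem_filter]; exact ⟨h1, h2⟩
    rw [hWone] at this
    exact Finset.mem_singleton.mp this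
  have hwnb : ¬ BigV A a w := fun hb => hwnc (allbigsX w hwX hb)
  have hynb : ¬ BigV A a y := fun hb => hync (allbigsY y hyY hb)
  -- b := σ⁻¹ v is big
  set b := σ⁻¹ v with hb
  have hbX : b ∈ X := h.sigma_inv_mem' hvY
  have hsb : σ b = v := by rw [hb, Equiv.Perm.apply_inv_self]
  have hscb : σ.SameCycle z b := hvC.trans (h.sc_prev v)
  have hwb : w ≠ b := fun he => hwnc (he ▸ hscb)
  have hBb : BigV A a b := by
    rcases h.pair_big hwb harc (h.arc_inv v) with h1 | h1
    · exact absurd h1 hwnb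
    · exact h1
  have hdw : a + 1 ≤ dT A w := h.pair_min hwb harc (h.arc_inv v)
  -- b misses the out-arc to y, hence has all in-arcs and all other out-arcs
  have hnAby : ¬ A b y := by
    intro hAby
    have hnc : ¬ σ.SameCycle w b := fun hc => hwnc (hscb.trans hc.symm)
    exact h.nb w b hnc (hsb ▸ harc) hAby
  have hballin : ∀ u ∈ Y, A u b := h.big_all_in hbX hBb hyY hnAby
  have hballout : ∀ u ∈ Y, u ≠ y → A b u := h.big_all_out hbX hBb hyY hnAby
  -- y is in a dominating pair
  have hbmY : σ⁻¹ b ∈ Y := h.sigma_inv_mem hbX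
  have hscbm : σ.SameCycle z (σ⁻¹ b) := hscb.trans (h.sc_prev b)
  have hybm : y ≠ σ⁻¹ b := fun he => hync (he ▸ hscbm)
  have hdy : a + 1 ≤ dT A y := h.swap.pair_min hybm (hballin y hyY) (h.arc_inv b)
  have hBbm : BigV A a (σ⁻¹ b) := by
    rcases h.swap.pair_big hybm (hballin y hyY) (h.arc_inv b) with h1 | h1
    · exact absurd h1 hynb
    · exact h1
  -- σ⁻¹ b misses the out-arc to w, hence has all in-arcs
  have hnAbmw : ¬ A (σ⁻¹ b) w := by
    intro hA
    have hnc : ¬ σ.SameCycle (σ⁻¹ b) y := fun hc => hync (hscbm.trans hc)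
    have h1 : A (σ⁻¹ b) (σ y) := by rw [hsyw]; exact hA
    have h2 : A y (σ (σ⁻¹ b)) := by rw [Equiv.Perm.apply_inv_self]; exact hballin y hyY
    exact h.nb (σ⁻¹ b) y hnc h1 h2
  have hbmallin : ∀ x ∈ X, A x (σ⁻¹ b) := h.swap.big_all_in hbmY hBbm hwX hnAbmw
  -- all vertices of the main cycle are big
  have hCYbig : ∀ u ∈ Y, u ≠ y → BigV A a u := by
    intro u hu hne
    rcases h.pair_big hne (hballin u hu) (hballin y hyY) with h1 | h1
    · exact h1
    · exact absurd h1 hynb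
  have hCXbig : ∀ x ∈ X, x ≠ w → BigV A a x := by
    intro x hx hne
    rcases h.pair_big hne (hbmallin x hx) (hbmallin w hwX) with h1 | h1
    · exact h1
    · exact absurd h1 hwnb
  -- the partition sets
  set P := X.filter (fun x => σ.SameCycle z x ∧ A x y) with hP
  set Q' := X.filter (fun x => σ.SameCycle z x ∧ A w (σ x)) with hQ'
  set P' := Y.filter (fun u => σ.SameCycle z u ∧ A u w) with hP'
  set Q := Y.filter (fun u => σ.SameCycle z u ∧ A y (σ u)) with hQ
  have hdisjPQ' : Disjoint P Q' := by
    rw [Finset.disjoint_left]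
    intro x hx hx'
    simp only [hP, hQ', mem_filter] at hx hx'
    have hnc : ¬ σ.SameCycle x w := fun hc => hwnc (hx.2.1.trans hc)
    exact h.nb x w hnc hx.2.2 hx'.2.2
  have hdisjP'Q : Disjoint P' Q := by
    rw [Finset.disjoint_left]
    intro u hu hu'
    simp only [hP', hQ, mem_filter] at hu hu'
    have hnc : ¬ σ.SameCycle u y := fun hc => hync (hu.2.1.trans hc)
    refine h.nb u y hnc ?_ hu'.2.2
    rw [hsyw]
    exact hu.2.2
  have hsX : (X.filter (fun x => σ.SameCycle z x)).card = a - 1 := by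
    have h1 : (X.filter (fun x => σ.SameCycle z x)).card
        + (X.filter (fun x => ¬ σ.SameCycle z x)).card = a := by
      rw [Finset.card_filter_add_card_filter_not, h.cardX]
    rw [hWone, Finset.card_singleton] at h1
    omega
  have hsY : (Y.filter (fun u => σ.SameCycle z u)).card = a - 1 := by
    rw [← h.balance' z]; exact hsX
  have hPQ'le : P.card + Q'.card ≤ a - 1 := by
    rw [← Finset.card_union_of_disjoint hdisjPQ', ← hsX]
    apply Finset.card_le_card
    intro x hx
    rcases Finset.mem_union.mp hx with h1 | h1 <;>
    · simp only [hP, hQ', mem_filter] at h1 ⊢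
      exact ⟨h1.1, h1.2.1⟩
  have hP'Qle : P'.card + Q.card ≤ a - 1 := by
    rw [← Finset.card_union_of_disjoint hdisjP'Q, ← hsY]
    apply Finset.card_le_card
    intro u hu
    rcases Finset.mem_union.mp hu with h1 | h1 <;>
    · simp only [hP', hQ, mem_filter] at h1 ⊢
      exact ⟨h1.1, h1.2.1⟩
  -- degree bounds for w and y
  have hdInw : dIn A w ≤ 1 + P'.card := by
    rw [h.toBSetup.dIn_eq hwX]
    have hsub : Y.filter (fun u => A u w) ⊆ insert y P' := by
      intro u hu
      simp only [mem_filter] at hu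
      by_cases hne : u = y
      · simp [hne]
      · simp only [Finset.mem_insert, hP', mem_filter]
        exact Or.inr ⟨hu.1, hUmem u hu.1 hne, hu.2⟩
    calc (Y.filter (fun u => A u w)).card ≤ _ := Finset.card_le_card hsub
      _ ≤ 1 + P'.card := by rw [Nat.add_comm]; exact Finset.card_insert_le y P'
  have hdOutw : dOut A w ≤ 1 + Q'.card := by
    rw [h.dOut_eq hwX]
    have hsub : Y.filter (fun u => A w u) ⊆ insert y (Q'.image σ) := by
      intro u hu
      simp only [mem_filter] at hu
      by_cases hne : u = y
      · simp [hne]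
      · simp only [Finset.mem_insert, Finset.mem_image, hQ', mem_filter]
        refine Or.inr ⟨σ⁻¹ u, ⟨h.sigma_inv_mem' hu.1,
          (hUmem u hu.1 hne).trans (h.sc_prev u), ?_⟩, by simp⟩
        rw [Equiv.Perm.apply_inv_self]
        exact hu.2
    calc (Y.filter (fun u => A w u)).card ≤ _ := Finset.card_le_card hsub
      _ ≤ 1 + (Q'.image σ).card := by rw [Nat.add_comm]; exact Finset.card_insert_le _ _
      _ ≤ 1 + Q'.card := by
          have := Finset.card_image_le (s := Q') (f := σ)
          omega
  have hdIny : dIn A y ≤ 1 + P.card := by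
    rw [h.toBSetup.swap.dIn_eq hyY]
    have hsub : X.filter (fun x => A x y) ⊆ insert w P := by
      intro x hx
      simp only [mem_filter] at hx
      by_cases hne : x = w
      · simp [hne]
      · simp only [Finset.mem_insert, hP, mem_filter]
        exact Or.inr ⟨hx.1, hWmem x hx.1 hne, hx.2⟩
    calc (X.filter (fun x => A x y)).card ≤ _ := Finset.card_le_card hsub
      _ ≤ 1 + P.card := by rw [Nat.add_comm]; exact Finset.card_insert_le w P
  have hdOuty : dOut A y ≤ 1 + Q.card := by
    rw [h.toBSetup.swap.dOut_eq hyY]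
    have hsub : X.filter (fun x => A y x) ⊆ insert w (Q.image σ) := by
      intro x hx
      simp only [mem_filter] at hx
      by_cases hne : x = w
      · simp [hne]
      · simp only [Finset.mem_insert, Finset.mem_image, hQ, mem_filter]
        refine Or.inr ⟨σ⁻¹ x, ⟨h.sigma_inv_mem hx.1,
          (hWmem x hx.1 hne).trans (h.sc_prev x), ?_⟩, by simp⟩
        rw [Equiv.Perm.apply_inv_self]
        exact hx.2
    calc (X.filter (fun x => A y x)).card ≤ _ := Finset.card_le_card hsub
      _ ≤ 1 + (Q.image σ).card := by rw [Nat.add_comm]; exact Finset.card_insert_le _ _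
      _ ≤ 1 + Q.card := by
          have := Finset.card_image_le (s := Q) (f := σ)
          omega
  -- tight counting
  have hdTw : dT A w = dOut A w + dIn A w := rfl
  have hdTy : dT A y = dOut A y + dIn A y := rfl
  have hcards : P.card + Q'.card = a - 1 ∧ P'.card + Q.card = a - 1 := by omega
  -- σ⁻¹ b ∈ Q
  have hbmQ : σ⁻¹ b ∈ Q := by
    simp only [hQ, mem_filter]
    refine ⟨hbmY, hscbm, ?_⟩
    rw [Equiv.Perm.apply_inv_self]
    exact hballin y hyY
  -- σ maps P into P' and P' into P
  have hmapP : ∀ x ∈ P, σ x ∈ P' := by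
    intro x hx
    simp only [hP, mem_filter] at hx
    obtain ⟨hxX, hscx, hAxy⟩ := hx
    have hnc : ¬ σ.SameCycle x w := fun hc => hwnc (hscx.trans hc)
    have hnAwsx : ¬ A w (σ x) := by
      intro hA
      refine h.nb x w hnc ?_ hA
      rw [← hy]
      exact hAxy
    have hsxY : σ x ∈ Y := h.sigma_mem hxX
    have hsxy : σ x ≠ y := by
      intro he
      have hxw : x = w := σ.injective (by rw [← hy]; exact he)
      exact hwnc (hxw ▸ hscx)
    have hbsx : BigV A a (σ x) := hCYbig _ hsxY hsxy
    have hallout := h.swap.big_all_out' hsxY hbsx hwX hnAwsx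
    simp only [hP', mem_filter]
    exact ⟨hsxY, hscx.trans (h.sc_next x), hallout w hwX⟩
  have hmapP' : ∀ u ∈ P', σ u ∈ P := by
    intro u hu
    simp only [hP', mem_filter] at hu
    obtain ⟨huY, hscu, hAuw⟩ := hu
    have hnc : ¬ σ.SameCycle u y := fun hc => hync (hscu.trans hc)
    have hnAysu : ¬ A y (σ u) := by
      intro hA
      refine h.nb u y hnc ?_ hA
      rw [hsyw]
      exact hAuw
    have hsuX : σ u ∈ X := h.sigma_mem' huY
    have hsuw : σ u ≠ w := by
      intro he
      rw [← hsyw] at he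
      exact hync (by rw [← σ.injective he]; exact hscu)
    have hbsu : BigV A a (σ u) := hCXbig _ hsuX hsuw
    have hallout := h.big_all_out' hsuX hbsu hyY hnAysu
    simp only [hP, mem_filter]
    exact ⟨hsuX, hscu.trans (h.sc_next u), hallout y hyY⟩
  have hPeqP' : P.card = P'.card := by
    have h1 : P.image σ ⊆ P' := by
      intro u hu
      obtain ⟨x, hx, rfl⟩ := Finset.mem_image.mp hu
      exact hmapP x hx
    have h2 : P'.image σ ⊆ P := by
      intro x hx
      obtain ⟨u, hu, rfl⟩ := Finset.mem_image.mp hx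
      exact hmapP' u hu
    have h3 := Finset.card_le_card h1
    have h4 := Finset.card_le_card h2
    rw [Finset.card_image_of_injective _ σ.injective] at h3 h4
    omega
  have hQpos : 0 < Q.card := Finset.card_pos.mpr ⟨σ⁻¹ b, hbmQ⟩
  -- dichotomy
  by_cases hPzero : P.card = 0
  · -- no arcs enter {w, y} at all: contradiction with strongness
    have hP'zero : P'.card = 0 := by
      have h1 : P'.image σ ⊆ P := by
        intro x hx
        obtain ⟨u, hu, rfl⟩ := Finset.mem_image.mp hx
        exact hmapP' u hu
      have h2 := Finset.card_le_card h1
      rw [Finset.card_image_of_injective _ σ.injective] at h2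
      omega
    have hzS : z ∈ univ.filter (fun t => t ≠ w ∧ t ≠ y) := by
      simp only [mem_filter, mem_univ, true_and]
      constructor
      · intro he
        exact hwnc (he ▸ Equiv.Perm.SameCycle.refl σ w)
      · intro he
        exact hync (he ▸ Equiv.Perm.SameCycle.refl σ y)
    have hwS : w ∉ univ.filter (fun t => t ≠ w ∧ t ≠ y) := by simp
    obtain ⟨p, q, hpS, hqS, hpq⟩ := crossing (univ.filter (fun t => t ≠ w ∧ t ≠ y))
      (h.strong z w) hzS hwS
    simp only [mem_filter, mem_univ, true_and, not_and_or, not_not] at hpS hqS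
    rcases hqS with rfl | rfl
    · have hpY : p ∈ Y := h.memY_of_arc' hwX hpq
      have : p ∈ P' := by
        simp only [hP', mem_filter]
        exact ⟨hpY, hUmem p hpY hpS.2, hpq⟩
      have := Finset.card_pos.mpr ⟨p, this⟩
      omega
    · have hpX : p ∈ X := h.toBSetup.swap.memY_of_arc' hyY hpq
      have : p ∈ P := by
        simp only [hP, mem_filter]
        exact ⟨hpX, hWmem p hpX hpS.1, hpq⟩
      have := Finset.card_pos.mpr ⟨p, this⟩
      omega
  · -- P and Q' both nonempty: orbit argument
    have hQ'pos : 0 < Q'.card := by omega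
    obtain ⟨x₀, hx₀⟩ := Finset.card_pos.mp (by omega : 0 < P.card)
    obtain ⟨x₁, hx₁⟩ := Finset.card_pos.mp hQ'pos
    have hscx01 : σ.SameCycle x₀ x₁ := by
      have h1 : σ.SameCycle z x₀ := by
        have := mem_filter.mp hx₀; exact this.2.1
      have h2 : σ.SameCycle z x₁ := by
        have := mem_filter.mp hx₁; exact this.2.1
      exact h1.symm.trans h2
    obtain ⟨n, hn⟩ := sc_nat hscx01
    have horbit : ∀ i : ℕ, (σ ^ i) x₀ ∈ P ∪ P' := by
      intro i
      induction i with
      | zero => simp only [pow_zero, Equiv.Perm.one_apply]; exact Finset.mem_union_left _ hx₀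
      | succ n ih =>
        rw [pow_succ', Equiv.Perm.mul_apply]
        rcases Finset.mem_union.mp ih with h1 | h1
        · exact Finset.mem_union_right _ (hmapP _ h1)
        · exact Finset.mem_union_left _ (hmapP' _ h1)
    have hx₁PP' := horbit n
    rw [hn] at hx₁PP'
    rcases Finset.mem_union.mp hx₁PP' with h1 | h1
    · exact Finset.disjoint_left.mp hdisjPQ' h1 hx₁
    · have h2 : x₁ ∈ X := (mem_filter.mp hx₁).1
      have h3 : x₁ ∈ Y := (mem_filter.mp h1).1
      exact h.disj x₁ h2 h3

/-- Main contradiction, given a big vertex `z ∈ X` and a vertex not on its cycle. -/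
theorem finalX (h : Setup A X Y a σ) (ha3 : 3 ≤ a) {z p : V} (hz : z ∈ X) (hbz : BigV A a z)
    (hp : ¬ σ.SameCycle z p) : False := by
  have allbigsX : ∀ x ∈ X, BigV A a x → σ.SameCycle z x := by
    intro x hx hbx
    by_contra hnot
    exact h.two_bigX ha3 hz hx hbz hbx hnot
  have allbigsY : ∀ u ∈ Y, BigV A a u → σ.SameCycle z u := by
    intro u hu hbu
    by_contra hnot
    exact h.two_bigXY ha3 hz hu hbz hbu hnot
  set W := X.filter (fun x => ¬ σ.SameCycle z x) with hW
  have hbalW : W.card = (Y.filter (fun u => ¬ σ.SameCycle z u)).card := h.balance z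
  have hWpos : 0 < W.card := by
    rcases h.cover p with hpX | hpY
    · apply Finset.card_pos.mpr ⟨p, _⟩
      simp only [hW, mem_filter]
      exact ⟨hpX, hp⟩
    · rw [hbalW]
      apply Finset.card_pos.mpr ⟨p, _⟩
      simp only [mem_filter]
      exact ⟨hpY, hp⟩
  have hsplit : (X.filter (fun x => σ.SameCycle z x)).card + W.card = a := by
    rw [hW, Finset.card_filter_add_card_filter_not, h.cardX]
  set sX := (X.filter (fun x => σ.SameCycle z x)).card with hsX
  have hsY : (Y.filter (fun u => σ.SameCycle z u)).card = sX := (h.balance' z).symm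
  -- degree bound for X-vertices via big Y-vertices (all on the cycle of z)
  have hdInX : ∀ x ∈ X, dIn A x ≤ 1 + sX := by
    intro x hxX0
    have h1 := h.dIn_le_one_add_big x
    have h2 : (univ.filter (fun u => A u x ∧ BigV A a u)).card
        ≤ (Y.filter (fun u => σ.SameCycle z u)).card := by
      apply Finset.card_le_card
      intro u hu
      simp only [mem_filter, mem_univ, true_and] at hu
      rcases h.cover u with huX | huY
      · exact absurd hu.1 (h.indX huX hxX0)
      · simp only [mem_filter]
        exact ⟨huY, allbigsY u huY hu.2⟩
    omega
  have hdInY : ∀ u ∈ Y, dIn A u ≤ 1 + sX := by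
    intro u huY0
    have h1 := h.dIn_le_one_add_big u
    have h2 : (univ.filter (fun x => A x u ∧ BigV A a x)).card
        ≤ (X.filter (fun x => σ.SameCycle z x)).card := by
      apply Finset.card_le_card
      intro x hx
      simp only [mem_filter, mem_univ, true_and] at hx
      rcases h.cover x with hxX | hxY
      · simp only [mem_filter]
        exact ⟨hxX, allbigsX x hxX hx.2⟩
      · exact absurd hx.1 (h.indY hxY huY0)
    omega
  have hdz : a - 1 ≤ dIn A z := h.big_dIn hz hbz
  have hr2 : W.card ≤ 2 := by
    have := hdInX z hz
    omega
  by_cases hr1 : W.card = 1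
  · -- r = 1 : dispatch to IVcore
    obtain ⟨w, hw⟩ := Finset.card_eq_one.mp hr1
    have hwmem : w ∈ X.filter (fun x => ¬ σ.SameCycle z x) := by
      rw [← hW, hw]; exact Finset.mem_singleton_self w
    have hwX : w ∈ X := (mem_filter.mp hwmem).1
    have hwnc : ¬ σ.SameCycle z w := (mem_filter.mp hwmem).2
    have hswY : σ w ∈ Y := h.sigma_mem hwX
    have hswnc : ¬ σ.SameCycle z (σ w) :=
      fun hc => hwnc ((Equiv.Perm.sameCycle_apply_right).mp hc)
    have hUone : Y.filter (fun u => ¬ σ.SameCycle z u) = {σ w} := by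
      have hUcard : (Y.filter (fun u => ¬ σ.SameCycle z u)).card = 1 := by
        rw [← hbalW, hr1]
      obtain ⟨u0, hu0⟩ := Finset.card_eq_one.mp hUcard
      have hmem : σ w ∈ Y.filter (fun u => ¬ σ.SameCycle z u) := by
        simp only [mem_filter]
        exact ⟨hswY, hswnc⟩
      rw [hu0] at hmem
      rw [hu0, Finset.mem_singleton.mp hmem]
    -- a big Y-vertex on the cycle
    have hin2 : 1 < (univ.filter (fun u => A u z)).card := by
      have : dIn A z = (univ.filter (fun u => A u z)).card := rfl
      omega
    obtain ⟨y1, hy1, y2, hy2, hy12⟩ := Finset.one_lt_card.mp hin2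
    simp only [mem_filter, mem_univ, true_and] at hy1 hy2
    have hy1Y : y1 ∈ Y := h.memY_of_arc' hz hy1
    have hy2Y : y2 ∈ Y := h.memY_of_arc' hz hy2
    have hbigY : ∃ u ∈ Y, BigV A a u := by
      rcases h.pair_big hy12 hy1 hy2 with h1 | h1
      · exact ⟨y1, hy1Y, h1⟩
      · exact ⟨y2, hy2Y, h1⟩
    obtain ⟨yhat, hyhatY, hbyhat⟩ := hbigY
    have hyhatC : σ.SameCycle z yhat := allbigsY yhat hyhatY hbyhat
    -- crossing out of {w, σ w}
    have hzS : z ∈ ({w, σ w} : Finset V) → False := by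
      intro hzS
      rcases Finset.mem_insert.mp hzS with rfl | hzS
      · exact hwnc (Equiv.Perm.SameCycle.refl σ z)
      · exact h.disj z hz (Finset.mem_singleton.mp hzS ▸ hswY)
    obtain ⟨p', q', hp'S, hq'S, hpq'⟩ := crossing ({w, σ w} : Finset V)
      (h.strong w z) (Finset.mem_insert_self w _) hzS
    rcases Finset.mem_insert.mp hp'S with rfl | hp'S
    · -- exit from w
      have hq'Y : q' ∈ Y := h.memY_of_arc hwX hpq'
      have hq'C : σ.SameCycle z q' := by
        by_contra hnot
        have : q' ∈ Y.filter (fun u => ¬ σ.SameCycle z u) := by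
          simp only [mem_filter]; exact ⟨hq'Y, hnot⟩
        rw [hUone] at this
        apply hq'S
        rw [Finset.mem_singleton.mp this]
        exact Finset.mem_insert_of_mem (Finset.mem_singleton_self _)
      exact h.IVcore ha3 hz allbigsX allbigsY hwX hwnc hw hq'Y hq'C hpq'
    · -- exit from σ w : mirror
      have hp'eq : p' = σ w := Finset.mem_singleton.mp hp'S
      subst hp'eq
      have hq'X : q' ∈ X := h.toBSetup.swap.memY_of_arc hswY hpq'
      have hq'C : σ.SameCycle z q' := by
        by_contra hnot
        have hmem : q' ∈ W := by
          simp only [hW, mem_filter]; exact ⟨hq'X, hnot⟩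
        rw [hw] at hmem
        exact hq'S (by rw [Finset.mem_singleton.mp hmem]; exact Finset.mem_insert_self w _)
      have allbigsX' : ∀ u ∈ Y, BigV A a u → σ.SameCycle yhat u :=
        fun u hu hbu => hyhatC.symm.trans (allbigsY u hu hbu)
      have allbigsY' : ∀ x ∈ X, BigV A a x → σ.SameCycle yhat x :=
        fun x hx hbx => hyhatC.symm.trans (allbigsX x hx hbx)
      have hswnc' : ¬ σ.SameCycle yhat (σ w) := fun hc => hswnc (hyhatC.trans hc)
      have hW'one : Y.filter (fun u => ¬ σ.SameCycle yhat u) = {σ w} := by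
        rw [← hUone]
        apply Finset.filter_congr
        intro u _
        constructor
        · intro hc hc'
          exact hc (hyhatC.symm.trans hc')
        · intro hc hc'
          exact hc (hyhatC.trans hc')
      exact IVcore h.swap ha3 hyhatY allbigsX' allbigsY' hswY hswnc' hW'one hq'X
        (hyhatC.symm.trans hq'C) hpq'
  · -- r = 2
    have hW2 : W.card = 2 := by omega
    have bigXall : ∀ x ∈ X, BigV A a x → ∀ u ∈ Y, A x u := by
      intro x hx hbx
      have h1 := hdInX x hx
      have h2 : 2 * a - 1 ≤ dOut A x + dIn A x := hbx
      have h3 : dOut A x ≤ a := h.dOut_le hx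
      have hcard : (Y.filter (fun u => A x u)).card = Y.card := by
        rw [h.cardY]
        have := h.dOut_eq hx
        omega
      have heq := Finset.eq_of_subset_of_card_le (filter_subset _ Y) (le_of_eq hcard.symm)
      intro u hu
      rw [← heq] at hu
      exact (mem_filter.mp hu).2
    have hCYbig : ∀ u ∈ Y, σ.SameCycle z u → BigV A a u ∧ A u z := by
      have hsub : univ.filter (fun u => A u z ∧ BigV A a u)
          ⊆ Y.filter (fun u => σ.SameCycle z u) := by
        intro u hu
        simp only [mem_filter, mem_univ, true_and] at hu ⊢
        rcases h.cover u with huX | huY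
        · exact absurd hu.1 (h.indX huX hz)
        · exact ⟨huY, allbigsY u huY hu.2⟩
      have hcard : (Y.filter (fun u => σ.SameCycle z u)).card
          ≤ (univ.filter (fun u => A u z ∧ BigV A a u)).card := by
        have h1 := h.nonbig_in z
        have h2 := dIn_split A a z
        omega
      have heq := Finset.eq_of_subset_of_card_le hsub hcard
      intro u huY hscu
      have hmem : u ∈ univ.filter (fun u => A u z ∧ BigV A a u) := by
        rw [heq]
        simp only [mem_filter]
        exact ⟨huY, hscu⟩
      simp only [mem_filter, mem_univ, true_and] at hmem
      exact ⟨hmem.2, hmem.1⟩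
    have bigYall : ∀ u ∈ Y, σ.SameCycle z u → ∀ x ∈ X, A u x := by
      intro u huY hscu
      have hbu := (hCYbig u huY hscu).1
      have h1 := hdInY u huY
      have h2 : 2 * a - 1 ≤ dOut A u + dIn A u := hbu
      have h3 : dOut A u ≤ a := h.toBSetup.swap.dOut_le huY
      have hcard : (X.filter (fun x => A u x)).card = X.card := by
        rw [h.cardX]
        have := h.toBSetup.swap.dOut_eq huY
        omega
      have heq := Finset.eq_of_subset_of_card_le (filter_subset _ X) (le_of_eq hcard.symm)
      intro x hx
      rw [← heq] at hx
      exact (mem_filter.mp hx).2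
    have kill2 : ∀ q ∈ X, ¬ σ.SameCycle z q → ∀ c ∈ Y, σ.SameCycle z c → ¬ A q c := by
      intro q hq hqnc c hc hscc hA
      have hcmX : σ⁻¹ c ∈ X := h.sigma_inv_mem' hc
      have hscm : σ.SameCycle z (σ⁻¹ c) := hscc.trans (h.sc_prev c)
      have hne : q ≠ σ⁻¹ c := fun he => hqnc (he ▸ hscm)
      rcases h.pair_big hne hA (h.arc_inv c) with h1 | h1
      · exact hqnc (allbigsX q hq h1)
      · have hout := bigXall _ hcmX h1 (σ q) (h.sigma_mem hq)
        have hnc' : ¬ σ.SameCycle q (σ⁻¹ c) := fun hc' => hqnc (hscm.trans hc'.symm)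
        exact h.nb q (σ⁻¹ c) hnc' (by rw [Equiv.Perm.apply_inv_self]; exact hA) hout
    have kill1 : ∀ q ∈ Y, ¬ σ.SameCycle z q → ∀ c ∈ X, σ.SameCycle z c → ¬ A q c := by
      intro q hq hqnc c hc hscc hA
      have hcmY : σ⁻¹ c ∈ Y := h.sigma_inv_mem hc
      have hscm : σ.SameCycle z (σ⁻¹ c) := hscc.trans (h.sc_prev c)
      have hout := bigYall _ hcmY hscm (σ q) (h.sigma_mem' hq)
      have hnc' : ¬ σ.SameCycle q (σ⁻¹ c) := fun hc' => hqnc (hscm.trans hc'.symm)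
      exact h.nb q (σ⁻¹ c) hnc' (by rw [Equiv.Perm.apply_inv_self]; exact hA) hout
    have hpS : p ∈ univ.filter (fun t => ¬ σ.SameCycle z t) := by
      simp only [mem_filter, mem_univ, true_and]
      exact hp
    have hznS : z ∉ univ.filter (fun t => ¬ σ.SameCycle z t) := by
      simp only [mem_filter, mem_univ, true_and, not_not]
      exact Equiv.Perm.SameCycle.refl σ z
    obtain ⟨p', q', hp'S, hq'S, hpq'⟩ := crossing (univ.filter (fun t => ¬ σ.SameCycle z t))
      (h.strong p z) hpS hznS
    simp only [mem_filter, mem_univ, true_and, not_not] at hp'S hq'S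
    rcases h.cover p' with hX1 | hY1
    · exact kill2 p' hX1 hp'S q' (h.memY_of_arc hX1 hpq') hq'S hpq'
    · exact kill1 p' hY1 hp'S q' (h.memX_of_arc hY1 hpq') hq'S hpq'

/-- Main contradiction for `a ≥ 3`. -/
theorem final (h : Setup A X Y a σ) (ha3 : 3 ≤ a) {v w : V} (hvw : ¬ σ.SameCycle v w) :
    False := by
  obtain ⟨z, hbz⟩ := h.exists_big hvw
  have hzp : ∃ p, ¬ σ.SameCycle z p := by
    by_cases hc : σ.SameCycle z v
    · exact ⟨w, fun hc' => hvw (hc.symm.trans hc')⟩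
    · exact ⟨v, hc⟩
  obtain ⟨p, hp⟩ := hzp
  rcases h.cover z with hzX | hzY
  · exact h.finalX ha3 hzX hbz hp
  · exact h.swap.finalX ha3 hzY hbz hp

/-- The `a = 2` case, asymmetric core. -/
theorem a2core (h : Setup A X Y 2 σ) (hinv : ∀ t, σ (σ t) = t) {x1 x2 : V} (h1X : x1 ∈ X)
    (h2X : x2 ∈ X) (hnc : ¬ σ.SameCycle x1 x2) (harc : A x1 (σ x2)) : False := by
  have hne : x1 ≠ x2 := fun he => hnc (he ▸ Equiv.Perm.SameCycle.refl σ x1)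
  have hy1Y : σ x1 ∈ Y := h.sigma_mem h1X
  have hy2Y : σ x2 ∈ Y := h.sigma_mem h2X
  have hy12 : σ x1 ≠ σ x2 := fun he => hne (σ.injective he)
  have hXeq : ({x1, x2} : Finset V) = X := by
    apply Finset.eq_of_subset_of_card_le
    · intro t ht
      rcases Finset.mem_insert.mp ht with rfl | ht
      · exact h1X
      · exact (Finset.mem_singleton.mp ht) ▸ h2X
    · rw [h.cardX, Finset.card_insert_of_notMem (by simp [hne]), Finset.card_singleton]
  have hYeq : ({σ x1, σ x2} : Finset V) = Y := by
    apply Finset.eq_of_subset_of_card_le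
    · intro t ht
      rcases Finset.mem_insert.mp ht with rfl | ht
      · exact hy1Y
      · exact (Finset.mem_singleton.mp ht) ▸ hy2Y
    · rw [h.cardY, Finset.card_insert_of_notMem (by simp [hy12]), Finset.card_singleton]
  -- no bridge between x1, x2
  have hnb1 : ¬ A x2 (σ x1) := fun hA => h.nb x1 x2 hnc harc hA
  -- dominating pair {x1, x2} at σ x2
  have hd1 : 3 ≤ dT A x1 := h.pair_min hne harc (h.arc x2)
  have hd2 : 3 ≤ dT A x2 := h.pair_min (Ne.symm hne) (h.arc x2) harc
  -- x2 receives arcs from both σ x1 and σ x2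
  have hAy1x2 : A (σ x1) x2 := by
    have hdO : dOut A x2 ≤ 1 := by
      rw [h.dOut_eq h2X]
      have hsub : Y.filter (fun u => A x2 u) ⊆ {σ x2} := by
        intro u hu
        simp only [mem_filter] at hu
        rw [← hYeq] at hu
        rcases Finset.mem_insert.mp hu.1 with rfl | ht
        · exact absurd hu.2 hnb1
        · exact ht
      calc _ ≤ ({σ x2} : Finset V).card := Finset.card_le_card hsub
        _ = 1 := Finset.card_singleton _
    have hcard : (Y.filter (fun u => A u x2)).card = Y.card := by
      have h1 := h.dIn_eq h2X
      have h2 : dIn A x2 ≤ 2 := h.dIn_le h2X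
      rw [h.cardY]
      unfold dT at hd2
      omega
    have heq := Finset.eq_of_subset_of_card_le (filter_subset _ Y) (le_of_eq hcard.symm)
    have : σ x1 ∈ Y.filter (fun u => A u x2) := by rw [heq]; exact hy1Y
    exact (mem_filter.mp this).2
  -- no bridge between σ x1, σ x2
  have hncy : ¬ σ.SameCycle (σ x1) (σ x2) := by
    intro hc
    exact hnc (((h.sc_next x1).trans hc).trans (h.sc_next x2).symm)
  have hnb2 : ¬ A (σ x2) x1 := by
    intro hA
    refine h.nb (σ x1) (σ x2) hncy ?_ ?_
    · rw [hinv x2]; exact hAy1x2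
    · rw [hinv x1]; exact hA
  -- strongness kill
  obtain ⟨p', q', hp'S, hq'S, hpq'⟩ := crossing ({x2, σ x2} : Finset V)
    (h.strong x2 x1) (Finset.mem_insert_self x2 _)
    (by
      intro hmem
      rcases Finset.mem_insert.mp hmem with he | he
      · exact hne he
      · exact h.disj x1 h1X ((Finset.mem_singleton.mp he) ▸ hy2Y))
  rcases Finset.mem_insert.mp hp'S with rfl | hp'S
  · -- arc from x2
    have hq'Y : q' ∈ Y := h.memY_of_arc h2X hpq'
    rw [← hYeq] at hq'Y
    rcases Finset.mem_insert.mp hq'Y with rfl | he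
    · exact hnb1 hpq'
    · exact hq'S (by rw [Finset.mem_singleton.mp he]
                     exact Finset.mem_insert_of_mem (Finset.mem_singleton_self _))
  · -- arc from σ x2
    have hp'eq : p' = σ x2 := Finset.mem_singleton.mp hp'S
    subst hp'eq
    have hq'X : q' ∈ X := h.toBSetup.swap.memY_of_arc hy2Y hpq'
    rw [← hXeq] at hq'X
    rcases Finset.mem_insert.mp hq'X with rfl | he
    · exact hnb2 hpq'
    · exact hq'S (by rw [Finset.mem_singleton.mp he]; exact Finset.mem_insert_self _ _)

/-- The `a = 2` case. -/
theorem a2 (h : Setup A X Y 2 σ) {v w : V} (hvw : ¬ σ.SameCycle v w) : False := by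
  have key : ∀ (X' Y' : Finset V), Setup A X' Y' 2 σ → ∀ t ∈ X', σ (σ t) ≠ t →
      ∀ q, σ.SameCycle t q := by
    intro X' Y' h' t ht hne q
    have hq2 : ∀ q' ∈ X', σ.SameCycle t q' := by
      intro q' hq'
      have hsub : ({t, σ (σ t)} : Finset V) ⊆ X'.filter (fun x => σ.SameCycle t x) := by
        intro s hs
        rcases Finset.mem_insert.mp hs with rfl | hs
        · simp only [mem_filter]
          exact ⟨ht, Equiv.Perm.SameCycle.refl σ s⟩
        · rw [Finset.mem_singleton.mp hs]
          simp only [mem_filter]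
          exact ⟨h'.sigma_mem' (h'.sigma_mem ht), (h'.sc_next t).trans (h'.sc_next (σ t))⟩
      have hcard : 2 ≤ (X'.filter (fun x => σ.SameCycle t x)).card := by
        have := Finset.card_le_card hsub
        rwa [Finset.card_insert_of_notMem (by simp [Ne.symm hne]),
          Finset.card_singleton] at this
      have heq : X'.filter (fun x => σ.SameCycle t x) = X' := by
        apply Finset.eq_of_subset_of_card_le (filter_subset _ _)
        rw [h'.cardX]
        exact hcard
      have : q' ∈ X'.filter (fun x => σ.SameCycle t x) := by rw [heq]; exact hq'
      exact (mem_filter.mp this).2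
    rcases h'.cover q with hqX | hqY
    · exact hq2 q hqX
    · exact (hq2 (σ q) (h'.sigma_mem' hqY)).trans (h'.sc_next q).symm
  have hinv : ∀ t, σ (σ t) = t := by
    intro t
    by_contra hne
    apply hvw
    rcases h.cover t with htX | htY
    · exact (key X Y h t htX hne v).symm.trans (key X Y h t htX hne w)
    · exact (key Y X h.swap t htY hne v).symm.trans (key Y X h.swap t htY hne w)
  obtain ⟨p', q', hp'S, hq'S, hpq'⟩ := crossing (univ.filter (fun u => σ.SameCycle v u))
    (h.strong v w) (by simp [Equiv.Perm.SameCycle.refl]) (by simp [hvw])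
  simp only [mem_filter, mem_univ, true_and] at hp'S hq'S
  have hnc : ¬ σ.SameCycle p' q' := fun hc => hq'S (hp'S.trans hc)
  have hnc' : ¬ σ.SameCycle p' (σ q') := by
    intro hc
    exact hnc (hc.trans (h.sc_next q').symm)
  have harc' : A p' (σ (σ q')) := by rw [hinv q']; exact hpq'
  rcases h.cover p' with hX1 | hY1
  · have hq'Y : q' ∈ Y := h.memY_of_arc hX1 hpq'
    exact h.a2core hinv hX1 (h.sigma_mem' hq'Y) hnc' harc'
  · have hq'X : q' ∈ X := h.toBSetup.swap.memY_of_arc hY1 hpq'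
    exact h.swap.a2core hinv hY1 (h.sigma_mem hq'X) hnc' harc'

end Setup

section Merge

variable (σ : Equiv.Perm V) {u v : V}

theorem merge_sameCycle_uv (huv : ¬ σ.SameCycle u v) :
    (σ * Equiv.swap u v).SameCycle u v := by
  set σ' := σ * Equiv.swap u v with hσ'
  have hap : ∀ p, p ≠ u → p ≠ v → σ' p = σ p := by
    intro p h1 h2
    rw [hσ', Equiv.Perm.mul_apply, Equiv.swap_apply_of_ne_of_ne h1 h2]
  have hau : σ' u = σ v := by rw [hσ', Equiv.Perm.mul_apply, Equiv.swap_apply_left]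
  have hper : v ∈ Function.periodicPts ⇑σ := by
    refine ⟨orderOf σ, orderOf_pos σ, ?_⟩
    show (⇑σ)^[orderOf σ] v = v
    rw [Equiv.Perm.iterate_eq_pow, pow_orderOf_eq_one]
    rfl
  set m := Function.minimalPeriod ⇑σ v with hm
  have hmpos : 0 < m := Function.minimalPeriod_pos_of_mem_periodicPts hper
  have hmv : (σ ^ m) v = v := by
    have h1 := Function.iterate_minimalPeriod (f := ⇑σ) (x := v)
    rwa [Equiv.Perm.iterate_eq_pow] at h1
  have hchain : ∀ i, 1 ≤ i → i ≤ m → (σ' ^ i) u = (σ ^ i) v := by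
    intro i
    induction i with
    | zero => omega
    | succ n ih =>
      intro _ h2
      by_cases hn : n = 0
      · subst hn
        simpa [pow_one] using hau
      · have ihn := ih (by omega) (by omega)
        have hneu : (σ ^ n) v ≠ u := by
          intro he
          exact huv (Equiv.Perm.SameCycle.symm ⟨(n : ℤ), by rw [zpow_natCast, he]⟩)
        have hnev : (σ ^ n) v ≠ v := by
          intro he
          have hip : Function.IsPeriodicPt ⇑σ n v := by
            show (⇑σ)^[n] v = v
            rw [Equiv.Perm.iterate_eq_pow]
            exact he
          have := Function.IsPeriodicPt.minimalPeriod_le (by omega) hip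
          omega
        rw [pow_succ', Equiv.Perm.mul_apply, ihn, hap _ hneu hnev, ← Equiv.Perm.mul_apply,
          ← pow_succ']
  exact ⟨(m : ℤ), by rw [zpow_natCast, hchain m hmpos le_rfl, hmv]⟩

theorem merge_step (huv : ¬ σ.SameCycle u v) (p : V) :
    (σ * Equiv.swap u v).SameCycle p (σ p) := by
  set σ' := σ * Equiv.swap u v with hσ'
  have hK := merge_sameCycle_uv σ huv
  have hau : σ' u = σ v := by rw [hσ', Equiv.Perm.mul_apply, Equiv.swap_apply_left]
  have hav : σ' v = σ u := by rw [hσ', Equiv.Perm.mul_apply, Equiv.swap_apply_right]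
  by_cases h1 : p = u
  · subst h1
    have h2 : σ'.SameCycle v (σ' v) := ⟨1, by simp⟩
    rw [hav] at h2
    exact hK.trans h2
  · by_cases h2 : p = v
    · subst h2
      have h3 : σ'.SameCycle u (σ' u) := ⟨1, by simp⟩
      rw [hau] at h3
      exact hK.symm.trans h3
    · have h3 : σ' p = σ p := by
        rw [hσ', Equiv.Perm.mul_apply, Equiv.swap_apply_of_ne_of_ne h1 h2]
      have h4 : σ'.SameCycle p (σ' p) := ⟨1, by simp⟩
      rwa [h3] at h4

theorem merge_mono (huv : ¬ σ.SameCycle u v) {p q : V} (h : σ.SameCycle p q) :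
    (σ * Equiv.swap u v).SameCycle p q := by
  obtain ⟨n, hn⟩ := sc_nat h
  rw [← hn]
  clear hn
  induction n with
  | zero => simp only [pow_zero, Equiv.Perm.one_apply]; exact Equiv.Perm.SameCycle.refl _ _
  | succ n ih =>
    rw [pow_succ', Equiv.Perm.mul_apply]
    exact ih.trans (merge_step σ huv ((σ ^ n) p))

/-- The number of ordered pairs of vertices lying on different cycles. -/
noncomputable def badPairs (σ : Equiv.Perm V) : ℕ :=
  ((univ : Finset (V × V)).filter (fun pq => ¬ σ.SameCycle pq.1 pq.2)).card

theorem merge_lt (huv : ¬ σ.SameCycle u v) :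
    badPairs (σ * Equiv.swap u v) < badPairs σ := by
  apply Finset.card_lt_card
  rw [Finset.ssubset_iff_of_subset]
  · refine ⟨(u, v), ?_, ?_⟩
    · simp only [mem_filter, mem_univ, true_and]
      exact huv
    · simp only [mem_filter, mem_univ, true_and, not_not]
      exact merge_sameCycle_uv σ huv
  · intro pq hpq
    simp only [mem_filter, mem_univ, true_and] at hpq ⊢
    intro hc
    exact hpq (merge_mono σ huv hc)

end Merge

namespace BSetup

variable {A : V → V → Prop} {X Y : Finset V} {a : ℕ}

theorem hall (h : BSetup A X Y a) :
    ∃ f : {x // x ∈ X} → V, Function.Injective f ∧ ∀ x : {x // x ∈ X}, A x.1 (f x) ∧ f x ∈ Y := by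
  set t : {x // x ∈ X} → Finset V := fun x => univ.filter (fun w => A ↑x w) with ht
  have htcard : ∀ x : {x // x ∈ X}, (t x).card = dOut A ↑x := fun x => rfl
  have hhall : ∀ s : Finset {x // x ∈ X}, s.card ≤ (s.biUnion t).card := by
    intro s
    by_contra hlt
    push_neg at hlt
    set B := s.biUnion t with hB
    have htB : ∀ x ∈ s, t x ⊆ B := fun x hx => Finset.subset_biUnion_of_mem t hx
    by_cases hfib : ∃ y, ∃ x1 ∈ s, ∃ x2 ∈ s, x1 ≠ x2 ∧ y ∈ t x1 ∧ y ∈ t x2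
    · obtain ⟨y, x1, hx1, x2, hx2, hne, hy1, hy2⟩ := hfib
      simp only [ht, mem_filter, mem_univ, true_and] at hy1 hy2
      have hcne : (↑x1 : V) ≠ ↑x2 := fun he => hne (Subtype.coe_injective he)
      have hbig : a - 1 ≤ B.card := by
        rcases h.pair_big hcne hy1 hy2 with hb | hb
        · have h1 : a - 1 ≤ dOut A ↑x1 := h.big_dOut x1.2 hb
          have h2 := Finset.card_le_card (htB x1 hx1)
          rw [htcard] at h2
          omega
        · have h1 : a - 1 ≤ dOut A ↑x2 := h.big_dOut x2.2 hb
          have h2 := Finset.card_le_card (htB x2 hx2)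
          rw [htcard] at h2
          omega
      have hsle : s.card ≤ a := by
        have h1 : s.card ≤ Fintype.card {x // x ∈ X} :=
          (Finset.card_le_univ s).trans_eq Finset.card_univ
        rwa [Fintype.card_coe, h.cardX] at h1
      have hscard : s.card = a := by omega
      have hsuniv : s = univ := by
        apply Finset.eq_univ_of_card
        rw [hscard, Fintype.card_coe, h.cardX]
      have hBY : B ⊆ Y := by
        intro u hu
        obtain ⟨x, _, hx⟩ := Finset.mem_biUnion.mp hu
        simp only [ht, mem_filter, mem_univ, true_and] at hx
        exact h.memY_of_arc x.2 hx
      have hex : ∃ y0 ∈ Y, y0 ∉ B := by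
        by_contra hc
        push_neg at hc
        have := Finset.card_le_card (fun u hu => hc u hu)
        rw [h.cardY] at this
        omega
      obtain ⟨y0, hy0Y, hy0B⟩ := hex
      obtain ⟨p, hpA⟩ := h.exists_in y0
      have hpX : p ∈ X := h.memX_of_arc' hy0Y hpA
      apply hy0B
      apply Finset.mem_biUnion.mpr ⟨⟨p, hpX⟩, hsuniv ▸ Finset.mem_univ _, _⟩
      simp only [ht, mem_filter, mem_univ, true_and]
      exact hpA
    · push_neg at hfib
      have hwit : ∀ x : {x // x ∈ X}, ∃ y, y ∈ t x := by
        intro x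
        have := h.dOut_pos ↑x
        rw [← htcard] at this
        exact Finset.card_pos.mp this
      choose wit hwit using hwit
      have hinj : Set.InjOn wit ↑s := by
        intro x1 hx1 x2 hx2 he
        by_contra hne
        exact hfib (wit x1) x1 hx1 x2 hx2 hne (hwit x1) (by rw [he]; exact hwit x2)
      have hmap : ∀ x ∈ s, wit x ∈ B := fun x hx => htB x hx (hwit x)
      have := Finset.card_le_card_of_injOn wit hmap hinj
      omega
  obtain ⟨f, hfinj, hf⟩ := (Finset.all_card_le_biUnion_card_iff_exists_injective t).mp hhall
  refine ⟨f, hfinj, fun x => ?_⟩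
  have h1 := hf x
  simp only [ht, mem_filter, mem_univ, true_and] at h1
  exact ⟨h1, h.memY_of_arc x.2 h1⟩

/-- A strong bipartite digraph with the degree condition has a cycle factor. -/
theorem factor (h : BSetup A X Y a) : ∃ σ : Equiv.Perm V, ∀ p, A p (σ p) := by
  obtain ⟨f, hfinj, hf⟩ := h.hall
  obtain ⟨g, hginj, hg⟩ := h.swap.hall
  set F : V → V := fun p =>
    if hp : p ∈ X then f ⟨p, hp⟩ else if hp' : p ∈ Y then g ⟨p, hp'⟩ else p with hF
  have Feq1 : ∀ p (hp : p ∈ X), F p = f ⟨p, hp⟩ := by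
    intro p hp
    simp only [hF]
    rw [dif_pos hp]
  have Feq2 : ∀ p (hp : p ∈ Y), F p = g ⟨p, hp⟩ := by
    intro p hp
    simp only [hF]
    rw [dif_neg (fun hx => h.disj p hx hp), dif_pos hp]
  have harc : ∀ p, A p (F p) := by
    intro p
    rcases h.cover p with hp | hp
    · rw [Feq1 p hp]; exact (hf ⟨p, hp⟩).1
    · rw [Feq2 p hp]; exact (hg ⟨p, hp⟩).1
  have hFinj : Function.Injective F := by
    intro p q hpq
    rcases h.cover p with hp | hp <;> rcases h.cover q with hq | hq
    · rw [Feq1 p hp, Feq1 q hq] at hpq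
      exact congrArg Subtype.val (hfinj hpq)
    · rw [Feq1 p hp, Feq2 q hq] at hpq
      exact absurd ((hg ⟨q, hq⟩).2) (fun hc => h.disj _ (hpq ▸ hc) (hf ⟨p, hp⟩).2)
    · rw [Feq2 p hp, Feq1 q hq] at hpq
      exact absurd ((hg ⟨p, hp⟩).2) (fun hc => h.disj _ hc (hpq ▸ (hf ⟨q, hq⟩).2))
    · rw [Feq2 p hp, Feq2 q hq] at hpq
      exact congrArg Subtype.val (hginj hpq)
  exact ⟨Equiv.ofBijective F (Finite.injective_iff_bijective.mp hFinj), harc⟩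

end BSetup

end Aux

/-- A strong balanced bipartite digraph on `2a` vertices (`a ≥ 2`) in which
every dominating pair `{x, y}` satisfies `d(x) ≥ 2a−1, d(y) ≥ a+1` or
`d(y) ≥ 2a−1, d(x) ≥ a+1` is hamiltonian. -/
theorem stmt_0 {V : Type*} (A : V → V → Prop) (V1 V2 : Finset V) (a : ℕ)
    (ha : 2 ≤ a) (hbip : IsBipartition A V1 V2)
    (hV1 : V1.card = a) (hV2 : V2.card = a)
    (hstrong : IsStrong A)
    (hdeg : ∀ x y : V, DominatingPair A x y →
      (2 * a - 1 ≤ deg A x ∧ a + 1 ≤ deg A y) ∨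
      (2 * a - 1 ≤ deg A y ∧ a + 1 ≤ deg A x)) :
    IsHamiltonian A := by
  obtain ⟨hcover, hdisj, hindX, hindY⟩ := hbip
  letI : Fintype V := ⟨V1 ∪ V2, fun v => Finset.mem_union.mpr (hcover v)⟩
  have hb : BSetup A V1 V2 a :=
    { ha := ha
      cover := hcover
      disj := fun v h1 h2 => Finset.disjoint_left.mp hdisj h1 h2
      indX := fun hx hy => hindX _ hx _ hy
      indY := fun hx hy => hindY _ hx _ hy
      cardX := hV1
      cardY := hV2
      strong := hstrong
      dom := by
        intro x y z hxy hx hy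
        have := hdeg x y ⟨hxy, z, hx, hy⟩
        rwa [deg_eq_dT, deg_eq_dT] at this }
  obtain ⟨σ0, hσ0⟩ := hb.factor
  set S : Finset (Equiv.Perm V) := univ.filter (fun τ => ∀ p, A p (τ p)) with hS
  have hσ0S : σ0 ∈ S := by
    simp only [hS, Finset.mem_filter, Finset.mem_univ, true_and]
    exact hσ0
  have hne : S.Nonempty := ⟨σ0, hσ0S⟩
  obtain ⟨σ, hσS, hmin⟩ := Finset.exists_min_image S badPairs hne
  have harc : ∀ p, A p (σ p) := by
    have := Finset.mem_filter.mp hσS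
    exact this.2
  refine ⟨σ, harc, ?_⟩
  by_contra hnot
  push_neg at hnot
  obtain ⟨v, w, hvw⟩ := hnot
  have hnb : ∀ u t, ¬ σ.SameCycle u t → A u (σ t) → A t (σ u) → False := by
    intro u t hut h1 h2
    have harc' : ∀ p, A p ((σ * Equiv.swap u t) p) := by
      intro p
      rw [Equiv.Perm.mul_apply]
      by_cases hp1 : p = u
      · subst hp1; rw [Equiv.swap_apply_left]; exact h1
      · by_cases hp2 : p = t
        · subst hp2; rw [Equiv.swap_apply_right]; exact h2
        · rw [Equiv.swap_apply_of_ne_of_ne hp1 hp2]; exact harc p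
    have hmem : σ * Equiv.swap u t ∈ S := by
      simp only [hS, Finset.mem_filter, Finset.mem_univ, true_and]
      exact harc'
    have h3 := hmin _ hmem
    have hlt := merge_lt σ hut
    omega
  have hsetup : Setup A V1 V2 a σ := ⟨hb, harc, hnb⟩
  rcases Nat.lt_or_ge a 3 with h3 | h3
  · have ha2 : a = 2 := by omega
    subst ha2
    exact hsetup.a2 hvw
  · exact hsetup.final h3 hvw
end

section
/- Let D be a strong balanced bipartite digraph with partite sets V1 and V2, each of cardinality a, where a ≥ 2. Suppose that for every dominating pair of vertices {x, y} of D, either d(x) ≥ 2a−2 and d(y) ≥ a+1, or d(y) ≥ 2a−2 and d(x) ≥ a+1, and suppose that D is not isomorphic to either variant of the digraph H2. Then D contains a perfect matching from V1 to V2 and a perfect matching from V2 to V1; moreover, D contains a cycle factor. -/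
open Finset


set_option maxHeartbeats 1000000 in
theorem h2iso_contra {V : Type*} [Fintype V] (A : V → V → Prop) (x y u t0 w1 w2 : V)
    (hcardV : Fintype.card V = 6)
    (hclass : ∀ v : V, v = x ∨ v = y ∨ v = u ∨ v = t0 ∨ v = w1 ∨ v = w2)
    (hAxt0 : A x t0) (hAyt0 : A y t0) (hAt0x : A t0 x) (hAt0y : A t0 y)
    (hAt0u : A t0 u) (hAuw1 : A u w1) (hAuw2 : A u w2)
    (hAw1x : A w1 x) (hAw1y : A w1 y) (hAw1u : A w1 u)
    (hAw2x : A w2 x) (hAw2y : A w2 y) (hAw2u : A w2 u)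
    (hnxx : ¬ A x x) (hnxy : ¬ A x y) (hnxu : ¬ A x u)
    (hnyx : ¬ A y x) (hnyy : ¬ A y y) (hnyu : ¬ A y u)
    (hnux : ¬ A u x) (hnuy : ¬ A u y) (hnuu : ¬ A u u)
    (hnt0t0 : ¬ A t0 t0) (hnt0w1 : ¬ A t0 w1) (hnt0w2 : ¬ A t0 w2)
    (hnw1t0 : ¬ A w1 t0) (hnw1w1 : ¬ A w1 w1) (hnw1w2 : ¬ A w1 w2)
    (hnw2t0 : ¬ A w2 t0) (hnw2w1 : ¬ A w2 w1) (hnw2w2 : ¬ A w2 w2)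
    (hnxw1 : ¬ A x w1) (hnxw2 : ¬ A x w2) (hnyw1 : ¬ A y w1) (hnyw2 : ¬ A y w2)
    (hnotH2 : ∀ b : Bool, ¬ DigraphIso A (H2Adj b)) : False := by
  have hsurj : Function.Surjective ![x, y, u, t0, w1, w2] := by
    intro v
    rcases hclass v with rfl | rfl | rfl | rfl | rfl | rfl
    · exact ⟨0, rfl⟩
    · exact ⟨1, rfl⟩
    · exact ⟨2, rfl⟩
    · exact ⟨3, rfl⟩
    · exact ⟨4, rfl⟩
    · exact ⟨5, rfl⟩
  have hbij : Function.Bijective ![x, y, u, t0, w1, w2] :=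
    (Fintype.bijective_iff_surjective_and_card _).mpr ⟨hsurj, by rw [hcardV]; rfl⟩
  by_cases hut : A u t0
  · refine hnotH2 true ⟨(Equiv.ofBijective _ hbij).symm, ?_⟩
    intro p q
    obtain ⟨i, rfl⟩ := hsurj p
    obtain ⟨j, rfl⟩ := hsurj q
    rw [show (Equiv.ofBijective _ hbij).symm (![x, y, u, t0, w1, w2] i) = i from
        (Equiv.ofBijective _ hbij).symm_apply_apply i,
      show (Equiv.ofBijective _ hbij).symm (![x, y, u, t0, w1, w2] j) = j from
        (Equiv.ofBijective _ hbij).symm_apply_apply j]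
    fin_cases i <;> fin_cases j <;> simp [H2Adj] <;> tauto
  · refine hnotH2 false ⟨(Equiv.ofBijective _ hbij).symm, ?_⟩
    intro p q
    obtain ⟨i, rfl⟩ := hsurj p
    obtain ⟨j, rfl⟩ := hsurj q
    rw [show (Equiv.ofBijective _ hbij).symm (![x, y, u, t0, w1, w2] i) = i from
        (Equiv.ofBijective _ hbij).symm_apply_apply i,
      show (Equiv.ofBijective _ hbij).symm (![x, y, u, t0, w1, w2] j) = j from
        (Equiv.ofBijective _ hbij).symm_apply_apply j]
    fin_cases i <;> fin_cases j <;> simp [H2Adj] <;> tauto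

set_option maxHeartbeats 1000000 in
theorem pm_aux {V : Type*} [Fintype V] (A : V → V → Prop) (V1 V2 : Finset V) (a : ℕ)
    (ha : 2 ≤ a)
    (hcov : ∀ v : V, v ∈ V1 ∨ v ∈ V2) (hdisj : Disjoint V1 V2)
    (h11 : ∀ x ∈ V1, ∀ y ∈ V1, ¬ A x y) (h22 : ∀ x ∈ V2, ∀ y ∈ V2, ¬ A x y)
    (hV1 : V1.card = a) (hV2 : V2.card = a)
    (hstrong : IsStrong A)
    (hdeg : ∀ x y : V, DominatingPair A x y →
      (2 * a - 2 ≤ deg A x ∧ a + 1 ≤ deg A y) ∨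
      (2 * a - 2 ≤ deg A y ∧ a + 1 ≤ deg A x))
    (hnotH2 : ∀ b : Bool, ¬ DigraphIso A (H2Adj b)) :
    IsPerfectMatchingFromTo A V1 V2 := by
  classical
  -- basic facts
  have hdeg_eq : ∀ v, deg A v =
      (univ.filter (fun w => A v w)).card + (univ.filter (fun w => A w v)).card := by
    intro v
    rw [deg, Nat.card_eq_fintype_card, Nat.card_eq_fintype_card,
      Fintype.card_subtype, Fintype.card_subtype]
  have harc : ∀ p q, A p q → (p ∈ V1 ∧ q ∈ V2) ∨ (p ∈ V2 ∧ q ∈ V1) := by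
    intro p q h
    rcases hcov p with hp | hp <;> rcases hcov q with hq | hq
    · exact absurd h (h11 p hp q hq)
    · exact Or.inl ⟨hp, hq⟩
    · exact Or.inr ⟨hp, hq⟩
    · exact absurd h (h22 p hp q hq)
  have hout : ∀ v : V, ∃ w, A v w := by
    intro v
    obtain ⟨w, hw, hwv⟩ := Finset.exists_mem_ne (by omega : 1 < V1.card) v
    rcases (hstrong v w).cases_head with h | ⟨c, hc, -⟩
    · obtain ⟨w', hw', hwv'⟩ := Finset.exists_mem_ne (by omega : 1 < V2.card) v
      rcases (hstrong v w').cases_head with h' | ⟨c, hc, -⟩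
      · exact absurd (Finset.disjoint_left.mp hdisj (h ▸ hw)) (fun hvv2 => hvv2 (h' ▸ hw'))
      · exact ⟨c, hc⟩
    · exact ⟨c, hc⟩
  have hin : ∀ v : V, ∃ w, A w v := by
    intro v
    obtain ⟨w, hw, hwv⟩ := Finset.exists_mem_ne (by omega : 1 < V1.card) v
    rcases (hstrong w v).cases_tail with h | ⟨c, -, hc⟩
    · obtain ⟨w', hw', hwv'⟩ := Finset.exists_mem_ne (by omega : 1 < V2.card) v
      rcases (hstrong w' v).cases_tail with h' | ⟨c, -, hc⟩
      · exact absurd (Finset.disjoint_left.mp hdisj (h ▸ hw)) (fun hvv2 => hvv2 (h' ▸ hw'))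
      · exact ⟨c, hc⟩
    · exact ⟨c, hc⟩
  -- Hall condition
  have hall : ∀ S : Finset V, S ⊆ V1 →
      S.card ≤ (V2.filter (fun w => ∃ s ∈ S, A s w)).card := by
    intro S hS
    by_contra hlt
    push_neg at hlt
    set T := V2.filter (fun w => ∃ s ∈ S, A s w) with hTdef
    have hTV2 : T ⊆ V2 := filter_subset _ _
    have houtT : ∀ s ∈ S, ∀ w, A s w → w ∈ T := by
      intro s hs w hw
      rcases harc s w hw with ⟨-, hw2⟩ | ⟨hs2, -⟩
      · exact mem_filter.mpr ⟨hw2, s, hs, hw⟩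
      · exact absurd (hS hs) (Finset.disjoint_right.mp hdisj hs2)
    have houtTsub : ∀ s ∈ S, univ.filter (fun w => A s w) ⊆ T := by
      intro s hs w hw
      exact houtT s hs w (mem_filter.mp hw).2
    have hSa : S.card ≤ a := hV1 ▸ Finset.card_le_card hS
    -- pigeonhole: a dominating pair inside S
    obtain ⟨x, hxS, y, hyS, hxy, hdx, hdy⟩ :
        ∃ x ∈ S, ∃ y ∈ S, x ≠ y ∧ 2 * a - 2 ≤ deg A x ∧ a + 1 ≤ deg A y := by
      have hmap : ∀ s ∈ S, (fun s => if h : ∃ w, A s w then h.choose else s) s ∈ T := by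
        intro s hs
        have h := hout s
        simp only [dif_pos h]
        exact houtT s hs _ h.choose_spec
      obtain ⟨x, hx, y, hy, hne, heq⟩ :=
        Finset.exists_ne_map_eq_of_card_lt_of_maps_to hlt hmap
      have hx' := (hout x).choose_spec
      have hy' := (hout y).choose_spec
      have hdom : DominatingPair A x y := by
        refine ⟨hne, (hout x).choose, hx', ?_⟩
        have : (hout y).choose = (hout x).choose := by
          simpa only [dif_pos (hout x), dif_pos (hout y)] using heq.symm
        exact this ▸ hy'
      rcases hdeg x y hdom with ⟨h1, h2⟩ | ⟨h1, h2⟩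
      · exact ⟨x, hx, y, hy, hne, h1, h2⟩
      · exact ⟨y, hy, x, hx, hne.symm, h1, h2⟩
    have hS2 : 2 ≤ S.card := Finset.one_lt_card.mpr ⟨x, hxS, y, hyS, hxy⟩
    have houtx : (univ.filter (fun w => A x w)).card ≤ T.card :=
      Finset.card_le_card (houtTsub x hxS)
    have hinx : univ.filter (fun w => A w x) ⊆ V2 := by
      intro w hw
      rcases harc w x (mem_filter.mp hw).2 with ⟨hw1, hx2⟩ | ⟨hw2, -⟩
      · exact absurd (hS hxS) (Finset.disjoint_right.mp hdisj hx2)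
      · exact hw2
    have hinxa : (univ.filter (fun w => A w x)).card ≤ a :=
      hV2 ▸ Finset.card_le_card hinx
    have hdegx := hdeg_eq x
    -- S.card = a is impossible
    have hka : S.card ≠ a := by
      intro hka
      have hSV1 : S = V1 := Finset.eq_of_subset_of_card_le hS (by omega)
      obtain ⟨w, hwV2, hwT⟩ : ∃ w ∈ V2, w ∉ T := by
        by_contra hc
        push_neg at hc
        have : V2 ⊆ T := hc
        have := Finset.card_le_card this
        omega
      obtain ⟨z, hz⟩ := hin w
      rcases harc z w hz with ⟨hz1, -⟩ | ⟨-, hw1⟩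
      · exact hwT (houtT z (hSV1 ▸ hz1) w hz)
      · exact absurd hwV2 (Finset.disjoint_left.mp hdisj hw1)
    have hk : S.card = a - 1 := by omega
    have hm : T.card = a - 2 := by omega
    -- the vertex u
    have hcardV1S : (V1 \ S).card = 1 := by
      rw [Finset.card_sdiff_of_subset hS]; omega
    obtain ⟨u, hu⟩ := Finset.card_eq_one.mp hcardV1S
    have huV1 : u ∈ V1 := (Finset.mem_sdiff.mp (hu ▸ Finset.mem_singleton_self u)).1
    have huS : u ∉ S := (Finset.mem_sdiff.mp (hu ▸ Finset.mem_singleton_self u)).2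
    have huniq : ∀ z ∈ V1, z ∉ S → z = u := by
      intro z hz1 hz2
      have : z ∈ V1 \ S := Finset.mem_sdiff.mpr ⟨hz1, hz2⟩
      rw [hu, Finset.mem_singleton] at this; exact this
    -- the two vertices w1 w2 outside T
    have hcardV2T : (V2 \ T).card = 2 := by
      rw [Finset.card_sdiff_of_subset hTV2]; omega
    obtain ⟨w1, w2, hw12, hw12eq⟩ := Finset.card_eq_two.mp hcardV2T
    have hw1' : w1 ∈ V2 \ T := hw12eq ▸ Finset.mem_insert_self _ _
    have hw2' : w2 ∈ V2 \ T := hw12eq ▸ Finset.mem_insert_of_mem (Finset.mem_singleton_self _)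
    have hw1V2 : w1 ∈ V2 := (Finset.mem_sdiff.mp hw1').1
    have hw2V2 : w2 ∈ V2 := (Finset.mem_sdiff.mp hw2').1
    have hw1T : w1 ∉ T := (Finset.mem_sdiff.mp hw1').2
    have hw2T : w2 ∉ T := (Finset.mem_sdiff.mp hw2').2
    -- in-neighbours of vertices outside T are exactly u
    have hinw : ∀ w, w ∈ V2 → w ∉ T → ∀ z, A z w → z = u := by
      intro w hwv2 hwT z hz
      rcases harc z w hz with ⟨hz1, -⟩ | ⟨-, hwv1⟩
      · refine huniq z hz1 (fun hzS => hwT (houtT z hzS w hz))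
      · exact absurd hwv2 (Finset.disjoint_left.mp hdisj hwv1)
    have hAuw1 : A u w1 := by
      obtain ⟨z, hz⟩ := hin w1
      have := hinw w1 hw1V2 hw1T z hz
      exact this ▸ hz
    have hAuw2 : A u w2 := by
      obtain ⟨z, hz⟩ := hin w2
      have := hinw w2 hw2V2 hw2T z hz
      exact this ▸ hz
    -- all of V2 dominates x
    have hinxV2 : univ.filter (fun w => A w x) = V2 := by
      apply Finset.eq_of_subset_of_card_le hinx
      omega
    have hVx : ∀ w ∈ V2, A w x := by
      intro w hw
      have : w ∈ univ.filter (fun w => A w x) := hinxV2 ▸ hw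
      exact (mem_filter.mp this).2
    -- degree bounds for w1 and w2
    have hinw1sub : univ.filter (fun z => A z w1) ⊆ {u} := by
      intro z hz
      exact Finset.mem_singleton.mpr (hinw w1 hw1V2 hw1T z (mem_filter.mp hz).2)
    have hinw2sub : univ.filter (fun z => A z w2) ⊆ {u} := by
      intro z hz
      exact Finset.mem_singleton.mpr (hinw w2 hw2V2 hw2T z (mem_filter.mp hz).2)
    have hinw1c : (univ.filter (fun z => A z w1)).card ≤ 1 := by
      simpa using Finset.card_le_card hinw1sub
    have hinw2c : (univ.filter (fun z => A z w2)).card ≤ 1 := by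
      simpa using Finset.card_le_card hinw2sub
    have houtw1sub : univ.filter (fun z => A w1 z) ⊆ V1 := by
      intro z hz
      rcases harc w1 z (mem_filter.mp hz).2 with ⟨hw1'', -⟩ | ⟨-, hz1⟩
      · exact absurd hw1V2 (Finset.disjoint_left.mp hdisj hw1'')
      · exact hz1
    have houtw2sub : univ.filter (fun z => A w2 z) ⊆ V1 := by
      intro z hz
      rcases harc w2 z (mem_filter.mp hz).2 with ⟨hw2'', -⟩ | ⟨-, hz1⟩
      · exact absurd hw2V2 (Finset.disjoint_left.mp hdisj hw2'')
      · exact hz1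
    have houtw1c : (univ.filter (fun z => A w1 z)).card ≤ a :=
      hV1 ▸ Finset.card_le_card houtw1sub
    have houtw2c : (univ.filter (fun z => A w2 z)).card ≤ a :=
      hV1 ▸ Finset.card_le_card houtw2sub
    have hdomw : DominatingPair A w1 w2 := ⟨hw12, x, hVx w1 hw1V2, hVx w2 hw2V2⟩
    have hdegw1 := hdeg_eq w1
    have hdegw2 := hdeg_eq w2
    have ha3 : a = 3 := by
      rcases hdeg w1 w2 hdomw with ⟨h1, h2⟩ | ⟨h1, h2⟩ <;> omega
    subst ha3
    have hdw1 : 4 ≤ deg A w1 := by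
      rcases hdeg w1 w2 hdomw with ⟨h1, h2⟩ | ⟨h1, h2⟩ <;> omega
    have hdw2 : 4 ≤ deg A w2 := by
      rcases hdeg w1 w2 hdomw with ⟨h1, h2⟩ | ⟨h1, h2⟩ <;> omega
    -- out-neighbourhood of w1, w2 is all of V1
    have houtw1 : univ.filter (fun z => A w1 z) = V1 := by
      apply Finset.eq_of_subset_of_card_le houtw1sub; omega
    have houtw2 : univ.filter (fun z => A w2 z) = V1 := by
      apply Finset.eq_of_subset_of_card_le houtw2sub; omega
    have hw1V : ∀ z ∈ V1, A w1 z := by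
      intro z hz
      have h2 : z ∈ univ.filter (fun q => A w1 q) := houtw1 ▸ hz
      exact (mem_filter.mp h2).2
    have hw2V : ∀ z ∈ V1, A w2 z := by
      intro z hz
      have h2 : z ∈ univ.filter (fun q => A w2 q) := houtw2 ▸ hz
      exact (mem_filter.mp h2).2
    -- T is a single vertex t0
    obtain ⟨t0, ht0⟩ := Finset.card_eq_one.mp (by omega : T.card = 1)
    have ht0T : t0 ∈ T := ht0 ▸ Finset.mem_singleton_self t0
    have ht0V2 : t0 ∈ V2 := hTV2 ht0T
    -- out-neighbours of x and y
    have houtxt0 : ∀ w, A x w → w = t0 := by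
      intro w hw
      have := houtT x hxS w hw
      rw [ht0, Finset.mem_singleton] at this; exact this
    have houtyt0 : ∀ w, A y w → w = t0 := by
      intro w hw
      have := houtT y hyS w hw
      rw [ht0, Finset.mem_singleton] at this; exact this
    have hAxt0 : A x t0 := by
      obtain ⟨w, hw⟩ := hout x; exact (houtxt0 w hw) ▸ hw
    have hAyt0 : A y t0 := by
      obtain ⟨w, hw⟩ := hout y; exact (houtyt0 w hw) ▸ hw
    -- in-neighbourhood of y is all of V2
    have hinyV2sub : univ.filter (fun w => A w y) ⊆ V2 := by
      intro w hw
      rcases harc w y (mem_filter.mp hw).2 with ⟨-, hy2⟩ | ⟨hw2, -⟩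
      · exact absurd (hS hyS) (Finset.disjoint_right.mp hdisj hy2)
      · exact hw2
    have houtysub : univ.filter (fun w => A y w) ⊆ T := houtTsub y hyS
    have houtyc : (univ.filter (fun w => A y w)).card ≤ 1 := by
      have := Finset.card_le_card houtysub; omega
    have hinyV2 : univ.filter (fun w => A w y) = V2 := by
      apply Finset.eq_of_subset_of_card_le hinyV2sub
      have := hdeg_eq y; omega
    have hVy : ∀ w ∈ V2, A w y := by
      intro w hw
      have h2 : w ∈ univ.filter (fun q => A q y) := hinyV2 ▸ hw
      exact (mem_filter.mp h2).2
    -- negative facts about x, y out-arcs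
    have hnxw1 : ¬ A x w1 := fun h => hw1T (houtxt0 w1 h ▸ ht0T)
    have hnxw2 : ¬ A x w2 := fun h => hw2T (houtxt0 w2 h ▸ ht0T)
    have hnyw1 : ¬ A y w1 := fun h => hw1T (houtyt0 w1 h ▸ ht0T)
    have hnyw2 : ¬ A y w2 := fun h => hw2T (houtyt0 w2 h ▸ ht0T)
    have hSxy : ({x, y} : Finset V) = S := by
      apply Finset.eq_of_subset_of_card_le
      · intro p hp
        rcases Finset.mem_insert.mp hp with rfl | hp
        · exact hxS
        · exact (Finset.mem_singleton.mp hp) ▸ hyS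
      · rw [Finset.card_insert_of_notMem (by simpa using hxy),
          Finset.card_singleton]; omega
    -- strongness forces t0 → u
    have hAt0u : A t0 u := by
      by_contra hne
      have hclosed : ∀ z, Relation.ReflTransGen A x z → z = x ∨ z = y ∨ z = t0 := by
        intro z hz
        induction hz with
        | refl => exact Or.inl rfl
        | tail hab hbc ih =>
          rename_i zb zc
          rcases ih with rfl | rfl | rfl
          · exact Or.inr (Or.inr (houtxt0 zc hbc))
          · exact Or.inr (Or.inr (houtyt0 zc hbc))
          · rcases harc _ zc hbc with ⟨ht1, -⟩ | ⟨-, hc1⟩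
            · exact absurd ht0V2 (Finset.disjoint_left.mp hdisj ht1)
            · by_cases hcS : zc ∈ S
              · have : zc ∈ ({x, y} : Finset V) := hSxy ▸ hcS
                rcases Finset.mem_insert.mp this with rfl | h
                · exact Or.inl rfl
                · exact Or.inr (Or.inl (Finset.mem_singleton.mp h))
              · exact absurd ((huniq zc hc1 hcS) ▸ hbc) hne
      rcases hclosed u (hstrong x u) with rfl | rfl | rfl
      · exact huS hxS
      · exact huS hyS
      · exact absurd huV1 (Finset.disjoint_right.mp hdisj ht0V2)
    -- classification of vertices
    have hxV1 : x ∈ V1 := hS hxS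
    have hyV1 : y ∈ V1 := hS hyS
    have hV1class : ∀ v ∈ V1, v = x ∨ v = y ∨ v = u := by
      intro v hv
      by_cases hvS : v ∈ S
      · have : v ∈ ({x, y} : Finset V) := hSxy ▸ hvS
        rcases Finset.mem_insert.mp this with rfl | h
        · exact Or.inl rfl
        · exact Or.inr (Or.inl (Finset.mem_singleton.mp h))
      · exact Or.inr (Or.inr (huniq v hv hvS))
    have hV2class : ∀ v ∈ V2, v = t0 ∨ v = w1 ∨ v = w2 := by
      intro v hv
      by_cases hvT : v ∈ T
      · exact Or.inl (Finset.mem_singleton.mp (ht0 ▸ hvT))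
      · have : v ∈ V2 \ T := Finset.mem_sdiff.mpr ⟨hv, hvT⟩
        rw [hw12eq] at this
        rcases Finset.mem_insert.mp this with rfl | h
        · exact Or.inr (Or.inl rfl)
        · exact Or.inr (Or.inr (Finset.mem_singleton.mp h))
    -- more arcs
    have hAt0x : A t0 x := hVx t0 ht0V2
    have hAw1x : A w1 x := hVx w1 hw1V2
    have hAw2x : A w2 x := hVx w2 hw2V2
    have hAt0y : A t0 y := hVy t0 ht0V2
    have hAw1y : A w1 y := hVy w1 hw1V2
    have hAw2y : A w2 y := hVy w2 hw2V2
    have hAw1u : A w1 u := hw1V u huV1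
    have hAw2u : A w2 u := hw2V u huV1
    -- cardinality of V
    have hunivV : (V1 ∪ V2) = (univ : Finset V) :=
      Finset.eq_univ_iff_forall.mpr (fun v => Finset.mem_union.mpr (hcov v))
    have hcardV : Fintype.card V = 6 := by
      rw [← Finset.card_univ, ← hunivV, Finset.card_union_of_disjoint hdisj]
      omega
    -- conclude via the helper lemma
    have hclass : ∀ v : V, v = x ∨ v = y ∨ v = u ∨ v = t0 ∨ v = w1 ∨ v = w2 := by
      intro v
      rcases hcov v with hv | hv
      · rcases hV1class v hv with rfl | rfl | rfl
        · exact Or.inl rfl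
        · exact Or.inr (Or.inl rfl)
        · exact Or.inr (Or.inr (Or.inl rfl))
      · rcases hV2class v hv with rfl | rfl | rfl
        · exact Or.inr (Or.inr (Or.inr (Or.inl rfl)))
        · exact Or.inr (Or.inr (Or.inr (Or.inr (Or.inl rfl))))
        · exact Or.inr (Or.inr (Or.inr (Or.inr (Or.inr rfl))))
    have hnxx : ¬ A x x := h11 _ hxV1 _ hxV1
    have hnxy : ¬ A x y := h11 _ hxV1 _ hyV1
    have hnxu : ¬ A x u := h11 _ hxV1 _ huV1
    have hnyx : ¬ A y x := h11 _ hyV1 _ hxV1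
    have hnyy : ¬ A y y := h11 _ hyV1 _ hyV1
    have hnyu : ¬ A y u := h11 _ hyV1 _ huV1
    have hnux : ¬ A u x := h11 _ huV1 _ hxV1
    have hnuy : ¬ A u y := h11 _ huV1 _ hyV1
    have hnuu : ¬ A u u := h11 _ huV1 _ huV1
    have hnt0t0 : ¬ A t0 t0 := h22 _ ht0V2 _ ht0V2
    have hnt0w1 : ¬ A t0 w1 := h22 _ ht0V2 _ hw1V2
    have hnt0w2 : ¬ A t0 w2 := h22 _ ht0V2 _ hw2V2
    have hnw1t0 : ¬ A w1 t0 := h22 _ hw1V2 _ ht0V2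
    have hnw1w1 : ¬ A w1 w1 := h22 _ hw1V2 _ hw1V2
    have hnw1w2 : ¬ A w1 w2 := h22 _ hw1V2 _ hw2V2
    have hnw2t0 : ¬ A w2 t0 := h22 _ hw2V2 _ ht0V2
    have hnw2w1 : ¬ A w2 w1 := h22 _ hw2V2 _ hw1V2
    have hnw2w2 : ¬ A w2 w2 := h22 _ hw2V2 _ hw2V2
    exact h2iso_contra A x y u t0 w1 w2 hcardV hclass
      hAxt0 hAyt0 hAt0x hAt0y hAt0u hAuw1 hAuw2 hAw1x hAw1y hAw1u hAw2x hAw2y hAw2u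
      hnxx hnxy hnxu hnyx hnyy hnyu hnux hnuy hnuu
      hnt0t0 hnt0w1 hnt0w2 hnw1t0 hnw1w1 hnw1w2 hnw2t0 hnw2w1 hnw2w2
      hnxw1 hnxw2 hnyw1 hnyw2 hnotH2
  -- derive the matching from Hall's theorem
  have hallsub : ∀ s : Finset {v : V // v ∈ V1},
      s.card ≤ (s.biUnion (fun v => V2.filter (fun w => A v.1 w))).card := by
    intro s
    have h1 := hall (s.image Subtype.val) (by
      intro v hv
      obtain ⟨w, -, rfl⟩ := Finset.mem_image.mp hv
      exact w.2)
    rw [Finset.card_image_of_injective s Subtype.val_injective] at h1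
    have heq : V2.filter (fun w => ∃ z ∈ s.image Subtype.val, A z w)
        = s.biUnion (fun v => V2.filter (fun w => A v.1 w)) := by
      ext w
      simp only [Finset.mem_filter, Finset.mem_biUnion, Finset.mem_image]
      constructor
      · rintro ⟨hw, z, ⟨v, hv, rfl⟩, hA⟩
        exact ⟨v, hv, hw, hA⟩
      · rintro ⟨v, hv, hw, hA⟩
        exact ⟨hw, v.1, ⟨v, hv, rfl⟩, hA⟩
    rw [heq] at h1
    exact h1
  obtain ⟨g, hginj, hgmem⟩ :=
    (Finset.all_card_le_biUnion_card_iff_existsInjective'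
      (fun v : {v : V // v ∈ V1} => V2.filter (fun w => A v.1 w))).mp hallsub
  refine ⟨fun v => if h : v ∈ V1 then g ⟨v, h⟩ else v, ?_, ?_⟩
  · intro p hp q hq hpq
    have hp' : p ∈ V1 := Finset.mem_coe.mp hp
    have hq' : q ∈ V1 := Finset.mem_coe.mp hq
    simp only [dif_pos hp', dif_pos hq'] at hpq
    have := hginj hpq
    exact congrArg Subtype.val this
  · intro v hv
    simp only [dif_pos hv]
    have := hgmem ⟨v, hv⟩
    exact ⟨(mem_filter.mp this).1, (mem_filter.mp this).2⟩

/-- A strong balanced bipartite digraph with parts of size `a ≥ 2`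
satisfying the `B`-type degree condition on dominating pairs, and not isomorphic to
either variant of `H2`, has a perfect matching from `V1` to `V2`, a perfect matching
from `V2` to `V1`, and a cycle factor. -/
theorem stmt_3 {V : Type*} (A : V → V → Prop) (V1 V2 : Finset V) (a : ℕ)
    (ha : 2 ≤ a) (hbip : IsBipartition A V1 V2)
    (hV1 : V1.card = a) (hV2 : V2.card = a)
    (hstrong : IsStrong A)
    (hdeg : ∀ x y : V, DominatingPair A x y →
      (2 * a - 2 ≤ deg A x ∧ a + 1 ≤ deg A y) ∨
      (2 * a - 2 ≤ deg A y ∧ a + 1 ≤ deg A x))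
    (hnotH2 : ∀ b : Bool, ¬ DigraphIso A (H2Adj b)) :
    IsPerfectMatchingFromTo A V1 V2 ∧ IsPerfectMatchingFromTo A V2 V1 ∧
      HasCycleFactor A := by
  classical
  obtain ⟨hcov, hdisj, h11, h22⟩ := hbip
  haveI : Fintype V := ⟨V1 ∪ V2, fun v => Finset.mem_union.mpr (hcov v)⟩
  have m1 := pm_aux A V1 V2 a ha hcov hdisj h11 h22 hV1 hV2 hstrong hdeg hnotH2
  have m2 := pm_aux A V2 V1 a ha (fun v => (hcov v).symm) hdisj.symm h22 h11 hV2 hV1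
    hstrong hdeg hnotH2
  refine ⟨m1, m2, ?_⟩
  obtain ⟨f, hfinj, hfmem⟩ := m1
  obtain ⟨g, hginj, hgmem⟩ := m2
  have hfun : Function.Injective (fun v => if v ∈ V1 then f v else g v) := by
    intro p q hpq
    have hpq' : (if p ∈ V1 then f p else g p) = (if q ∈ V1 then f q else g q) := hpq
    by_cases hp : p ∈ V1 <;> by_cases hq : q ∈ V1
    · rw [if_pos hp, if_pos hq] at hpq'
      exact hfinj (Finset.mem_coe.mpr hp) (Finset.mem_coe.mpr hq) hpq'
    · rw [if_pos hp, if_neg hq] at hpq'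
      have h1 : f p ∈ V2 := (hfmem p hp).1
      have h2 : g q ∈ V1 := (hgmem q ((hcov q).resolve_left hq)).1
      exact absurd (hpq' ▸ h1) (Finset.disjoint_left.mp hdisj h2)
    · rw [if_neg hp, if_pos hq] at hpq'
      have h1 : g p ∈ V1 := (hgmem p ((hcov p).resolve_left hp)).1
      have h2 : f q ∈ V2 := (hfmem q hq).1
      exact absurd (hpq' ▸ h2) (Finset.disjoint_left.mp hdisj h1)
    · rw [if_neg hp, if_neg hq] at hpq'
      exact hginj (Finset.mem_coe.mpr ((hcov p).resolve_left hp))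
        (Finset.mem_coe.mpr ((hcov q).resolve_left hq)) hpq'
  refine ⟨Equiv.ofBijective _ (Finite.injective_iff_bijective.mp hfun), fun v => ?_⟩
  show A v (if v ∈ V1 then f v else g v)
  by_cases hv : v ∈ V1
  · rw [if_pos hv]; exact (hfmem v hv).2
  · rw [if_neg hv]; exact (hgmem v ((hcov v).resolve_left hv)).2
end

section
/- Let D be a strong bipartite digraph with partite sets V1 and V2, and let C = x0 y0 x1 y1 … x_{m−1} y_{m−1} x0 be a longest cycle in D, where each x_i ∈ V1 and each y_i ∈ V2. Let uv be an arc of D with both u and v not on C, where u ∈ V1 (the same partite set as the x_i). Then for every i (indices modulo m), at most one of the arcs y_i→u and v→x_{i+1} belongs to D. Furthermore, the number of vertices of C that dominate u plus the number of vertices of C dominated by v is at most m. -/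
/-- Let `C = x₀y₀x₁y₁⋯x_{m−1}y_{m−1}x₀` be a longest cycle in a strong
bipartite digraph `D` (with `xᵢ ∈ V1`, `yᵢ ∈ V2`), and let `u → v` be an arc of `D`
with `u, v ∉ V(C)` and `u ∈ V1`. Then for each `i`, at most one of the arcs `yᵢ → u`
and `v → x_{i+1}` is in `D`; moreover the number of vertices of `C` dominating `u`
plus the number of vertices of `C` dominated by `v` is at most `m`. -/
theorem stmt_4 {V : Type*} (A : V → V → Prop) (V1 V2 : Finset V)
    (hbip : IsBipartition A V1 V2) (hstrong : IsStrong A)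
    (m : ℕ) [NeZero m] (x y : ZMod m → V)
    (hx : ∀ i, x i ∈ V1) (hy : ∀ i, y i ∈ V2)
    (hxinj : Function.Injective x) (hyinj : Function.Injective y)
    (harc1 : ∀ i, A (x i) (y i)) (harc2 : ∀ i, A (y i) (x (i + 1)))
    (hlongest : ∀ (n : ℕ) (g : ZMod n → V), 2 ≤ n → Function.Injective g →
      (∀ i, A (g i) (g (i + 1))) → n ≤ 2 * m)
    (u v : V) (huv : A u v) (hu1 : u ∈ V1)
    (hu : ∀ i, u ≠ x i ∧ u ≠ y i) (hv : ∀ i, v ≠ x i ∧ v ≠ y i) :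
    (∀ i : ZMod m, ¬ (A (y i) u ∧ A v (x (i + 1)))) ∧
    {z : V | (∃ i, z = x i ∨ z = y i) ∧ A z u}.ncard +
      {z : V | (∃ i, z = x i ∨ z = y i) ∧ A v z}.ncard ≤ m := by
  classical
  obtain ⟨hcov, hdisj, hind1, hind2⟩ := hbip
  have hm : 0 < m := Nat.pos_of_ne_zero (NeZero.ne m)
  have hv2 : v ∈ V2 := by
    rcases hcov v with h | h
    · exact absurd huv (hind1 u hu1 v h)
    · exact h
  have huvne : u ≠ v := fun h => (Finset.disjoint_left.mp hdisj hu1) (h ▸ hv2)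
  have hxyne : ∀ i j, x i ≠ y j := fun i j h =>
    (Finset.disjoint_left.mp hdisj (hx i)) (h ▸ hy j)
  have key : ∀ i : ZMod m, ¬ (A (y i) u ∧ A v (x (i + 1))) := by
    rintro i ⟨h1, h2⟩
    set n := 2 * m + 2 with hn
    have hn0 : NeZero n := ⟨by omega⟩
    have hn1 : Fact (1 < n) := ⟨by omega⟩
    set h : ℕ → V := fun a =>
      if a = 2*m then u else if a = 2*m+1 then v
      else if a % 2 = 0 then x (i + 1 + (a/2 : ℕ)) else y (i + 1 + (a/2 : ℕ)) with hh
    have heval : ∀ a, a < 2*m →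
        h a = if a % 2 = 0 then x (i + 1 + (a/2 : ℕ)) else y (i + 1 + (a/2 : ℕ)) := by
      intro a ha
      simp only [hh]
      rw [if_neg (by omega), if_neg (by omega)]
    have hcast : ∀ a b : ℕ, a < m → b < m → ((a : ZMod m) = (b : ZMod m)) → a = b := by
      intro a b ha hb hab
      have := congrArg ZMod.val hab
      rwa [ZMod.val_cast_of_lt ha, ZMod.val_cast_of_lt hb] at this
    have hneu : ∀ a, a < 2*m → h a ≠ u ∧ h a ≠ v := by
      intro a ha
      rw [heval a ha]
      constructor
      · split
        · exact fun e => (hu _).1 e.symm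
        · exact fun e => (hu _).2 e.symm
      · split
        · exact fun e => (hv _).1 e.symm
        · exact fun e => (hv _).2 e.symm
    have hu2m : h (2*m) = u := by simp [hh]
    have hv2m : h (2*m+1) = v := by
      simp only [hh]; rw [if_neg (by omega)]; simp
    have hinj : ∀ a b, a < n → b < n → h a = h b → a = b := by
      intro a b ha hb hab
      by_cases ha2 : a = 2*m
      · subst ha2
        by_cases hb3 : b = 2*m+1
        · subst hb3; rw [hu2m, hv2m] at hab; exact absurd hab huvne
        · by_cases hb2 : b = 2*m
          · omega
          · have hb' : b < 2*m := by omega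
            rw [hu2m] at hab
            exact absurd hab.symm (hneu b hb').1
      · by_cases ha3 : a = 2*m+1
        · subst ha3
          by_cases hb2 : b = 2*m
          · subst hb2; rw [hu2m, hv2m] at hab
            exact absurd hab.symm huvne
          · by_cases hb3 : b = 2*m+1
            · omega
            · have hb' : b < 2*m := by omega
              rw [hv2m] at hab
              exact absurd hab.symm (hneu b hb').2
        · have ha' : a < 2*m := by omega
          by_cases hb2 : b = 2*m
          · subst hb2; rw [hu2m] at hab
            exact absurd hab (hneu a ha').1
          · by_cases hb3 : b = 2*m+1
            · subst hb3; rw [hv2m] at hab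
              exact absurd hab (hneu a ha').2
            · have hb' : b < 2*m := by omega
              rw [heval a ha', heval b hb'] at hab
              by_cases pa : a % 2 = 0 <;> by_cases pb : b % 2 = 0 <;>
                simp only [pa, pb, if_pos, if_neg, if_true, if_false] at hab
              · have e1 := add_left_cancel (hxinj hab)
                have := hcast _ _ (by omega) (by omega) e1
                omega
              · exact absurd hab (hxyne _ _)
              · exact absurd hab.symm (hxyne _ _)
              · have e1 := add_left_cancel (hyinj hab)
                have := hcast _ _ (by omega) (by omega) e1
                omega
    set g : ZMod n → V := fun j => h j.val with hg
    have hginj : Function.Injective g := by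
      intro j k hjk
      exact ZMod.val_injective n
        (hinj _ _ (ZMod.val_lt j) (ZMod.val_lt k) hjk)
    have hgarc : ∀ j : ZMod n, A (g j) (g (j + 1)) := by
      intro j
      have hjv : j.val < n := ZMod.val_lt j
      have hsucc : (j + 1).val = (j.val + 1) % n := by
        rw [ZMod.val_add, ZMod.val_one]
      by_cases ha3 : j.val = 2*m+1
      · have h0 : (j + 1).val = 0 := by rw [hsucc, ha3]; simp [hn]
        have hg0 : g (j+1) = x (i + 1) := by
          rw [hg]; simp only [h0]
          rw [heval 0 (by omega)]
          norm_num
        rw [hg0]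
        show A (h j.val) _
        rw [ha3, hv2m]
        exact h2
      · have hs : (j + 1).val = j.val + 1 := by
          rw [hsucc, Nat.mod_eq_of_lt (by omega)]
        by_cases ha2 : j.val = 2*m
        · show A (h j.val) (h (j+1).val)
          rw [hs, ha2, hu2m, hv2m]
          exact huv
        · have ha' : j.val < 2*m := by omega
          show A (h j.val) (h (j+1).val)
          rw [hs]
          by_cases pa : j.val % 2 = 0
          · rw [heval _ ha', heval _ (by omega), if_pos pa, if_neg (by omega)]
            have : (j.val + 1) / 2 = j.val / 2 := by omega
            rw [this]
            exact harc1 _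
          · by_cases haa : j.val = 2*m - 1
            · rw [heval _ ha', if_neg pa, haa, show 2*m-1+1 = 2*m by omega, hu2m]
              have : ((2*m-1)/2 : ℕ) = m - 1 := by omega
              rw [this]
              have hc : ((m - 1 : ℕ) : ZMod m) = -1 := by
                rw [Nat.cast_sub (by omega), ZMod.natCast_self]
                simp
              rw [hc, show i + 1 + (-1) = i by ring]
              exact h1
            · rw [heval _ ha', heval _ (by omega), if_neg pa, if_pos (by omega)]
              have : ((j.val + 1) / 2 : ℕ) = j.val / 2 + 1 := by omega
              rw [this]
              have : ((j.val / 2 + 1 : ℕ) : ZMod m) = (j.val / 2 : ℕ) + 1 := by push_cast; ring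
              rw [this, show i + 1 + ((j.val / 2 : ℕ) + 1) = (i + 1 + (j.val / 2 : ℕ)) + 1 by ring]
              exact harc2 _
    have := hlongest n g (by omega) hginj hgarc
    omega
  refine ⟨key, ?_⟩
  have e1 : {z : V | (∃ i, z = x i ∨ z = y i) ∧ A z u} = y '' {i | A (y i) u} := by
    ext z
    simp only [Set.mem_setOf_eq, Set.mem_image]
    constructor
    · rintro ⟨⟨i, hi | hi⟩, hz⟩
      · exact absurd (hi ▸ hz) (hind1 (x i) (hx i) u hu1)
      · exact ⟨i, hi ▸ hz, hi.symm⟩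
    · rintro ⟨i, hi, rfl⟩
      exact ⟨⟨i, Or.inr rfl⟩, hi⟩
  have e2 : {z : V | (∃ i, z = x i ∨ z = y i) ∧ A v z} = x '' {j | A v (x j)} := by
    ext z
    simp only [Set.mem_setOf_eq, Set.mem_image]
    constructor
    · rintro ⟨⟨i, hi | hi⟩, hz⟩
      · exact ⟨i, hi ▸ hz, hi.symm⟩
      · exact absurd (hi ▸ hz) (hind2 v hv2 (y i) (hy i))
    · rintro ⟨j, hj, rfl⟩
      exact ⟨⟨j, Or.inl rfl⟩, hj⟩
  have e3 : {j : ZMod m | A v (x j)} = (· + 1) '' {i | A v (x (i + 1))} := by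
    ext j
    simp only [Set.mem_setOf_eq, Set.mem_image]
    constructor
    · intro hj
      exact ⟨j - 1, by simpa using hj, by ring⟩
    · rintro ⟨i, hi, rfl⟩
      exact hi
  rw [e1, e2, Set.ncard_image_of_injective _ hyinj, Set.ncard_image_of_injective _ hxinj, e3,
    Set.ncard_image_of_injective _ (add_left_injective 1)]
  have hdisj2 : Disjoint {i : ZMod m | A (y i) u} {i | A v (x (i + 1))} := by
    rw [Set.disjoint_left]
    intro i hi1 hi2
    exact key i ⟨hi1, hi2⟩
  calc {i : ZMod m | A (y i) u}.ncard + {i : ZMod m | A v (x (i + 1))}.ncard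
      = ({i : ZMod m | A (y i) u} ∪ {i | A v (x (i + 1))}).ncard :=
        (Set.ncard_union_eq hdisj2 (Set.toFinite _) (Set.toFinite _)).symm
    _ ≤ (Set.univ : Set (ZMod m)).ncard :=
        Set.ncard_le_ncard (Set.subset_univ _) (Set.toFinite _)
    _ = m := by rw [Set.ncard_univ, Nat.card_eq_fintype_card, ZMod.card]
end

section
/- Let D be a strong balanced bipartite digraph with partite sets V1 and V2, each of cardinality a, where a ≥ 3. Suppose that for every dominating pair of vertices {x, y} of D, either d(x) ≥ 2a−2 and d(y) ≥ a+1, or d(y) ≥ 2a−2 and d(x) ≥ a+1. Then D contains a directed cycle of length at least 4. -/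
lemma cycle_of_chain {V : Type*} (A : V → V → Prop) (m : ℕ) (hm : 3 ≤ m) (g : ℕ → V)
    (hinj : ∀ i j, i ≤ m → j ≤ m → g i = g j → i = j)
    (harc : ∀ i < m, A (g i) (g (i+1)))
    (hlast : A (g m) (g 0)) :
    ∃ (n : ℕ) (gc : ZMod n → V), 4 ≤ n ∧ Function.Injective gc ∧ ∀ i, A (gc i) (gc (i+1)) := by
  have hn4 : 4 ≤ m + 1 := by omega
  haveI : NeZero (m + 1) := ⟨by omega⟩
  refine ⟨m + 1, fun i => g i.val, hn4, ?_, ?_⟩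
  · intro i j h
    have hi : i.val ≤ m := by have := ZMod.val_lt i; omega
    have hj : j.val ≤ m := by have := ZMod.val_lt j; omega
    exact ZMod.val_injective _ (hinj _ _ hi hj h)
  · intro i
    show A (g i.val) (g (i+1).val)
    have hi : i.val < m + 1 := ZMod.val_lt i
    have hval1 : (1 : ZMod (m+1)).val = 1 := by
      rw [ZMod.val_one_eq_one_mod]; exact Nat.mod_eq_of_lt (by omega)
    have hadd : (i + 1).val = (i.val + 1) % (m + 1) := by rw [ZMod.val_add, hval1]
    rcases eq_or_lt_of_le (Nat.lt_succ_iff.mp hi) with h | h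
    · have h0 : (i + 1).val = 0 := by rw [hadd, h]; simp
      rw [h0, h]
      exact hlast
    · have h1 : (i + 1).val = i.val + 1 := by rw [hadd]; exact Nat.mod_eq_of_lt (by omega)
      rw [h1]
      exact harc _ h

lemma cycle4 {V : Type*} (A : V → V → Prop) (x z1 y z2 : V)
    (h12 : x ≠ z1) (h13 : x ≠ y) (h14 : x ≠ z2) (h23 : z1 ≠ y) (h24 : z1 ≠ z2) (h34 : y ≠ z2)
    (a1 : A x z1) (a2 : A z1 y) (a3 : A y z2) (a4 : A z2 x) :
    ∃ (n : ℕ) (gc : ZMod n → V), 4 ≤ n ∧ Function.Injective gc ∧ ∀ i, A (gc i) (gc (i+1)) := by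
  refine cycle_of_chain A 3 (by norm_num)
    (fun k => if k = 0 then x else if k = 1 then z1 else if k = 2 then y else z2) ?_ ?_ ?_
  · intro i j hi hj hij
    interval_cases i <;> interval_cases j <;> simp_all
  · intro i hi
    interval_cases i <;> simp_all
  · simp_all

lemma cycle6 {V : Type*} (A : V → V → Prop) (v p r t s q : V)
    (hvr : v ≠ r) (hvs : v ≠ s) (hrs : r ≠ s)
    (hpq : p ≠ q) (hpt : p ≠ t) (hqt : q ≠ t)
    (hvp : v ≠ p) (hvq : v ≠ q) (hvt : v ≠ t)
    (hrp : r ≠ p) (hrq : r ≠ q) (hrt : r ≠ t)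
    (hsp : s ≠ p) (hsq : s ≠ q) (hst : s ≠ t)
    (a1 : A v p) (a2 : A p r) (a3 : A r t) (a4 : A t s) (a5 : A s q) (a6 : A q v) :
    ∃ (n : ℕ) (gc : ZMod n → V), 4 ≤ n ∧ Function.Injective gc ∧ ∀ i, A (gc i) (gc (i+1)) := by
  refine cycle_of_chain A 5 (by norm_num)
    (fun k => if k = 0 then v else if k = 1 then p else if k = 2 then r else
      if k = 3 then t else if k = 4 then s else q) ?_ ?_ ?_
  · intro i j hi hj hij
    interval_cases i <;> interval_cases j <;> simp_all
  · intro i hi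
    interval_cases i <;> simp_all
  · simp_all

lemma exists_chain {V : Type*} (A : V → V → Prop) {y x : V}
    (h : Relation.ReflTransGen A y x) :
    ∃ n : ℕ, ∃ g : ℕ → V, g 0 = y ∧ g n = x ∧ ∀ i < n, A (g i) (g (i+1)) := by
  induction h with
  | refl => exact ⟨0, fun _ => y, rfl, rfl, fun i hi => absurd hi (by omega)⟩
  | @tail b c hyb hbc ih =>
    obtain ⟨n, g, h0, hn, hc⟩ := ih
    refine ⟨n+1, fun k => if k ≤ n then g k else c, by simp [h0], by simp, ?_⟩
    intro i hi
    rcases Nat.lt_succ_iff_lt_or_eq.mp hi with hi' | hi'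
    · have h1 : i ≤ n := by omega
      have h2 : i + 1 ≤ n := by omega
      show A (if i ≤ n then g i else c) (if i + 1 ≤ n then g (i+1) else c)
      rw [if_pos h1, if_pos h2]
      exact hc i hi'
    · subst hi'
      show A (if i ≤ i then g i else c) (if i + 1 ≤ i then g (i+1) else c)
      rw [if_pos (le_refl i), if_neg (by omega : ¬ i + 1 ≤ i), hn]
      exact hbc

/-- A strong balanced bipartite digraph with parts of size `a ≥ 3`
satisfying the `B`-type degree condition (`2a−2`, `a+1`) on dominating pairs contains
a directed cycle of length at least `4`. -/
theorem stmt_5 {V : Type*} (A : V → V → Prop) (V1 V2 : Finset V) (a : ℕ)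
    (ha : 3 ≤ a) (hbip : IsBipartition A V1 V2)
    (hV1 : V1.card = a) (hV2 : V2.card = a)
    (hstrong : IsStrong A)
    (hdeg : ∀ x y : V, DominatingPair A x y →
      (2 * a - 2 ≤ deg A x ∧ a + 1 ≤ deg A y) ∨
      (2 * a - 2 ≤ deg A y ∧ a + 1 ≤ deg A x)) :
    ∃ (n : ℕ) (g : ZMod n → V), 4 ≤ n ∧ Function.Injective g ∧
      ∀ i, A (g i) (g (i + 1)) := by
  classical
  obtain ⟨hcover, hdisj, hind1, hind2⟩ := hbip
  haveI : Finite V := by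
    have hs : (Set.univ : Set V) ⊆ ↑(V1 ∪ V2) := fun v _ => by simpa using hcover v
    have := Set.Finite.subset (V1 ∪ V2).finite_toSet hs
    rwa [Set.finite_univ_iff] at this
  haveI : Fintype V := Fintype.ofFinite V
  have huniv : (Finset.univ : Finset V) = V1 ∪ V2 := by
    ext v; simpa using hcover v
  have hcard : Fintype.card V = 2 * a := by
    rw [← Finset.card_univ, huniv, Finset.card_union_of_disjoint hdisj, hV1, hV2]; ring
  have hA2 : ∀ {u v : V}, A u v → u ∈ V1 → v ∈ V2 := by
    intro u v h hu
    rcases hcover v with hv | hv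
    · exact absurd h (hind1 u hu v hv)
    · exact hv
  have hA2' : ∀ {u v : V}, A u v → u ∈ V2 → v ∈ V1 := by
    intro u v h hu
    rcases hcover v with hv | hv
    · exact hv
    · exact absurd h (hind2 u hu v hv)
  have hneq : ∀ {u v : V}, A u v → u ≠ v := by
    intro u v h heq
    subst heq
    rcases hcover u with hu | hu
    · exact hind1 u hu u hu h
    · exact hind2 u hu u hu h
  by_cases hsym : ∀ u v : V, A u v → A v u
  · -- symmetric case
    by_cases h4 : ∃ x y z1 z2 : V, x ≠ y ∧ z1 ≠ z2 ∧ A x z1 ∧ A y z1 ∧ A x z2 ∧ A y z2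
    · obtain ⟨x, y, z1, z2, hxy, hz, a1, b1, a2, b2⟩ := h4
      exact cycle4 A x z1 y z2 (hneq a1) hxy (hneq a2) (hneq b1).symm hz (hneq b2)
        a1 (hsym _ _ b1) b2 (hsym _ _ a2)
    · have hD : ∀ x y z1 z2 : V, x ≠ y → A x z1 → A y z1 → A x z2 → A y z2 → z1 = z2 := by
        intro x y z1 z2 hxy a1 b1 a2 b2
        by_contra hz
        exact h4 ⟨x, y, z1, z2, hxy, hz, a1, b1, a2, b2⟩
      set N : V → Finset V := fun x => Finset.univ.filter (fun y => A x y) with hN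
      have hmemN : ∀ {x y : V}, y ∈ N x ↔ A x y := by intro x y; simp [hN]
      have hdegN : ∀ x : V, deg A x = 2 * (N x).card := by
        intro x
        have e : Nat.card {y // A y x} = Nat.card {y // A x y} :=
          Nat.card_congr (Equiv.subtypeEquivRight (fun y => ⟨hsym _ _, hsym _ _⟩))
        have e2 : Nat.card {y // A x y} = (N x).card := by
          simp [hN, Nat.card_eq_fintype_card, Fintype.card_subtype]
        rw [deg, e, e2]; ring
      have hpair : ∀ x y z : V, x ≠ y → A x z → A y z →
          2 ≤ (N x).card ∧ 2 ≤ (N y).card ∧ (a - 1 ≤ (N x).card ∨ a - 1 ≤ (N y).card) := by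
        intro x y z hxy ax ay
        have h := hdeg x y ⟨hxy, z, ax, ay⟩
        rw [hdegN x, hdegN y] at h
        rcases h with ⟨hx, hy⟩ | ⟨hy, hx⟩
        · exact ⟨by omega, by omega, Or.inl (by omega)⟩
        · exact ⟨by omega, by omega, Or.inr (by omega)⟩
      have hout : ∀ v : V, ∃ w, A v w := by
        intro v
        have h1 : 1 < Fintype.card V := by omega
        obtain ⟨u, hu⟩ := Fintype.exists_ne_of_one_lt_card h1 v
        rcases (hstrong v u).cases_head with h | ⟨w, hw, _⟩
        · exact absurd h.symm hu
        · exact ⟨w, hw⟩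
      have hmin2 : ∀ v : V, 2 ≤ (N v).card := by
        intro v
        obtain ⟨w, hvw⟩ := hout v
        by_cases hz : ∃ z, A v z ∧ z ≠ w
        · obtain ⟨z, hvz, hzw⟩ := hz
          exact Finset.one_lt_card.mpr ⟨w, hmemN.mpr hvw, z, hmemN.mpr hvz, hzw.symm⟩
        · push_neg at hz
          by_cases hz2 : ∃ z, A w z ∧ z ≠ v
          · obtain ⟨z, hwz, hzv⟩ := hz2
            exact (hpair v z w hzv.symm hvw (hsym _ _ hwz)).1
          · push_neg at hz2
            exfalso
            have hex : ∃ u : V, u ≠ v ∧ u ≠ w := by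
              by_contra hcon
              push_neg at hcon
              have hsub : (Finset.univ : Finset V) ⊆ {v, w} := by
                intro u _
                rcases eq_or_ne u v with h | h
                · simp [h]
                · simp [hcon u h]
              have h1 := Finset.card_le_card hsub
              have h2 : ({v, w} : Finset V).card ≤ 2 :=
                le_trans (Finset.card_insert_le _ _) (by simp)
              rw [Finset.card_univ] at h1
              omega
            obtain ⟨u, huv, huw⟩ := hex
            have hclosed : ∀ p, Relation.ReflTransGen A v p → p = v ∨ p = w := by
              intro p h
              induction h with
              | refl => exact Or.inl rfl
              | tail hb harc ih =>
                rcases ih with e | e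
                · subst e; exact Or.inr (hz _ harc)
                · subst e; exact Or.inl (hz2 _ harc)
            rcases hclosed u (hstrong v u) with e | e
            · exact huv e
            · exact huw e
      have hNsub1 : ∀ v ∈ V1, N v ⊆ V2 := fun v hv y hy => hA2 (hmemN.mp hy) hv
      have hNsub2 : ∀ v ∈ V2, N v ⊆ V1 := fun v hv y hy => hA2' (hmemN.mp hy) hv
      by_cases ha4 : 4 ≤ a
      · exfalso
        -- find a big-degree vertex in V2
        obtain ⟨v1, hv1⟩ := Finset.card_pos.mp (show 0 < V1.card by omega)
        obtain ⟨w1, hw1, w2, hw2, hww⟩ := Finset.one_lt_card.mp (hmin2 v1)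
        have haw1 : A v1 w1 := hmemN.mp hw1
        have haw2 : A v1 w2 := hmemN.mp hw2
        obtain ⟨x0, hx0V2, hx0big⟩ : ∃ x ∈ V2, a - 1 ≤ (N x).card := by
          rcases (hpair w1 w2 v1 hww (hsym _ _ haw1) (hsym _ _ haw2)).2.2 with h | h
          · exact ⟨w1, hA2 haw1 hv1, h⟩
          · exact ⟨w2, hA2 haw2 hv1, h⟩
        set F := (N x0).filter (fun w => (N w).card < a - 1) with hF
        have hFle : F.card ≤ 1 := by
          refine Finset.card_le_one.mpr ?_
          intro u hu v hv
          by_contra huv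
          rcases Finset.mem_filter.mp hu with ⟨huN, hus⟩
          rcases Finset.mem_filter.mp hv with ⟨hvN, hvs⟩
          rcases (hpair u v x0 huv (hsym _ _ (hmemN.mp huN))
            (hsym _ _ (hmemN.mp hvN))).2.2 with h | h <;> omega
        have hFsub : F ⊆ N x0 := by rw [hF]; exact Finset.filter_subset _ _
        have hgood : 1 < ((N x0) \ F).card := by
          rw [Finset.card_sdiff_of_subset hFsub]
          omega
        obtain ⟨u, hu, v, hv, huv⟩ := Finset.one_lt_card.mp hgood
        have huN : u ∈ N x0 := (Finset.mem_sdiff.mp hu).1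
        have hvN : v ∈ N x0 := (Finset.mem_sdiff.mp hv).1
        have hub : a - 1 ≤ (N u).card := by
          have h := (Finset.mem_sdiff.mp hu).2
          simp only [hF, Finset.mem_filter, huN, true_and, not_lt] at h
          exact h
        have hvb : a - 1 ≤ (N v).card := by
          have h := (Finset.mem_sdiff.mp hv).2
          simp only [hF, Finset.mem_filter, hvN, true_and, not_lt] at h
          exact h
        have huV1 : u ∈ V1 := hA2' (hmemN.mp huN) hx0V2
        have hvV1 : v ∈ V1 := hA2' (hmemN.mp hvN) hx0V2
        have hint : (N u ∩ N v).card ≤ 1 := by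
          refine Finset.card_le_one.mpr ?_
          intro z1 hz1 z2 hz2
          rcases Finset.mem_inter.mp hz1 with ⟨h1u, h1v⟩
          rcases Finset.mem_inter.mp hz2 with ⟨h2u, h2v⟩
          exact hD u v z1 z2 huv (hmemN.mp h1u) (hmemN.mp h1v) (hmemN.mp h2u) (hmemN.mp h2v)
        have hun : (N u ∪ N v).card ≤ a := by
          have hs : N u ∪ N v ⊆ V2 := Finset.union_subset (hNsub1 u huV1) (hNsub1 v hvV1)
          have := Finset.card_le_card hs
          omega
        have hsum := Finset.card_union_add_card_inter (N u) (N v)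
        omega
      · -- a = 3
        have ha3 : a = 3 := by omega
        have hle2 : ∀ q ∈ V1, (N q).card ≤ 2 := by
          intro q hq
          by_contra hc
          push_neg at hc
          obtain ⟨w1, hw1'⟩ := Finset.card_pos.mp (show 0 < (N q).card by omega)
          have herase : 1 < ((N q).erase w1).card := by
            rw [Finset.card_erase_of_mem hw1']; omega
          obtain ⟨w2, hw2', w3, hw3', h23⟩ := Finset.one_lt_card.mp herase
          have hw2N := Finset.mem_of_mem_erase hw2'
          have hw3N := Finset.mem_of_mem_erase hw3'
          have h12 : w2 ≠ w1 := Finset.ne_of_mem_erase hw2'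
          have h13 : w3 ≠ w1 := Finset.ne_of_mem_erase hw3'
          have hsec : ∀ w ∈ N q, ∃ u, A w u ∧ u ≠ q ∧ u ∈ V1 := by
            intro w hw
            have hwq : q ∈ N w := hmemN.mpr (hsym _ _ (hmemN.mp hw))
            have hne : ((N w).erase q).Nonempty := by
              rw [← Finset.card_pos, Finset.card_erase_of_mem hwq]
              have := hmin2 w; omega
            obtain ⟨u, hu⟩ := hne
            have huw : u ∈ N w := Finset.mem_of_mem_erase hu
            exact ⟨u, hmemN.mp huw, Finset.ne_of_mem_erase hu,
              hA2' (hmemN.mp huw) (hA2 (hmemN.mp hw) hq)⟩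
          obtain ⟨u1, hu1a, hu1q, hu1V⟩ := hsec w1 hw1'
          obtain ⟨u2, hu2a, hu2q, hu2V⟩ := hsec w2 hw2N
          obtain ⟨u3, hu3a, hu3q, hu3V⟩ := hsec w3 hw3N
          have hdist : ∀ {wa wb ua : V}, wa ≠ wb → A q wa → A q wb →
              A wa ua → A wb ua → ua ≠ q → False := by
            intro wa wb ua hab aqa aqb hh1 hh2 hne'
            exact hne' (hD wa wb q ua hab (hsym _ _ aqa) (hsym _ _ aqb) hh1 hh2).symm
          have h12u : u1 ≠ u2 := fun e =>
            hdist h12.symm (hmemN.mp hw1') (hmemN.mp hw2N) hu1a (by rw [e]; exact hu2a) hu1q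
          have h13u : u1 ≠ u3 := fun e =>
            hdist h13.symm (hmemN.mp hw1') (hmemN.mp hw3N) hu1a (by rw [e]; exact hu3a) hu1q
          have h23u : u2 ≠ u3 := fun e =>
            hdist h23 (hmemN.mp hw2N) (hmemN.mp hw3N) hu2a (by rw [e]; exact hu3a) hu2q
          have n1 : q ≠ u1 := hu1q.symm
          have n2 : q ≠ u2 := hu2q.symm
          have n3 : q ≠ u3 := hu3q.symm
          have hsub4 : ({q, u1, u2, u3} : Finset V) ⊆ V1 := by
            intro z hz
            simp only [Finset.mem_insert, Finset.mem_singleton] at hz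
            rcases hz with e | e | e | e <;> subst e <;> assumption
          have hc4 : ({q, u1, u2, u3} : Finset V).card = 4 := by
            rw [Finset.card_insert_of_notMem (by simp [n1, n2, n3]),
                Finset.card_insert_of_notMem (by simp [h12u, h13u]),
                Finset.card_insert_of_notMem (by simp [h23u]),
                Finset.card_singleton]
          have := Finset.card_le_card hsub4
          rw [hc4, hV1] at this
          omega
        obtain ⟨v, hvV2⟩ := Finset.card_pos.mp (show 0 < V2.card by omega)
        obtain ⟨p, hp, q, hq, hpq⟩ := Finset.one_lt_card.mp (hmin2 v)
        have hap : A v p := hmemN.mp hp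
        have haq : A v q := hmemN.mp hq
        have hpV1 : p ∈ V1 := hA2' hap hvV2
        have hqV1 : q ∈ V1 := hA2' haq hvV2
        have hsecond : ∀ (w z : V), z ∈ N w → ∃ r, r ∈ N w ∧ r ≠ z := by
          intro w z hz
          have hne : ((N w).erase z).Nonempty := by
            rw [← Finset.card_pos, Finset.card_erase_of_mem hz]
            have := hmin2 w; omega
          obtain ⟨r, hr⟩ := hne
          exact ⟨r, Finset.mem_of_mem_erase hr, Finset.ne_of_mem_erase hr⟩
        have hvp : v ∈ N p := hmemN.mpr (hsym _ _ hap)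
        have hvq : v ∈ N q := hmemN.mpr (hsym _ _ haq)
        obtain ⟨r, hrNp, hrv⟩ := hsecond p v hvp
        have hapr : A p r := hmemN.mp hrNp
        have hrV2 : r ∈ V2 := hA2 hapr hpV1
        obtain ⟨s, hsNq, hsv⟩ := hsecond q v hvq
        have haqs : A q s := hmemN.mp hsNq
        have hsV2 : s ∈ V2 := hA2 haqs hqV1
        have hrs : r ≠ s := by
          intro e; subst e
          exact hrv (hD p q v r hpq (hsym _ _ hap) (hsym _ _ haq) hapr haqs).symm
        have hpNr : p ∈ N r := hmemN.mpr (hsym _ _ hapr)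
        obtain ⟨t, htNr, htp⟩ := hsecond r p hpNr
        have hart : A r t := hmemN.mp htNr
        have htV1 : t ∈ V1 := hA2' hart hrV2
        have htq : t ≠ q := by
          intro e
          have h3 : r ∈ N q := hmemN.mpr (hsym _ _ (e ▸ hart))
          have hsub : ({v, s, r} : Finset V) ⊆ N q := by
            intro z hz
            simp only [Finset.mem_insert, Finset.mem_singleton] at hz
            rcases hz with e | e | e <;> subst e
            · exact hvq
            · exact hsNq
            · exact h3
          have hc3 : ({v, s, r} : Finset V).card = 3 := by
            rw [Finset.card_insert_of_notMem (by simp [hsv.symm, hrv.symm]),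
                Finset.card_insert_of_notMem (by simp [hrs.symm]),
                Finset.card_singleton]
          have := Finset.card_le_card hsub
          rw [hc3] at this
          have := hle2 q hqV1
          omega
        have hqNs : q ∈ N s := hmemN.mpr (hsym _ _ haqs)
        obtain ⟨u, huNs, huq⟩ := hsecond s q hqNs
        have hasu : A s u := hmemN.mp huNs
        have huV1 : u ∈ V1 := hA2' hasu hsV2
        have hup : u ≠ p := by
          intro e
          have h3 : s ∈ N p := hmemN.mpr (hsym _ _ (e ▸ hasu))
          have hsub : ({v, r, s} : Finset V) ⊆ N p := by
            intro z hz
            simp only [Finset.mem_insert, Finset.mem_singleton] at hz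
            rcases hz with e | e | e <;> subst e
            · exact hvp
            · exact hrNp
            · exact h3
          have hc3 : ({v, r, s} : Finset V).card = 3 := by
            rw [Finset.card_insert_of_notMem (by simp [hrv.symm, hsv.symm]),
                Finset.card_insert_of_notMem (by simp [hrs]),
                Finset.card_singleton]
          have := Finset.card_le_card hsub
          rw [hc3] at this
          have := hle2 p hpV1
          omega
        have hV1eq : ({p, q, t} : Finset V) = V1 := by
          apply Finset.eq_of_subset_of_card_le
          · intro z hz
            simp only [Finset.mem_insert, Finset.mem_singleton] at hz
            rcases hz with e | e | e <;> subst e <;> assumption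
          · rw [hV1]
            have hc3 : ({p, q, t} : Finset V).card = 3 := by
              rw [Finset.card_insert_of_notMem (by simp [hpq, htp.symm]),
                  Finset.card_insert_of_notMem (by simp [htq.symm]),
                  Finset.card_singleton]
            omega
        have hut : u = t := by
          have hm : u ∈ ({p, q, t} : Finset V) := by rw [hV1eq]; exact huV1
          simp only [Finset.mem_insert, Finset.mem_singleton] at hm
          rcases hm with e | e | e
          · exact absurd e hup
          · exact absurd e huq
          · exact e
        have hast : A s t := hut ▸ hasu
        have hcross : ∀ {z w : V}, z ∈ V2 → w ∈ V1 → z ≠ w := by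
          intro z w hz hw e
          exact Finset.disjoint_left.mp hdisj hw (e ▸ hz)
        exact cycle6 A v p r t s q hrv.symm hsv.symm hrs hpq htp.symm htq.symm
          (hcross hvV2 hpV1) (hcross hvV2 hqV1) (hcross hvV2 htV1)
          (hcross hrV2 hpV1) (hcross hrV2 hqV1) (hcross hrV2 htV1)
          (hcross hsV2 hpV1) (hcross hsV2 hqV1) (hcross hsV2 htV1)
          hap hapr hart (hsym _ _ hast) (hsym _ _ haqs) (hsym _ _ haq)
  · -- non-symmetric case
    push_neg at hsym
    obtain ⟨x, y, hxy, hnyx⟩ := hsym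
    have hP : ∃ n : ℕ, ∃ g : ℕ → V, g 0 = y ∧ g n = x ∧ ∀ i < n, A (g i) (g (i+1)) :=
      exists_chain A (hstrong y x)
    obtain ⟨g, hg0, hgn, hgc⟩ := Nat.find_spec hP
    set n0 := Nat.find hP with hn0def
    have hmin : ∀ m, m < n0 →
        ¬ ∃ g : ℕ → V, g 0 = y ∧ g m = x ∧ ∀ i < m, A (g i) (g (i+1)) :=
      fun m hm => Nat.find_min hP hm
    have hyx : y ≠ x := fun h => (hneq hxy) h.symm
    have h0 : n0 ≠ 0 := by
      intro h
      rw [h] at hgn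
      exact hyx (hg0 ▸ hgn)
    have h1 : n0 ≠ 1 := by
      intro h
      apply hnyx
      have h' := hgc 0 (by omega)
      rw [hg0] at h'
      rw [h] at hgn
      rwa [hgn] at h'
    have h2 : n0 ≠ 2 := by
      intro h
      have ha1 : A y (g 1) := by
        have h' := hgc 0 (by omega)
        rwa [hg0] at h'
      have ha2 : A (g 1) x := by
        have h' := hgc 1 (by omega)
        rw [h] at hgn
        rwa [hgn] at h'
      rcases hcover y with hy | hy
      · have hw : g 1 ∈ V2 := hA2 ha1 hy
        have hx' : x ∈ V1 := hA2' ha2 hw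
        have hy2 : y ∈ V2 := hA2 hxy hx'
        exact Finset.disjoint_left.mp hdisj hy hy2
      · have hw : g 1 ∈ V1 := hA2' ha1 hy
        have hx' : x ∈ V2 := hA2 ha2 hw
        have hy1 : y ∈ V1 := hA2' hxy hx'
        exact Finset.disjoint_left.mp hdisj hy1 hy
    have hinj : ∀ i j, i ≤ n0 → j ≤ n0 → g i = g j → i = j := by
      have key : ∀ i j, i < j → j ≤ n0 → g i = g j → False := by
        intro i j hij hj heq
        apply hmin (n0 - (j - i)) (by omega)
        refine ⟨fun k => if k ≤ i then g k else g (k + (j - i)), by simp [hg0], ?_, ?_⟩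
        · dsimp only
          by_cases hk : n0 - (j - i) ≤ i
          · have hii : n0 - (j - i) = i := by omega
            have hjn : j = n0 := by omega
            rw [if_pos hk, hii, heq, hjn]
            exact hgn
          · rw [if_neg hk]
            have : n0 - (j - i) + (j - i) = n0 := by omega
            rw [this]
            exact hgn
        · intro k hk
          dsimp only
          by_cases hki : k + 1 ≤ i
          · rw [if_pos (by omega : k ≤ i), if_pos hki]
            exact hgc k (by omega)
          · by_cases hk2 : k ≤ i
            · have hkeq : k = i := by omega
              rw [if_pos hk2, if_neg hki, hkeq, heq]
              have he2 : i + 1 + (j - i) = j + 1 := by omega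
              rw [he2]
              exact hgc j (by omega)
            · rw [if_neg hk2, if_neg hki]
              have he2 : k + 1 + (j - i) = (k + (j - i)) + 1 := by omega
              rw [he2]
              exact hgc (k + (j - i)) (by omega)
      intro i j hi hj heq
      rcases lt_trichotomy i j with h | h | h
      · exact absurd heq (fun e => key i j h hj e)
      · exact h
      · exact absurd heq.symm (fun e => key j i h hi e)
    exact cycle_of_chain A n0 (by omega) g hinj (fun i hi => hgc i hi)
      (by rw [hgn, hg0]; exact hxy)
end

section
/- Let D be a strong balanced bipartite digraph on 2a vertices. Suppose that d(x) + d(y) ≥ 3a for every dominating pair of vertices {x, y} and for every dominated pair of vertices {x, y} of D. Then D contains a cycle factor. -/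
/-- out/in neighbour count bound -/
lemma card_le_of_mem {V : Type*} (p : V → Prop) (T : Finset V)
    (h : ∀ y, p y → y ∈ T) : Nat.card {y // p y} ≤ T.card := by
  have h1 : Nat.card {y // p y} = Set.ncard {y | p y} :=
    (Nat.card_coe_set_eq {y | p y}).symm
  rw [h1]
  calc Set.ncard {y | p y} ≤ Set.ncard (↑T : Set V) :=
        Set.ncard_le_ncard (fun y hy => h y hy) T.finite_toSet
    _ = T.card := Set.ncard_coe_finset T

open Classical in
lemma hall_side {V : Type*} (A : V → V → Prop) (V1 V2 : Finset V) (a : ℕ)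
    (hcov : ∀ v : V, v ∈ V1 ∨ v ∈ V2) (hdisj : Disjoint V1 V2)
    (h11 : ∀ x ∈ V1, ∀ y ∈ V1, ¬ A x y) (h22 : ∀ x ∈ V2, ∀ y ∈ V2, ¬ A x y)
    (hV1 : V1.card = a) (hV2 : V2.card = a)
    (hstrong : IsStrong A)
    (hdom : ∀ x y : V, DominatingPair A x y → 3 * a ≤ deg A x + deg A y)
    (hdomd : ∀ x y : V, DominatedPair A x y → 3 * a ≤ deg A x + deg A y)
    (S : Finset V) (hS : S ⊆ V1) :
    S.card ≤ (V2.filter (fun y => ∃ x ∈ S, A x y)).card := by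
  classical
  by_contra hcon
  push_neg at hcon
  set T := V2.filter (fun y => ∃ x ∈ S, A x y) with hT
  -- basic facts
  have hSne : S.Nonempty := Finset.card_pos.mp (lt_of_le_of_lt (Nat.zero_le _) hcon)
  have hSa : S.card ≤ a := hV1 ▸ Finset.card_le_card hS
  have hapos : 0 < a := lt_of_lt_of_le (Finset.card_pos.mpr hSne) hSa
  have hV2ne : V2.Nonempty := Finset.card_pos.mp (hV2 ▸ hapos)
  have hV1ne : V1.Nonempty := Finset.card_pos.mp (hV1 ▸ hapos)
  -- every vertex of V1 has an out-neighbour (in V2)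
  have hout : ∀ x ∈ V1, ∃ z ∈ V2, A x z := by
    intro x hx
    obtain ⟨w, hw⟩ := hV2ne
    have hxw : x ≠ w := fun h => Finset.disjoint_left.mp hdisj hx (h ▸ hw)
    rcases (hstrong x w).cases_head with h | ⟨z, hxz, _⟩
    · exact absurd h hxw
    · have hz2 : z ∈ V2 := (hcov z).resolve_left (fun hz1 => h11 x hx z hz1 hxz)
      exact ⟨z, hz2, hxz⟩
  -- every vertex of V2 has an in-neighbour (in V1)
  have hin : ∀ y ∈ V2, ∃ z ∈ V1, A z y := by
    intro y hy
    obtain ⟨w, hw⟩ := hV1ne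
    have hwy : y ≠ w := fun h => Finset.disjoint_left.mp hdisj (h ▸ hw) hy
    rcases (hstrong w y).cases_tail with h | ⟨z, _, hzy⟩
    · exact absurd h hwy
    · have hz1 : z ∈ V1 := (hcov z).resolve_right (fun hz2 => h22 z hz2 y hy hzy)
      exact ⟨z, hz1, hzy⟩
  -- choice of out-neighbour inside T for vertices of S
  have hmapsto : ∀ x ∈ S, ∃ z ∈ T, A x z := by
    intro x hx
    obtain ⟨z, hz2, hxz⟩ := hout x (hS hx)
    exact ⟨z, Finset.mem_filter.mpr ⟨hz2, x, hx, hxz⟩, hxz⟩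
  set f : V → V := fun x => if h : ∃ z ∈ T, A x z then h.choose else x with hf
  have hfT : ∀ x ∈ S, f x ∈ T ∧ A x (f x) := by
    intro x hx
    have h := hmapsto x hx
    simp only [hf, dif_pos h]
    exact ⟨h.choose_spec.1, h.choose_spec.2⟩
  obtain ⟨x, hx, x', hx', hne, heq⟩ :=
    Finset.exists_ne_map_eq_of_card_lt_of_maps_to hcon (fun x hx => (hfT x hx).1)
  -- {x, x'} is a dominating pair
  have hdp : DominatingPair A x x' :=
    ⟨hne, f x, (hfT x hx).2, heq ▸ (hfT x' hx').2⟩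
  have hdx : deg A x ≤ T.card + a := by
    have h1 : Nat.card {y // A x y} ≤ T.card := by
      apply card_le_of_mem
      intro y hxy
      have hy2 : y ∈ V2 := (hcov y).resolve_left (fun hy1 => h11 x (hS hx) y hy1 hxy)
      exact Finset.mem_filter.mpr ⟨hy2, x, hx, hxy⟩
    have h2 : Nat.card {y // A y x} ≤ V2.card := by
      apply card_le_of_mem
      intro y hyx
      exact (hcov y).resolve_left (fun hy1 => h11 y hy1 x (hS hx) hyx)
    simp only [deg]; omega
  have hdx' : deg A x' ≤ T.card + a := by
    have h1 : Nat.card {y // A x' y} ≤ T.card := by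
      apply card_le_of_mem
      intro y hxy
      have hy2 : y ∈ V2 := (hcov y).resolve_left (fun hy1 => h11 x' (hS hx') y hy1 hxy)
      exact Finset.mem_filter.mpr ⟨hy2, x', hx', hxy⟩
    have h2 : Nat.card {y // A y x'} ≤ V2.card := by
      apply card_le_of_mem
      intro y hyx
      exact (hcov y).resolve_left (fun hy1 => h11 y hy1 x' (hS hx') hyx)
    simp only [deg]; omega
  have hineq1 : 3 * a ≤ 2 * T.card + 2 * a := by
    have := hdom x x' hdp
    omega
  -- now the dominated pair inside R = V2 \ T
  set R := V2 \ T with hR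
  set P := V1 \ S with hP
  have hTsub : T ⊆ V2 := Finset.filter_subset _ _
  have hRcard : R.card = a - T.card := by rw [hR, Finset.card_sdiff_of_subset hTsub, hV2]
  have hPcard : P.card = a - S.card := by rw [hP, Finset.card_sdiff_of_subset hS, hV1]
  have hTa : T.card ≤ a := hV2 ▸ Finset.card_le_card hTsub
  have hPR : P.card < R.card := by omega
  have hmaps2 : ∀ y ∈ R, ∃ z ∈ P, A z y := by
    intro y hy
    have hy2 : y ∈ V2 := (Finset.mem_sdiff.mp hy).1
    have hynT : y ∉ T := (Finset.mem_sdiff.mp hy).2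
    obtain ⟨z, hz1, hzy⟩ := hin y hy2
    refine ⟨z, Finset.mem_sdiff.mpr ⟨hz1, fun hzS => ?_⟩, hzy⟩
    exact hynT (Finset.mem_filter.mpr ⟨hy2, z, hzS, hzy⟩)
  set g : V → V := fun y => if h : ∃ z ∈ P, A z y then h.choose else y with hg
  have hgP : ∀ y ∈ R, g y ∈ P ∧ A (g y) y := by
    intro y hy
    have h := hmaps2 y hy
    simp only [hg, dif_pos h]
    exact ⟨h.choose_spec.1, h.choose_spec.2⟩
  obtain ⟨y, hy, y', hy', hne2, heq2⟩ :=
    Finset.exists_ne_map_eq_of_card_lt_of_maps_to hPR (fun y hy => (hgP y hy).1)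
  have hdp2 : DominatedPair A y y' :=
    ⟨hne2, g y, (hgP y hy).2, heq2 ▸ (hgP y' hy').2⟩
  have hy2 : y ∈ V2 := (Finset.mem_sdiff.mp hy).1
  have hy'2 : y' ∈ V2 := (Finset.mem_sdiff.mp hy').1
  have hynT : y ∉ T := (Finset.mem_sdiff.mp hy).2
  have hy'nT : y' ∉ T := (Finset.mem_sdiff.mp hy').2
  have hdy : deg A y ≤ P.card + a := by
    have h1 : Nat.card {w // A y w} ≤ V1.card := by
      apply card_le_of_mem
      intro w hyw
      exact (hcov w).resolve_right (fun hw2 => h22 y hy2 w hw2 hyw)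
    have h2 : Nat.card {w // A w y} ≤ P.card := by
      apply card_le_of_mem
      intro w hwy
      have hw1 : w ∈ V1 := (hcov w).resolve_right (fun hw2 => h22 w hw2 y hy2 hwy)
      refine Finset.mem_sdiff.mpr ⟨hw1, fun hwS => ?_⟩
      exact hynT (Finset.mem_filter.mpr ⟨hy2, w, hwS, hwy⟩)
    simp only [deg]; omega
  have hdy' : deg A y' ≤ P.card + a := by
    have h1 : Nat.card {w // A y' w} ≤ V1.card := by
      apply card_le_of_mem
      intro w hyw
      exact (hcov w).resolve_right (fun hw2 => h22 y' hy'2 w hw2 hyw)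
    have h2 : Nat.card {w // A w y'} ≤ P.card := by
      apply card_le_of_mem
      intro w hwy
      have hw1 : w ∈ V1 := (hcov w).resolve_right (fun hw2 => h22 w hw2 y' hy'2 hwy)
      refine Finset.mem_sdiff.mpr ⟨hw1, fun hwS => ?_⟩
      exact hy'nT (Finset.mem_filter.mpr ⟨hy'2, w, hwS, hwy⟩)
    simp only [deg]; omega
  have hineq2 : 3 * a ≤ 2 * P.card + 2 * a := by
    have := hdomd y y' hdp2
    omega
  omega

/-- A strong balanced bipartite digraph on `2a` vertices in which
`d(x) + d(y) ≥ 3a` for every dominating pair and every dominated pair `{x, y}`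
contains a cycle factor. -/
theorem stmt_6 {V : Type*} (A : V → V → Prop) (V1 V2 : Finset V) (a : ℕ)
    (hbip : IsBipartition A V1 V2)
    (hV1 : V1.card = a) (hV2 : V2.card = a)
    (hstrong : IsStrong A)
    (hdom : ∀ x y : V, DominatingPair A x y → 3 * a ≤ deg A x + deg A y)
    (hdomd : ∀ x y : V, DominatedPair A x y → 3 * a ≤ deg A x + deg A y) :
    HasCycleFactor A := by
  classical
  obtain ⟨hcov, hdisj, h11, h22⟩ := hbip
  have hfin : Finite V := by
    have : (Set.univ : Set V) ⊆ ↑(V1 ∪ V2) := by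
      intro v _
      simpa using hcov v
    exact Set.finite_univ_iff.mp ((V1 ∪ V2).finite_toSet.subset this)
  -- Hall's condition in both directions
  have hall1 : ∀ s : Finset ↥V1,
      s.card ≤ (s.biUnion (fun x => V2.filter (fun y => A ↑x y))).card := by
    intro s
    set S := s.image (Subtype.val) with hSdef
    have hScard : S.card = s.card :=
      Finset.card_image_of_injective _ Subtype.val_injective
    have hSsub : S ⊆ V1 := by
      intro x hx
      obtain ⟨x', _, rfl⟩ := Finset.mem_image.mp hx
      exact x'.2
    have key := hall_side A V1 V2 a hcov hdisj h11 h22 hV1 hV2 hstrong hdom hdomd S hSsub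
    have heq : V2.filter (fun y => ∃ x ∈ S, A x y)
        = s.biUnion (fun x => V2.filter (fun y => A ↑x y)) := by
      ext y
      simp only [Finset.mem_filter, Finset.mem_biUnion, hSdef, Finset.mem_image]
      constructor
      · rintro ⟨hy2, x, ⟨x', hx', rfl⟩, hxy⟩
        exact ⟨x', hx', hy2, hxy⟩
      · rintro ⟨x', hx', hy2, hxy⟩
        exact ⟨hy2, ↑x', ⟨x', hx', rfl⟩, hxy⟩
    rw [← hScard, ← heq]
    convert key using 2
  have hall2 : ∀ s : Finset ↥V2,
      s.card ≤ (s.biUnion (fun x => V1.filter (fun y => A ↑x y))).card := by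
    intro s
    set S := s.image (Subtype.val) with hSdef
    have hScard : S.card = s.card :=
      Finset.card_image_of_injective _ Subtype.val_injective
    have hSsub : S ⊆ V2 := by
      intro x hx
      obtain ⟨x', _, rfl⟩ := Finset.mem_image.mp hx
      exact x'.2
    have key := hall_side A V2 V1 a (fun v => (hcov v).symm) hdisj.symm h22 h11 hV2 hV1
      hstrong hdom hdomd S hSsub
    have heq : V1.filter (fun y => ∃ x ∈ S, A x y)
        = s.biUnion (fun x => V1.filter (fun y => A ↑x y)) := by
      ext y
      simp only [Finset.mem_filter, Finset.mem_biUnion, hSdef, Finset.mem_image]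
      constructor
      · rintro ⟨hy2, x, ⟨x', hx', rfl⟩, hxy⟩
        exact ⟨x', hx', hy2, hxy⟩
      · rintro ⟨x', hx', hy2, hxy⟩
        exact ⟨hy2, ↑x', ⟨x', hx', rfl⟩, hxy⟩
    rw [← hScard, ← heq]
    convert key using 2
  obtain ⟨f1, hf1inj, hf1mem⟩ :=
    (Finset.all_card_le_biUnion_card_iff_exists_injective
      (fun x : ↥V1 => V2.filter (fun y => A ↑x y))).mp hall1
  obtain ⟨f2, hf2inj, hf2mem⟩ :=
    (Finset.all_card_le_biUnion_card_iff_exists_injective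
      (fun x : ↥V2 => V1.filter (fun y => A ↑x y))).mp hall2
  have hf1V2 : ∀ x : ↥V1, f1 x ∈ V2 := fun x => (Finset.mem_filter.mp (hf1mem x)).1
  have hf1A : ∀ x : ↥V1, A ↑x (f1 x) := fun x => (Finset.mem_filter.mp (hf1mem x)).2
  have hf2V1 : ∀ x : ↥V2, f2 x ∈ V1 := fun x => (Finset.mem_filter.mp (hf2mem x)).1
  have hf2A : ∀ x : ↥V2, A ↑x (f2 x) := fun x => (Finset.mem_filter.mp (hf2mem x)).2
  -- build the permutation
  set σ0 : V → V := fun v =>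
    if h : v ∈ V1 then f1 ⟨v, h⟩ else f2 ⟨v, (hcov v).resolve_left h⟩ with hσ0
  have hσ0mem : ∀ v, (∀ h : v ∈ V1, σ0 v = f1 ⟨v, h⟩) ∧
      (∀ h : v ∉ V1, σ0 v = f2 ⟨v, (hcov v).resolve_left h⟩) := by
    intro v
    constructor
    · intro h; simp only [hσ0, dif_pos h]
    · intro h; simp only [hσ0, dif_neg h]
  have hinj : Function.Injective σ0 := by
    intro v w hvw
    by_cases hv : v ∈ V1 <;> by_cases hw : w ∈ V1
    · rw [(hσ0mem v).1 hv, (hσ0mem w).1 hw] at hvw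
      exact congrArg Subtype.val (hf1inj hvw)
    · rw [(hσ0mem v).1 hv, (hσ0mem w).2 hw] at hvw
      exact absurd (hvw ▸ hf1V2 ⟨v, hv⟩)
        (Finset.disjoint_left.mp hdisj (hf2V1 ⟨w, (hcov w).resolve_left hw⟩))
    · rw [(hσ0mem v).2 hv, (hσ0mem w).1 hw] at hvw
      exact absurd (hvw ▸ hf2V1 ⟨v, (hcov v).resolve_left hv⟩)
        (Finset.disjoint_right.mp hdisj (hf1V2 ⟨w, hw⟩))
    · rw [(hσ0mem v).2 hv, (hσ0mem w).2 hw] at hvw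
      exact congrArg Subtype.val (hf2inj hvw)
  have hbij : Function.Bijective σ0 := Finite.injective_iff_bijective.mp hinj
  refine ⟨Equiv.ofBijective σ0 hbij, fun v => ?_⟩
  show A v (σ0 v)
  by_cases hv : v ∈ V1
  · rw [(hσ0mem v).1 hv]; exact hf1A ⟨v, hv⟩
  · rw [(hσ0mem v).2 hv]; exact hf2A ⟨v, (hcov v).resolve_left hv⟩
end

section
/- The digraph H1 is a strong balanced bipartite digraph on 2a = 4 vertices that satisfies the following condition: for every dominating pair of vertices {x, y}, either d(x) ≥ 2a−2 and d(y) ≥ a+1, or d(y) ≥ 2a−2 and d(x) ≥ a+1; nevertheless, H1 contains no hamiltonian cycle. -/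
instance (i j : Fin 4) : Decidable (H1Adj i j) := by unfold H1Adj; infer_instance

lemma H1deg : ∀ x : Fin 4, deg H1Adj x = if x = 1 ∨ x = 2 then 4 else 2 := by
  intro x
  rw [deg, Nat.card_eq_fintype_card, Nat.card_eq_fintype_card]
  fin_cases x <;> simp only [Fin.isValue] <;> rw [Fintype.card_eq_nat_card, Fintype.card_eq_nat_card] <;> rw [Nat.card_eq_fintype_card, Nat.card_eq_fintype_card] <;> decide

lemma H1arc : ∀ {i j : Fin 4}, H1Adj i j → Relation.ReflTransGen H1Adj i j :=
  fun h => Relation.ReflTransGen.single h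

/-- `H1` is a strong balanced bipartite digraph on `2a = 4` vertices
satisfying the degree condition (`d(x) ≥ 2a−2, d(y) ≥ a+1` or symmetrically) for every
dominating pair, yet it has no hamiltonian cycle. -/
theorem stmt_7 :
    IsStrong H1Adj ∧
    IsBipartition H1Adj ({0, 1} : Finset (Fin 4)) ({2, 3} : Finset (Fin 4)) ∧
    ({0, 1} : Finset (Fin 4)).card = 2 ∧ ({2, 3} : Finset (Fin 4)).card = 2 ∧
    (∀ x y : Fin 4, DominatingPair H1Adj x y →
      (2 * 2 - 2 ≤ deg H1Adj x ∧ 2 + 1 ≤ deg H1Adj y) ∨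
      (2 * 2 - 2 ≤ deg H1Adj y ∧ 2 + 1 ≤ deg H1Adj x)) ∧
    ¬ IsHamiltonian H1Adj := by
  have a02 : H1Adj 0 2 := by decide
  have a20 : H1Adj 2 0 := by decide
  have a12 : H1Adj 1 2 := by decide
  have a21 : H1Adj 2 1 := by decide
  have a13 : H1Adj 1 3 := by decide
  have a31 : H1Adj 3 1 := by decide
  refine ⟨?_, ?_, rfl, rfl, ?_, ?_⟩
  · intro x y
    fin_cases x <;> fin_cases y
    · exact .refl
    · exact (H1arc a02).trans (H1arc a21)
    · exact H1arc a02
    · exact ((H1arc a02).trans (H1arc a21)).trans (H1arc a13)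
    · exact Relation.ReflTransGen.trans (H1arc a12) (H1arc a20)
    · exact .refl
    · exact H1arc a12
    · exact H1arc a13
    · exact H1arc a20
    · exact H1arc a21
    · exact .refl
    · exact (H1arc a21).trans (H1arc a13)
    · exact ((H1arc a31).trans (H1arc a12)).trans (H1arc a20)
    · exact H1arc a31
    · exact (H1arc a31).trans (H1arc a12)
    · exact .refl
  · refine ⟨?_, ?_, ?_, ?_⟩ <;> decide
  · intro x y ⟨hne, z, h1, h2⟩
    rw [H1deg x, H1deg y]
    revert hne h1 h2
    fin_cases x <;> fin_cases y <;> fin_cases z <;> decide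
  · rintro ⟨σ, harc, hcyc⟩
    have h0 : σ 0 = 2 := by
      have h := harc 0; simp [H1Adj, Prod.ext_iff] at h; exact h
    have h3 : σ 3 = 1 := by
      have h := harc 3; simp [H1Adj, Prod.ext_iff] at h; exact h
    have h2 : σ 2 = 0 := by
      have h := harc 2; simp [H1Adj, Prod.ext_iff] at h
      rcases h with h | h
      · exact h
      · exact absurd (σ.injective (h.trans h3.symm)) (by decide)
    obtain ⟨n, hn⟩ := (hcyc 0 1).exists_pow_eq'
    have key : ∀ m : ℕ, (σ ^ m) 0 = 0 ∨ (σ ^ m) 0 = 2 := by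
      intro m
      induction m with
      | zero => left; rfl
      | succ k ih =>
        rw [pow_succ']
        rcases ih with h | h <;> simp [Equiv.Perm.mul_apply, h, h0, h2]
    rcases key n with h | h <;> rw [hn.2] at h <;> exact absurd h (by decide)
end
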